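/- arXiv:1310.6482 — 8 statements merged into one kernel-verified Lean document; each statement's English description precedes it below -/
import Mathlib

section
/- Let F be a field, let n ≥ 1 be an integer, and let d ≥ 0. If E ⊆ Fⁿ is a finite set of cardinality strictly less than the binomial coefficient C(d+n, n), then there exists a non-zero polynomial P ∈ F[x₁,…,xₙ] of total degree at most d such that P(x) = 0 for every x ∈ E. -/
open MvPolynomial

noncomputable def sliceEquiv (n d : ℕ) :
    {s : Fin n →₀ ℕ | (s.sum fun _ e => e) ≤ d} ≃
      Σ k : Fin (d + 1), {s : Fin n →₀ ℕ // (s.sum fun _ e => e) = k} where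
  toFun s := ⟨⟨s.1.sum fun _ e => e, Nat.lt_succ_of_le s.2⟩, ⟨s.1, rfl⟩⟩
  invFun p := ⟨p.2.1, by have := p.2.2; simp only [Set.mem_setOf_eq, this]; omega⟩
  left_inv s := rfl
  right_inv p := by
    obtain ⟨⟨kv, hk⟩, s, hs⟩ := p
    simp only [Fin.val_mk] at hs
    subst hs
    rfl

noncomputable def fiberEquiv (n k : ℕ) :
    {s : Fin n →₀ ℕ // (s.sum fun _ e => e) = k} ≃ Sym (Fin n) k :=
  (Equiv.subtypeEquivRight (fun _ => Iff.rfl)).trans (Sym.equivNatSum (Fin n) k).symm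

noncomputable instance fiberFintype (n k : ℕ) :
    Fintype {s : Fin n →₀ ℕ // (s.sum fun _ e => e) = k} :=
  Fintype.ofEquiv _ (fiberEquiv n k).symm

noncomputable instance sliceFintype (n d : ℕ) :
    Fintype {s : Fin n →₀ ℕ | (s.sum fun _ e => e) ≤ d} :=
  Fintype.ofEquiv _ (sliceEquiv n d).symm

theorem card_slice (n d : ℕ) (hn : 1 ≤ n) :
    Fintype.card {s : Fin n →₀ ℕ | (s.sum fun _ e => e) ≤ d} = (d + n).choose n := by
  rw [Fintype.card_congr (sliceEquiv n d), Fintype.card_sigma]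
  have h1 : ∀ k : ℕ, Fintype.card {s : Fin n →₀ ℕ // (s.sum fun _ e => e) = k}
      = Nat.multichoose n k := by
    intro k
    rw [Fintype.card_congr (fiberEquiv n k), Sym.card_sym_eq_multichoose, Fintype.card_fin]
  simp only [h1]
  rw [Fin.sum_univ_eq_sum_range (fun k => Nat.multichoose n k)]
  have h2 : ∀ k ∈ Finset.range (d+1), Nat.multichoose n k = (n - 1 + k).choose (n - 1) := by
    intro k _
    rw [Nat.multichoose_eq, show n + k - 1 = n - 1 + k by omega]
    exact (Nat.choose_symm_add).symm
  rw [Finset.sum_congr rfl h2]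
  have h3 := Nat.sum_Icc_choose (n - 1 + d) (n - 1)
  rw [show Finset.Icc (n-1) (n-1+d) = Finset.Ico (n-1) (n-1+d+1) by rw [Finset.Ico_add_one_right_eq_Icc], Finset.sum_Ico_eq_sum_range] at h3
  rw [show n - 1 + d + 1 - (n - 1) = d + 1 by omega] at h3
  rw [show (n - 1 + d + 1).choose (n - 1 + 1) = (d + n).choose n by congr 1 <;> omega] at h3
  exact h3

/-- **Interpolation** (Lemma 1.4). -/
theorem interpolation (F : Type*) [Field F] (n : ℕ) (hn : 1 ≤ n) (d : ℕ)
    (E : Finset (Fin n → F)) (hE : E.card < (d + n).choose n) :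
    ∃ P : MvPolynomial (Fin n) F, P ≠ 0 ∧ P.totalDegree ≤ d ∧
      ∀ x ∈ E, MvPolynomial.eval x P = 0 := by
  classical
  set V := MvPolynomial.restrictTotalDegree (Fin n) F d with hV
  let φ : V →ₗ[F] (↥E → F) :=
    { toFun := fun p x => MvPolynomial.eval (x : Fin n → F) (p : MvPolynomial (Fin n) F)
      map_add' := fun p q => by funext x; simp
      map_smul' := fun c p => by funext x; simp }
  have hrank : Module.finrank F V = (d + n).choose n := by
    rw [hV, MvPolynomial.restrictTotalDegree,
      Module.finrank_eq_card_basis (MvPolynomial.basisRestrictSupport F _)]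
    exact card_slice n d hn
  have hcod : Module.finrank F (↥E → F) = E.card := by
    rw [Module.finrank_pi, Fintype.card_coe]
  have hni : ¬ Function.Injective φ := by
    intro h
    have := LinearMap.finrank_le_finrank_of_injective h
    rw [hrank, hcod] at this
    omega
  rw [Function.not_injective_iff] at hni
  obtain ⟨p, q, hpq, hne⟩ := hni
  refine ⟨(p : MvPolynomial (Fin n) F) - q, ?_, ?_, ?_⟩
  · intro h
    apply hne
    exact Subtype.ext (by rwa [sub_eq_zero] at h)
  · have : (p - q : V).1 ∈ V := (p - q).2
    rw [MvPolynomial.mem_restrictTotalDegree] at this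
    exact this
  · intro x hx
    have := congrFun hpq ⟨x, hx⟩
    simp only [map_sub]
    simpa [sub_eq_zero, φ] using this
end

section
/- Let F be a finite field, let n, d ≥ 1 be integers, and let E ⊆ Fⁿ have the property that for every point x ∈ Fⁿ there exists a nonzero direction v ∈ Fⁿ such that the line {x + t•v : t ∈ F} contains strictly more than d points of E. Then |E| ≥ C(d+n, n). -/
open MvPolynomial

lemma nik_card_aux (n d : ℕ) :
    Nat.card ↥{ s : Fin n →₀ ℕ | (s.sum fun _ e => e) ≤ d } = (d + n).choose n := by
  have e1 : {s : Fin n →₀ ℕ // (s.sum fun _ e => e) ≤ d} ≃ {f : Fin n → ℕ // ∑ i, f i ≤ d} :=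
    Finsupp.equivFunOnFinite.subtypeEquiv (fun s => by
      rw [Finsupp.sum_fintype _ _ (fun _ => rfl)]; rfl)
  have e2 : {f : Fin n → ℕ // ∑ i, f i ≤ d} ≃ {g : Fin (n+1) → ℕ // ∑ i, g i = d} := by
    refine ⟨fun f => ⟨Fin.snoc f.1 (d - ∑ i, f.1 i), ?_⟩,
      fun g => ⟨fun i => g.1 i.castSucc, ?_⟩, ?_, ?_⟩
    · rw [Fin.sum_univ_castSucc]
      simp only [Fin.snoc_castSucc, Fin.snoc_last]
      exact Nat.add_sub_cancel' f.2
    · have := g.2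
      rw [Fin.sum_univ_castSucc] at this
      exact le_trans (Nat.le_add_right _ _) this.le
    · intro f; ext i; simp
    · intro g
      ext i
      refine Fin.lastCases ?_ (fun j => ?_) i
      · simp only [Fin.snoc_last]
        have := g.2
        rw [Fin.sum_univ_castSucc] at this
        omega
      · simp
  have e3 : {g : Fin (n+1) → ℕ // ∑ i, g i = d} ≃
      {s : Fin (n+1) →₀ ℕ // (s.sum fun _ e => e) = d} :=
    (Finsupp.equivFunOnFinite.subtypeEquiv (fun s => by
      rw [Finsupp.sum_fintype _ _ (fun _ => rfl)]; rfl)).symm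
  have e4 : {s : Fin (n+1) →₀ ℕ // (s.sum fun _ e => e) = d} ≃ Sym (Fin (n+1)) d :=
    (Multiset.toFinsupp.toEquiv.subtypeEquiv (fun m => by
      rw [show ((Multiset.toFinsupp.toEquiv m).sum fun _ e => e) = Multiset.card m by
        show ((Multiset.toFinsupp m).sum fun _ e => e) = Multiset.card m
        conv_rhs => rw [← Multiset.toFinsupp_toMultiset m]
        rw [Finsupp.card_toMultiset]; rfl])).symm
  show Nat.card {s : Fin n →₀ ℕ // (s.sum fun _ e => e) ≤ d} = (d + n).choose n
  rw [Nat.card_eq_of_equiv_fin ((e1.trans (e2.trans (e3.trans e4))).trans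
    (Fintype.equivFin _))]
  rw [Sym.card_sym_eq_choose]
  simp [Fintype.card_fin]
  rw [Nat.add_comm d n, ← Nat.choose_symm (by omega : d ≤ n + d)]
  congr 1
  omega

lemma nik_finrank (F : Type*) [Field F] (n d : ℕ) :
    Module.finrank F (restrictTotalDegree (Fin n) F d) = (d + n).choose n := by
  have b := basisRestrictSupport F { s : Fin n →₀ ℕ | (s.sum fun _ e => e) ≤ d }
  haveI : Finite ↥{ s : Fin n →₀ ℕ | (s.sum fun _ e => e) ≤ d } :=
    Nat.finite_of_card_ne_zero (by rw [nik_card_aux]; exact (Nat.choose_pos (by omega)).ne')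
  haveI : Fintype ↥{ s : Fin n →₀ ℕ | (s.sum fun _ e => e) ≤ d } := Fintype.ofFinite _
  show Module.finrank F (restrictSupport F { s : Fin n →₀ ℕ | (s.sum fun _ e => e) ≤ d })
    = (d + n).choose n
  rw [Module.finrank_eq_card_basis b, ← Nat.card_eq_fintype_card]
  exact nik_card_aux n d

lemma nik_exists_poly (F : Type*) [Field F] [Fintype F] (n d : ℕ) (E : Set (Fin n → F))
    (hE : E.ncard < (d + n).choose n) :
    ∃ P : MvPolynomial (Fin n) F, P ≠ 0 ∧ P.totalDegree ≤ d ∧ ∀ x ∈ E, eval x P = 0 := by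
  haveI : Fintype ↥E := Fintype.ofFinite _
  let L : restrictTotalDegree (Fin n) F d →ₗ[F] (↥E → F) :=
    { toFun := fun p x => eval (x : Fin n → F) (p : MvPolynomial (Fin n) F)
      map_add' := fun p q => funext fun x => by simp
      map_smul' := fun c p => funext fun x => by
        simp [smul_eq_C_mul] }
  have hnotinj : ¬ Function.Injective L := by
    intro hinj
    have hle := LinearMap.finrank_le_finrank_of_injective hinj
    rw [nik_finrank, Module.finrank_fintype_fun_eq_card, ← Nat.card_eq_fintype_card,
      Nat.card_coe_set_eq] at hle
    omega
  rw [← LinearMap.ker_eq_bot] at hnotinj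
  obtain ⟨p, hpker, hp0⟩ := Submodule.ne_bot_iff _ |>.mp hnotinj
  refine ⟨(p : MvPolynomial (Fin n) F), ?_, (mem_restrictTotalDegree _ _ _).mp p.2, ?_⟩
  · simpa using hp0
  · intro x hx
    have := congrFun hpker ⟨x, hx⟩
    simpa [L] using this

lemma nik_natDegree_aeval_le {F : Type*} [CommRing F] {n : ℕ} (P : MvPolynomial (Fin n) F)
    (f : Fin n → Polynomial F) (hf : ∀ i, (f i).natDegree ≤ 1) :
    (MvPolynomial.aeval f P).natDegree ≤ P.totalDegree := by
  rw [aeval_def, eval₂_eq]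
  apply Polynomial.natDegree_sum_le_of_forall_le
  intro s hs
  refine Polynomial.natDegree_mul_le.trans ?_
  have h1 : (algebraMap F (Polynomial F) (coeff s P)).natDegree = 0 := by
    rw [Polynomial.algebraMap_eq]; exact Polynomial.natDegree_C _
  have h2 : (∏ i ∈ s.support, f i ^ s i).natDegree ≤ s.sum fun _ e => e := by
    refine Polynomial.natDegree_prod_le _ _ |>.trans ?_
    rw [Finsupp.sum]
    refine Finset.sum_le_sum fun i _ => ?_
    exact Polynomial.natDegree_pow_le.trans (by
      calc s i * (f i).natDegree ≤ s i * 1 := Nat.mul_le_mul_left _ (hf i)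
        _ = s i := Nat.mul_one _)
  rw [h1, Nat.zero_add]
  exact h2.trans (le_totalDegree hs)

lemma nik_eval_aeval {F : Type*} [CommRing F] {n : ℕ} (P : MvPolynomial (Fin n) F)
    (f : Fin n → Polynomial F) (t : F) :
    ((MvPolynomial.aeval f P).eval t) = eval (fun i => (f i).eval t) P := by
  induction P using MvPolynomial.induction_on with
  | C a => simp
  | add p q hp hq => simp [hp, hq]
  | mul_X p i hp => simp [hp]

/-- **Finite field Nikodym conjecture** (Proposition 1.7). -/
theorem finite_field_nikodym (F : Type*) [Field F] [Fintype F] (n d : ℕ)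
    (hn : 1 ≤ n) (hd : 1 ≤ d) (E : Set (Fin n → F))
    (h : ∀ x : Fin n → F, ∃ v : Fin n → F, v ≠ 0 ∧
      d < (E ∩ {y | ∃ t : F, y = x + t • v}).ncard) :
    (d + n).choose n ≤ E.ncard := by
  by_contra hlt
  push_neg at hlt
  obtain ⟨P, hP0, hPd, hPE⟩ := nik_exists_poly F n d E hlt
  have hdF : d < Fintype.card F := by
    obtain ⟨v, hv, hcard⟩ := h 0
    have hsub : (E ∩ {y | ∃ t : F, y = 0 + t • v}) ⊆ Set.range (fun t : F => 0 + t • v) := by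
      rintro y ⟨-, t, rfl⟩; exact ⟨t, rfl⟩
    calc d < _ := hcard
      _ ≤ (Set.range (fun t : F => 0 + t • v)).ncard :=
        Set.ncard_le_ncard hsub (Set.toFinite _)
      _ = ((fun t : F => 0 + t • v) '' Set.univ).ncard := by rw [Set.image_univ]
      _ ≤ (Set.univ : Set F).ncard := Set.ncard_image_le (Set.toFinite _)
      _ = Fintype.card F := by rw [Set.ncard_univ, Nat.card_eq_fintype_card]
  have hall : ∀ x : Fin n → F, eval x P = 0 := by
    intro x
    obtain ⟨v, hv, hcard⟩ := h x
    set q : Polynomial F :=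
      MvPolynomial.aeval (fun i => Polynomial.C (x i) + Polynomial.X * Polynomial.C (v i)) P
      with hq
    have hqd : q.natDegree ≤ d := by
      refine (nik_natDegree_aeval_le P _ fun i => ?_).trans hPd
      refine (Polynomial.natDegree_add_le _ _).trans (max_le (by simp) ?_)
      exact Polynomial.natDegree_mul_le.trans (by simp)
    have heval : ∀ t : F, q.eval t = eval (x + t • v) P := by
      intro t
      rw [hq, nik_eval_aeval]
      have hfun : (fun i => Polynomial.eval t
          (Polynomial.C (x i) + Polynomial.X * Polynomial.C (v i))) = x + t • v := by
        funext i
        simp only [Polynomial.eval_add, Polynomial.eval_C, Polynomial.eval_mul,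
          Polynomial.eval_X, Pi.add_apply, Pi.smul_apply, smul_eq_mul]
      rw [hfun]
    set g : F → (Fin n → F) := fun t => x + t • v with hg
    have hginj : Function.Injective g := by
      intro a b hab
      obtain ⟨j, hj⟩ := Function.ne_iff.mp hv
      have hj' : v j ≠ 0 := by simpa using hj
      have := congrFun hab j
      simp only [hg, Pi.add_apply, Pi.smul_apply, smul_eq_mul] at this
      exact mul_right_cancel₀ hj' (add_left_cancel this)
    have hline : {y | ∃ t : F, y = x + t • v} = Set.range g := by
      ext y; simp [hg, eq_comm]
    have hT : d < (g ⁻¹' E).ncard := by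
      rw [hline, ← Set.image_preimage_eq_inter_range,
        Set.ncard_image_of_injective _ hginj] at hcard
      exact hcard
    have hq0 : q = 0 := by
      apply Polynomial.eq_zero_of_natDegree_lt_card_of_eval_eq_zero' q
        ((Set.toFinite (g ⁻¹' E)).toFinset)
      · intro t ht
        rw [Set.Finite.mem_toFinset] at ht
        rw [heval t]
        exact hPE _ ht
      · rw [Set.ncard_eq_toFinset_card (g ⁻¹' E) (Set.toFinite _)] at hT
        exact lt_of_le_of_lt hqd hT
    have h0 := heval 0
    rw [hq0] at h0
    simpa using h0.symm
  set Q : MvPolynomial (ULift (Fin n)) F := rename (Equiv.ulift.symm) P with hQdef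
  have hQd : Q.totalDegree ≤ d := le_trans (totalDegree_rename_le _ _) hPd
  have hmem : Q ∈ restrictDegree (ULift (Fin n)) F (Fintype.card F - 1) := by
    rw [mem_restrictDegree]
    intro s hs i
    have h1 : s i ≤ s.sum fun _ e => e := by
      by_cases h0 : s i = 0
      · rw [h0]; exact Nat.zero_le _
      · rw [Finsupp.sum]
        exact Finset.single_le_sum (f := fun j => s j) (fun _ _ => Nat.zero_le _)
          (Finsupp.mem_support_iff.mpr h0)
    have := (h1.trans (le_totalDegree hs)).trans hQd
    omega
  have hallQ : ∀ w : ULift (Fin n) → F, eval w Q = 0 := by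
    intro w
    rw [hQdef, eval_rename]
    exact hall _
  have hQ0 : Q = 0 := eq_zero_of_eval_eq_zero (ULift (Fin n)) F Q hallQ hmem
  have : P = 0 := by
    apply rename_injective (R := F) (⇑(Equiv.ulift (α := Fin n)).symm)
      (Equiv.ulift (α := Fin n)).symm.injective
    rw [map_zero, ← hQdef]
    exact hQ0
  exact hP0 this
end

section
/- Let F be a finite field, let n ≥ 1 be an integer, and let E ⊆ Fⁿ be a Kakeya set. Then |E| ≥ C(|F|+n−1, n); in particular |E| ≥ |F|ⁿ/n!. -/
open MvPolynomial Polynomial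


noncomputable def kakeyaSnocEquiv (n m : ℕ) :
    {f : Fin n → ℕ // ∑ i, f i ≤ m} ≃ {g : Fin (n+1) → ℕ // ∑ i, g i = m} where
  toFun f := ⟨Fin.snoc f.1 (m - ∑ i, f.1 i), by
    rw [Fin.sum_univ_castSucc]
    simp only [Fin.snoc_castSucc, Fin.snoc_last]
    exact Nat.add_sub_cancel' f.2⟩
  invFun g := ⟨Fin.init g.1, by
    have h := g.2
    rw [Fin.sum_univ_castSucc] at h
    have h2 : ∑ i : Fin n, Fin.init g.1 i = ∑ i : Fin n, g.1 i.castSucc := by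
      simp [Fin.init]
    omega⟩
  left_inv f := by
    ext i
    simp [Fin.init_snoc]
  right_inv g := by
    ext i
    have hg := g.2
    rw [Fin.sum_univ_castSucc] at hg
    refine Fin.lastCases ?_ (fun j => ?_) i
    · simp only [Fin.snoc_last]
      have h2 : ∑ i : Fin n, Fin.init g.1 i = ∑ i : Fin n, g.1 i.castSucc := by
        simp [Fin.init]
      omega
    · simp [Fin.snoc_castSucc, Fin.init]

noncomputable def kakeyaSymEquiv (n m : ℕ) :
    {s : Fin n →₀ ℕ // (s.sum fun _ e => e) ≤ m} ≃ Sym (Fin (n+1)) m := by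
  have e1 : {s : Fin n →₀ ℕ // (s.sum fun _ e => e) ≤ m} ≃ {f : Fin n → ℕ // ∑ i, f i ≤ m} :=
    (Finsupp.equivFunOnFinite).subtypeEquiv (fun s => by
      rw [Finsupp.sum_fintype _ _ (fun _ => rfl)]; rfl)
  have e4 : {g : Fin (n+1) → ℕ // ∑ i, g i = m} ≃ Sym (Fin (n+1)) m :=
    (Sym.equivNatSumOfFintype (Fin (n+1)) m).symm
  exact e1.trans ((kakeyaSnocEquiv n m).trans e4)

theorem kakeya_card_bounded (n m : ℕ) :
    Nat.card {s : Fin n →₀ ℕ // (s.sum fun _ e => e) ≤ m} = (m + n).choose n := by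
  rw [Nat.card_congr (kakeyaSymEquiv n m), Nat.card_eq_fintype_card,
    Sym.card_sym_eq_multichoose, Nat.multichoose_eq, Fintype.card_fin]
  have h1 : n + 1 + m - 1 = m + n := by omega
  rw [h1]
  have h2 := Nat.choose_symm (Nat.le_add_right m n)
  simpa using h2.symm


section pieces
variable {F : Type*} [Field F]

lemma kakeya_pow (a b : F) (k : ℕ) :
    ((Polynomial.C a + Polynomial.X * Polynomial.C b) ^ k).natDegree ≤ k ∧
      ((Polynomial.C a + Polynomial.X * Polynomial.C b) ^ k).coeff k = b ^ k := by
  have hdeg : (Polynomial.C a + Polynomial.X * Polynomial.C b).natDegree ≤ 1 := by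
    compute_degree
  constructor
  · exact (Polynomial.natDegree_pow_le).trans (by simpa using Nat.mul_le_mul_left k hdeg)
  · induction k with
    | zero => simp
    | succ k ih =>
      rw [pow_succ, pow_succ]
      have h1 : ((Polynomial.C a + Polynomial.X * Polynomial.C b) ^ k).natDegree ≤ k :=
        (Polynomial.natDegree_pow_le).trans (by simpa using Nat.mul_le_mul_left k hdeg)
      rw [Polynomial.coeff_mul_add_eq_of_natDegree_le h1 hdeg, ih]
      have : (Polynomial.C a + Polynomial.X * Polynomial.C b).coeff 1 = b := by
        simp [Polynomial.coeff_add, Polynomial.coeff_C]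
      rw [this]

lemma kakeya_coeff_prod {ι : Type*} (s : Finset ι) (f : ι → Polynomial F) (d : ι → ℕ)
    (h : ∀ i ∈ s, (f i).natDegree ≤ d i) :
    (∏ i ∈ s, f i).natDegree ≤ ∑ i ∈ s, d i ∧
      (∏ i ∈ s, f i).coeff (∑ i ∈ s, d i) = ∏ i ∈ s, (f i).coeff (d i) := by
  classical
  induction s using Finset.induction with
  | empty => simp
  | insert x s hx ih =>
    have hs := ih (fun i hi => h i (Finset.mem_insert_of_mem hi))
    have hx' := h x (Finset.mem_insert_self x s)
    rw [Finset.prod_insert hx, Finset.sum_insert hx, Finset.prod_insert hx]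
    refine ⟨(Polynomial.natDegree_mul_le).trans (Nat.add_le_add hx' hs.1), ?_⟩
    rw [Polynomial.coeff_mul_add_eq_of_natDegree_le hx' hs.1, hs.2]
end pieces

section line
variable {F : Type*} [Field F] {n : ℕ}

lemma kakeya_line_eval (P : MvPolynomial (Fin n) F) (x v : Fin n → F) (t : F) :
    (MvPolynomial.aeval (fun i => Polynomial.C (x i) + Polynomial.X * Polynomial.C (v i)) P).eval t
      = MvPolynomial.eval (x + t • v) P := by
  induction P using MvPolynomial.induction_on with
  | C a => simp
  | add p q hp hq => rw [map_add, Polynomial.eval_add, hp, hq, map_add]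
  | mul_X p i hp =>
      rw [map_mul, Polynomial.eval_mul, hp, map_mul, MvPolynomial.aeval_X, MvPolynomial.eval_X]
      congr 1
      rw [Polynomial.eval_add, Polynomial.eval_C, Polynomial.eval_mul, Polynomial.eval_X,
        Polynomial.eval_C]
      simp [mul_comm]

lemma kakeya_line_coeff (P : MvPolynomial (Fin n) F) (x v : Fin n → F) :
    (MvPolynomial.aeval (fun i => Polynomial.C (x i) + Polynomial.X * Polynomial.C (v i)) P).natDegree
        ≤ P.totalDegree ∧
      (MvPolynomial.aeval (fun i => Polynomial.C (x i) + Polynomial.X * Polynomial.C (v i)) P).coeff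
          P.totalDegree
        = MvPolynomial.eval v (homogeneousComponent P.totalDegree P) := by
  classical
  set f : Fin n → Polynomial F := fun i => Polynomial.C (x i) + Polynomial.X * Polynomial.C (v i)
    with hf
  have hfd : ∀ (d : Fin n →₀ ℕ), (Polynomial.C (MvPolynomial.coeff d P) *
      ∏ i, (f i) ^ (d i)).natDegree ≤ ∑ i, d i := by
    intro d
    refine (Polynomial.natDegree_mul_le).trans ?_
    rw [Polynomial.natDegree_C, Nat.zero_add]
    exact (kakeya_coeff_prod Finset.univ (fun i => (f i) ^ (d i)) (fun i => d i)
      (fun i _ => (kakeya_pow (x i) (v i) (d i)).1)).1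
  have hsum : ∀ d ∈ P.support, (d.sum fun _ e => e) = ∑ i, d i := by
    intro d _
    rw [Finsupp.sum_fintype _ _ (fun _ => rfl)]
  have hexp : (MvPolynomial.aeval f P) = ∑ d ∈ P.support,
      Polynomial.C (MvPolynomial.coeff d P) * ∏ i, (f i) ^ (d i) := by
    rw [MvPolynomial.aeval_def, MvPolynomial.eval₂_eq']
    rfl
  constructor
  · rw [hexp]
    refine Polynomial.natDegree_sum_le_of_forall_le _ _ (fun d hd => ?_)
    exact (hfd d).trans (by rw [← hsum d hd]; exact MvPolynomial.le_totalDegree hd)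
  · rw [hexp, Polynomial.finset_sum_coeff]
    rw [homogeneousComponent_apply, map_sum]
    rw [Finset.sum_filter]
    refine Finset.sum_congr rfl (fun d hd => ?_)
    have hdeg : d.degree = d.sum fun _ e => e := rfl
    by_cases hD : d.degree = P.totalDegree
    · rw [if_pos hD, ← hD, hdeg, hsum d hd]
      rw [Polynomial.coeff_C_mul,
        (kakeya_coeff_prod Finset.univ (fun i => (f i) ^ (d i)) (fun i => d i)
          (fun i _ => (kakeya_pow (x i) (v i) (d i)).1)).2]
      rw [MvPolynomial.eval_monomial]
      congr 1
      · rw [Finsupp.prod_fintype _ _ (fun i => pow_zero (v i))]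
        exact Finset.prod_congr rfl (fun i _ => (kakeya_pow (x i) (v i) (d i)).2)
    · rw [if_neg hD]
      refine Polynomial.coeff_eq_zero_of_natDegree_lt ?_
      refine lt_of_le_of_lt (hfd d) ?_
      have h1 : (d.sum fun _ e => e) ≤ P.totalDegree := MvPolynomial.le_totalDegree hd
      rw [← hsum d hd]
      rw [hdeg] at hD
      omega
end line

def kakeyaFunEquiv (n m : ℕ) : {f : Fin n → ℕ // ∀ i, f i ≤ m} ≃ (Fin n → Fin (m+1)) where
  toFun f i := ⟨f.1 i, Nat.lt_succ_of_le (f.2 i)⟩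
  invFun g := ⟨fun i => (g i : ℕ), fun i => Nat.le_of_lt_succ (g i).2⟩
  left_inv f := by ext i; rfl
  right_inv g := by ext i; rfl

noncomputable def kakeyaDegEquiv (n m : ℕ) :
    {s : Fin n →₀ ℕ // ∀ i, s i ≤ m} ≃ (Fin n → Fin (m+1)) :=
  (Finsupp.equivFunOnFinite.subtypeEquiv fun s => Iff.rfl).trans (kakeyaFunEquiv n m)

section dim
variable (F : Type*) [Field F]

theorem kakeya_finrank_deg (n m : ℕ) :
    Module.finrank F (restrictDegree (Fin n) F m) = (m+1)^n := by
  haveI : Finite ↥{ s : Fin n →₀ ℕ | ∀ i, s i ≤ m } :=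
    Finite.of_equiv _ (kakeyaDegEquiv n m).symm
  haveI := Fintype.ofFinite ↥{ s : Fin n →₀ ℕ | ∀ i, s i ≤ m }
  have b := basisRestrictSupport F { s : Fin n →₀ ℕ | ∀ i, s i ≤ m }
  rw [show restrictDegree (Fin n) F m
      = restrictSupport F { s : Fin n →₀ ℕ | ∀ i, s i ≤ m } from rfl]
  rw [Module.finrank_eq_card_basis b, ← Nat.card_eq_fintype_card]
  exact (Nat.card_congr (kakeyaDegEquiv n m)).trans (by simp [Nat.card_eq_fintype_card])
theorem kakeya_finrank (n m : ℕ) :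
    Module.finrank F (restrictTotalDegree (Fin n) F m) = (m + n).choose n := by
  haveI : Finite ↥{ s : Fin n →₀ ℕ | (s.sum fun _ e => e) ≤ m } :=
    Finite.of_equiv _ (kakeyaSymEquiv n m).symm
  haveI := Fintype.ofFinite ↥{ s : Fin n →₀ ℕ | (s.sum fun _ e => e) ≤ m }
  have b := basisRestrictSupport F { s : Fin n →₀ ℕ | (s.sum fun _ e => e) ≤ m }
  rw [show restrictTotalDegree (Fin n) F m
      = restrictSupport F { s : Fin n →₀ ℕ | (s.sum fun _ e => e) ≤ m } from rfl]
  rw [Module.finrank_eq_card_basis b, ← Nat.card_eq_fintype_card]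
  exact kakeya_card_bounded n m

theorem kakeya_exists_poly [Fintype F] (n m : ℕ) (E : Set (Fin n → F))
    (hcard : E.ncard < (m + n).choose n) :
    ∃ P : MvPolynomial (Fin n) F, P ≠ 0 ∧ P.totalDegree ≤ m ∧
      ∀ x ∈ E, MvPolynomial.eval x P = 0 := by
  haveI := Fintype.ofFinite ↥E
  set L : restrictTotalDegree (Fin n) F m →ₗ[F] (↥E → F) :=
    (LinearMap.funLeft F F (Subtype.val)) ∘ₗ (evalₗ F (Fin n)) ∘ₗ
      (restrictTotalDegree (Fin n) F m).subtype with hL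
  have hnotinj : ¬ Function.Injective L := by
    intro hinj
    have h1 := LinearMap.finrank_le_finrank_of_injective hinj
    rw [kakeya_finrank, Module.finrank_fintype_fun_eq_card, ← Nat.card_eq_fintype_card,
      Nat.card_coe_set_eq] at h1
    omega
  rw [← LinearMap.ker_eq_bot] at hnotinj
  obtain ⟨p, hpker, hp0⟩ := Submodule.exists_mem_ne_zero_of_ne_bot hnotinj
  refine ⟨p.1, by simpa using hp0, (mem_restrictTotalDegree _ _ _).mp p.2, fun x hx => ?_⟩
  have h2 : L p = 0 := hpker
  have h3 := congrFun h2 ⟨x, hx⟩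
  simpa [hL, evalₗ] using h3

theorem kakeya_eval_zero [Fintype F] {n : ℕ} {p : MvPolynomial (Fin n) F}
    (hp : p ∈ restrictDegree (Fin n) F (Fintype.card F - 1))
    (h0 : ∀ x : Fin n → F, MvPolynomial.eval x p = 0) : p = 0 := by
  classical
  set L : restrictDegree (Fin n) F (Fintype.card F - 1) →ₗ[F] ((Fin n → F) → F) :=
    (evalₗ F (Fin n)) ∘ₗ (restrictDegree (Fin n) F (Fintype.card F - 1)).subtype with hL
  have hsurj : Function.Surjective L := by
    rw [← LinearMap.range_eq_top, hL, LinearMap.range_comp, Submodule.range_subtype]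
    exact map_restrict_dom_evalₗ F (Fin n)
  have hfin : Module.finrank F (restrictDegree (Fin n) F (Fintype.card F - 1))
      = Module.finrank F ((Fin n → F) → F) := by
    rw [Module.finrank_fintype_fun_eq_card, kakeya_finrank_deg,
      Nat.sub_add_cancel Fintype.card_pos, Fintype.card_fun]
    simp
  have hinj : Function.Injective L :=
    (LinearMap.injective_iff_surjective_of_finrank_eq_finrank hfin).mpr hsurj
  have heq : L ⟨p, hp⟩ = L 0 := by
    rw [map_zero]
    ext x
    simpa [hL, evalₗ] using h0 x
  simpa using congrArg Subtype.val (hinj heq)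
end dim

/-- **Finite field Kakeya conjecture** (Theorem 1.8, Dvir). -/
theorem finite_field_kakeya (F : Type*) [Field F] [Fintype F] (n : ℕ) (hn : 1 ≤ n)
    (E : Set (Fin n → F))
    (hE : ∀ v : Fin n → F, v ≠ 0 → ∃ x : Fin n → F, ∀ t : F, x + t • v ∈ E) :
    (Fintype.card F + n - 1).choose n ≤ E.ncard ∧
      Fintype.card F ^ n ≤ n.factorial * E.ncard := by
  classical
  set q := Fintype.card F with hq
  have hq2 : 2 ≤ q := Fintype.one_lt_card
  have hone : (fun _ : Fin n => (1:F)) ≠ 0 := by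
    intro h
    have := congrFun h ⟨0, hn⟩
    simpa using this
  have hmain : (q + n - 1).choose n ≤ E.ncard := by
    by_contra hlt
    push_neg at hlt
    have hqn : q + n - 1 = (q - 1) + n := by omega
    obtain ⟨P, hP0, hPdeg, hPvan⟩ := kakeya_exists_poly F n (q-1) E (by rw [← hqn]; exact hlt)
    set D := P.totalDegree with hD
    have hD1 : 1 ≤ D := by
      rcases Nat.eq_zero_or_pos D with h0 | h1
      · exfalso
        obtain ⟨x, hx⟩ := hE _ hone
        have hx0 := hPvan _ (hx 0)
        have hcoeff := (totalDegree_eq_zero_iff _ P).mp h0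
        -- P = C (coeff 0 P)
        have hPC : P = MvPolynomial.C (MvPolynomial.coeff 0 P) := by
          ext d
          rcases eq_or_ne d 0 with rfl | hd
          · simp
          · rw [MvPolynomial.coeff_C, if_neg (Ne.symm hd)]
            by_contra hne
            have hds : d ∈ P.support := by simpa [MvPolynomial.mem_support_iff] using hne
            exact hd (Finsupp.ext fun i => hcoeff d hds i)
        rw [hPC] at hx0 hP0
        simp at hx0
        rw [hx0] at hP0
        simp at hP0
      · exact h1
    set h := homogeneousComponent D P with hh
    have hhne : h ≠ 0 := by
      obtain ⟨d, hds, hdeq⟩ := P.support.exists_mem_eq_sup (support_nonempty.mpr hP0)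
        (fun d => d.sum fun _ e => e)
      intro habs
      have : MvPolynomial.coeff d h = MvPolynomial.coeff d P := by
        rw [hh, coeff_homogeneousComponent, if_pos]
        show (d.sum fun _ e => e) = D
        exact hdeq.symm
      rw [habs] at this
      simp only [MvPolynomial.coeff_zero] at this
      exact (MvPolynomial.mem_support_iff.mp hds) this.symm
    have hvan : ∀ v : Fin n → F, MvPolynomial.eval v h = 0 := by
      intro v
      by_cases hv : v = 0
      · subst hv
        have h0 : MvPolynomial.eval (0 : Fin n → F) h = MvPolynomial.coeff 0 h := by
          rw [show (MvPolynomial.eval (0 : Fin n → F)) = MvPolynomial.constantCoeff from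
            MvPolynomial.eval_zero, MvPolynomial.constantCoeff_eq]
        rw [h0, hh, coeff_homogeneousComponent, if_neg]
        · show ¬ (Finsupp.sum (0 : Fin n →₀ ℕ) fun _ e => e) = D
          simp
          omega
      · obtain ⟨x, hx⟩ := hE v hv
        set φ := MvPolynomial.aeval
          (fun i => Polynomial.C (x i) + Polynomial.X * Polynomial.C (v i)) P with hφ
        have hz : φ = 0 := by
          refine Polynomial.eq_zero_of_natDegree_lt_card_of_eval_eq_zero φ
            (f := (id : F → F)) Function.injective_id (fun t => ?_) ?_
          · rw [hφ, kakeya_line_eval]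
            exact hPvan _ (hx t)
          · have := (kakeya_line_coeff P x v).1
            have : φ.natDegree ≤ q - 1 := le_trans this hPdeg
            omega
        have hc := (kakeya_line_coeff P x v).2
        rw [← hφ, hz] at hc
        simpa [hh] using hc.symm
    have hmem : h ∈ restrictDegree (Fin n) F (q - 1) := by
      refine restrictTotalDegree_le_restrictDegree _ _ _
        ((mem_restrictTotalDegree _ _ _).mpr ?_)
      exact le_trans ((homogeneousComponent_isHomogeneous D P).totalDegree_le) hPdeg
    exact hhne (kakeya_eval_zero F hmem hvan)
  refine ⟨hmain, ?_⟩
  calc q ^ n ≤ q.ascFactorial n := Nat.pow_succ_le_ascFactorial q n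
    _ = n.factorial * (q + n - 1).choose n := Nat.ascFactorial_eq_factorial_mul_choose' q n
    _ ≤ n.factorial * E.ncard := Nat.mul_le_mul_left _ hmain
end

section
/- Let F be a field, let n ≥ 1 be an integer, and d ≥ 0. Let (c_p)_{p ∈ Fⁿ} be a finitely supported family of natural numbers such that the sum over p ∈ Fⁿ of the binomial coefficients C(c_p + n − 1, n) is strictly less than C(d+n, n). Then there exists a non-zero polynomial P ∈ F[x₁,…,xₙ] of total degree at most d such that P vanishes to order at least c_p at p for every p ∈ Fⁿ. -/
open MvPolynomial

lemma degCons {n : ℕ} (y : ℕ) (s : Fin n →₀ ℕ) :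
    ((Finsupp.cons y s).sum fun _ e => e) = y + s.sum fun _ e => e := by
  rw [Finsupp.sum_fintype _ _ (fun _ => rfl), Finsupp.sum_fintype _ _ (fun _ => rfl),
    Fin.sum_univ_succ]
  simp [Finsupp.cons_zero, Finsupp.cons_succ]

noncomputable def slackEquiv (n m : ℕ) :
    {s : Fin n →₀ ℕ // (s.sum fun _ e => e) ≤ m} ≃
      {t : Fin (n + 1) →₀ ℕ // (t.sum fun _ e => e) = m} where
  toFun s := ⟨Finsupp.cons (m - s.1.sum fun _ e => e) s.1, by rw [degCons]; omega⟩
  invFun t := ⟨Finsupp.tail t.1, by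
    have := t.2
    rw [← Finsupp.cons_tail t.1, degCons] at this
    omega⟩
  left_inv s := Subtype.ext (Finsupp.tail_cons _ _)
  right_inv t := by
    have h := t.2
    rw [← Finsupp.cons_tail t.1, degCons] at h
    refine Subtype.ext ?_
    show Finsupp.cons _ (Finsupp.tail t.1) = t.1
    have h2 : (m - (Finsupp.tail t.1).sum fun _ e => e) = t.1 0 := by omega
    rw [h2, Finsupp.cons_tail]

noncomputable def symEquiv (α : Type*) [DecidableEq α] (m : ℕ) :
    {s : α →₀ ℕ // (s.sum fun _ e => e) = m} ≃ Sym α m where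
  toFun s := ⟨Finsupp.toMultiset s.1, by rw [Finsupp.card_toMultiset]; exact s.2⟩
  invFun μ := ⟨Multiset.toFinsupp μ.1, by
    have h : Multiset.card (Finsupp.toMultiset (Multiset.toFinsupp μ.1)) =
        (Multiset.toFinsupp μ.1).sum fun _ e => e := Finsupp.card_toMultiset _
    rw [Multiset.toFinsupp_toMultiset] at h
    rw [← h]; exact μ.2⟩
  left_inv s := Subtype.ext (Finsupp.toMultiset_toFinsupp s.1)
  right_inv μ := Subtype.ext (Multiset.toFinsupp_toMultiset μ.1)

noncomputable def degLeEquiv (n m : ℕ) :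
    {s : Fin n →₀ ℕ // (s.sum fun _ e => e) ≤ m} ≃ Sym (Fin (n+1)) m :=
  (slackEquiv n m).trans (symEquiv _ m)

noncomputable instance fintypeDegLe (n m : ℕ) :
    Fintype {s : Fin n →₀ ℕ // (s.sum fun _ e => e) ≤ m} :=
  Fintype.ofEquiv _ (degLeEquiv n m).symm

lemma card_degLe (n m : ℕ) :
    Fintype.card {s : Fin n →₀ ℕ // (s.sum fun _ e => e) ≤ m} = (m + n).choose n := by
  rw [Fintype.card_congr (degLeEquiv n m), Sym.card_sym_eq_choose]
  rw [Fintype.card_fin]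
  have : n + 1 + m - 1 = m + n := by omega
  rw [this]
  have h := Nat.choose_symm (Nat.le_add_left n m)
  rwa [Nat.add_sub_cancel] at h

noncomputable instance fintypeDegLt (n k : ℕ) :
    Fintype {s : Fin n →₀ ℕ // (s.sum fun _ e => e) < k} :=
  haveI : Finite {s : Fin n →₀ ℕ // (s.sum fun _ e => e) < k} :=
    Finite.of_injective
      (fun s => (⟨s.1, s.2.le⟩ : {s : Fin n →₀ ℕ // (s.sum fun _ e => e) ≤ k}))
      (by
        intro a b h
        simp only [Subtype.mk.injEq] at h
        exact Subtype.ext h)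
  Fintype.ofFinite _

lemma card_degLt {n : ℕ} (hn : 1 ≤ n) (k : ℕ) :
    Fintype.card {s : Fin n →₀ ℕ // (s.sum fun _ e => e) < k} = (k + n - 1).choose n := by
  cases k with
  | zero =>
    have : IsEmpty {s : Fin n →₀ ℕ // (s.sum fun _ e => e) < 0} :=
      ⟨fun s => Nat.not_lt_zero _ s.2⟩
    rw [Fintype.card_eq_zero]
    exact (Nat.choose_eq_zero_of_lt (by omega)).symm
  | succ m =>
    have e : {s : Fin n →₀ ℕ // (s.sum fun _ e => e) < m + 1} ≃
        {s : Fin n →₀ ℕ // (s.sum fun _ e => e) ≤ m} :=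
      Equiv.subtypeEquivRight fun s => Nat.lt_succ_iff
    rw [Fintype.card_congr e, card_degLe]
    congr 1
    omega

lemma prod_X_pow_mem {F : Type*} [Field F] {n : ℕ} (s : Fin n →₀ ℕ) (t : Finset (Fin n)) :
    (∏ i ∈ t, (X i : MvPolynomial (Fin n) F) ^ s i) ∈
      (Ideal.span (Set.range (X : Fin n → MvPolynomial (Fin n) F))) ^ (∑ i ∈ t, s i) := by
  classical
  induction t using Finset.induction_on with
  | empty => simp [Ideal.one_eq_top]
  | insert a u hx ih =>
    rw [Finset.prod_insert hx, Finset.sum_insert hx, pow_add]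
    refine Ideal.mul_mem_mul (Ideal.pow_mem_pow ?_ _) ih
    exact Ideal.subset_span ⟨a, rfl⟩

lemma low_coeff_zero_mem {F : Type*} [Field F] {n m : ℕ} {Q : MvPolynomial (Fin n) F}
    (h : ∀ s : Fin n →₀ ℕ, (s.sum fun _ e => e) < m → coeff s Q = 0) :
    Q ∈ (Ideal.span (Set.range (X : Fin n → MvPolynomial (Fin n) F))) ^ m := by
  classical
  rw [Q.as_sum]
  refine Submodule.sum_mem _ fun s hs => ?_
  have hdeg : m ≤ s.sum fun _ e => e := by
    by_contra hlt
    exact (mem_support_iff.mp hs) (h s (by omega))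
  rw [monomial_eq]
  refine Ideal.mul_mem_left _ _ ?_
  have := prod_X_pow_mem (F := F) s s.support
  exact Ideal.pow_le_pow_right hdeg this

lemma translate_mem {F : Type*} [Field F] {n m : ℕ} (p : Fin n → F) {P : MvPolynomial (Fin n) F}
    (h : aeval (fun i => X i + C (p i)) P ∈
      (Ideal.span (Set.range (X : Fin n → MvPolynomial (Fin n) F))) ^ m) :
    P ∈ (Ideal.span (Set.range fun i => (X i : MvPolynomial (Fin n) F) - C (p i))) ^ m := by
  set σp : MvPolynomial (Fin n) F →ₐ[F] MvPolynomial (Fin n) F := aeval fun i => X i - C (p i)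
  have hPe : σp (aeval (fun i => X i + C (p i)) P) = P := by
    have : σp.comp (aeval fun i => X i + C (p i)) = AlgHom.id F (MvPolynomial (Fin n) F) := by
      apply MvPolynomial.algHom_ext
      intro i
      simp [σp]
    calc σp (aeval (fun i => X i + C (p i)) P)
        = (σp.comp (aeval fun i => X i + C (p i))) P := by rw [AlgHom.comp_apply]
      _ = P := by rw [this]; rfl
  have hmap : Ideal.map σp.toRingHom
        ((Ideal.span (Set.range (X : Fin n → MvPolynomial (Fin n) F))) ^ m)
      = (Ideal.span (Set.range fun i => (X i : MvPolynomial (Fin n) F) - C (p i))) ^ m := by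
    rw [Ideal.map_pow, Ideal.map_span]
    congr 2
    rw [← Set.range_comp]
    refine congrArg _ (funext fun i => ?_)
    simp [σp]
  rw [← hmap]
  have h2 := Ideal.mem_map_of_mem σp.toRingHom h
  rwa [AlgHom.toRingHom_eq_coe, RingHom.coe_coe, hPe] at h2

/-- **Interpolation with multiplicity** (Lemma 2.3).  Here `P` vanishes to order at least
`m` at `p` iff `P` lies in the `m`-th power of the ideal generated by the `Xᵢ - pᵢ`. -/
theorem interpolation_with_multiplicity (F : Type*) [Field F] (n : ℕ) (hn : 1 ≤ n) (d : ℕ)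
    (c : (Fin n → F) →₀ ℕ)
    (hc : ∑ p ∈ c.support, (c p + n - 1).choose n < (d + n).choose n) :
    ∃ P : MvPolynomial (Fin n) F, P ≠ 0 ∧ P.totalDegree ≤ d ∧
      ∀ p : Fin n → F,
        P ∈ (Ideal.span (Set.range fun i => MvPolynomial.X i - MvPolynomial.C (p i))) ^ (c p) := by
  classical
  set V := MvPolynomial.restrictTotalDegree (Fin n) F d with hV
  -- the target space
  let B := (p : {x // x ∈ c.support}) × {s : Fin n →₀ ℕ // (s.sum fun _ e => e) < c p.1}
  -- the linear evaluation map
  let Φ : MvPolynomial (Fin n) F →ₗ[F] (B → F) :=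
    { toFun := fun P b => coeff b.2.1 (aeval (fun i => X i + C (b.1.1 i)) P)
      map_add' := fun x y => funext fun b => by simp [coeff_add]
      map_smul' := fun r x => funext fun b => by simp }
  let Ψ : V →ₗ[F] (B → F) := Φ.comp V.subtype
  -- dimension counting
  letI : Fintype ↥{s : Fin n →₀ ℕ | (s.sum fun _ e => e) ≤ d} := fintypeDegLe n d
  have hdimV : Module.finrank F V = (d + n).choose n := by
    have h := Module.finrank_eq_card_basis
      (MvPolynomial.basisRestrictSupport F {s : Fin n →₀ ℕ | (s.sum fun _ e => e) ≤ d})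
    exact h.trans (card_degLe n d)
  have hdimW : Module.finrank F (B → F) = ∑ p ∈ c.support, (c p + n - 1).choose n := by
    rw [Module.finrank_pi, Fintype.card_sigma]
    rw [← Finset.sum_coe_sort c.support (fun p => (c p + n - 1).choose n)]
    exact Finset.sum_congr rfl fun p _ => card_degLt hn (c p.1)
  have hnoninj : ¬ Function.Injective Ψ := by
    intro hinj
    have := LinearMap.finrank_le_finrank_of_injective hinj
    rw [hdimV, hdimW] at this
    omega
  rw [← LinearMap.ker_eq_bot] at hnoninj
  obtain ⟨x, hxker, hx0⟩ := (Submodule.ne_bot_iff _).mp hnoninj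
  refine ⟨x.1, fun h => hx0 (Subtype.ext h), ?_, ?_⟩
  · exact (MvPolynomial.mem_restrictTotalDegree (Fin n) d x.1).mp x.2
  · intro p
    by_cases hcp : c p = 0
    · rw [hcp, pow_zero, Ideal.one_eq_top]
      exact Submodule.mem_top
    · have hp : p ∈ c.support := Finsupp.mem_support_iff.mpr hcp
      refine translate_mem p (low_coeff_zero_mem fun s hs => ?_)
      have hz : Ψ x = 0 := LinearMap.mem_ker.mp hxker
      exact congrFun hz ⟨⟨p, hp⟩, ⟨s, hs⟩⟩
end

section
/- Let F be a field, let d₁, d₂ ≥ 0, and let P₁, P₂ ∈ F[x, y] be polynomials of total degrees d₁ and d₂ respectively, having no common non-constant factor. Then the set {(x, y) ∈ F² : P₁(x, y) = 0 and P₂(x, y) = 0} has cardinality at most d₁·d₂. -/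
namespace BezoutProof

open MvPolynomial Finset
set_option maxHeartbeats 1000000
set_option synthInstance.maxHeartbeats 200000

variable {F : Type*} [Field F]



lemma degree_eq_sum (d : Fin 2 →₀ ℕ) : d.degree = d.sum fun _ e => e := rfl

lemma topComp_ne_zero {p : MvPolynomial (Fin 2) F} (hp : p ≠ 0) :
    homogeneousComponent p.totalDegree p ≠ 0 := by
  obtain ⟨d, hd, hdeg⟩ : ∃ d ∈ p.support, (d.sum fun _ e => e) = p.totalDegree := by
    obtain ⟨d, hd, h⟩ := Finset.exists_mem_eq_sup p.support
      (support_nonempty.mpr hp) (fun s => s.sum fun _ e => e)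
    exact ⟨d, hd, h.symm⟩
  intro h0
  have hc := coeff_homogeneousComponent (n := p.totalDegree) (φ := p) d
  rw [degree_eq_sum, hdeg, if_pos rfl, h0] at hc
  exact (mem_support_iff.mp hd) (by simpa using hc.symm)

lemma lowParts (p : MvPolynomial (Fin 2) F) :
    (p - homogeneousComponent p.totalDegree p) = 0 ∨
      (p - homogeneousComponent p.totalDegree p).totalDegree < p.totalDegree := by
  have hsum := sum_homogeneousComponent p
  rw [Finset.sum_range_succ] at hsum
  have heq : p - homogeneousComponent p.totalDegree p
      = ∑ i ∈ Finset.range p.totalDegree, homogeneousComponent i p :=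
    (eq_sub_of_add_eq hsum).symm
  rcases Nat.eq_zero_or_pos p.totalDegree with h0 | hpos
  · left; rw [heq, h0, Finset.range_zero, Finset.sum_empty]
  · right
    rw [heq]
    calc (∑ i ∈ Finset.range p.totalDegree, homogeneousComponent i p).totalDegree
        ≤ (Finset.range p.totalDegree).sup (fun i => (homogeneousComponent i p).totalDegree) :=
          totalDegree_finset_sum _ _
      _ < p.totalDegree := by
          apply Finset.sup_lt_iff (by simpa using hpos) |>.mpr
          intro i hi
          exact lt_of_le_of_lt (homogeneousComponent_isHomogeneous i p).totalDegree_le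
            (Finset.mem_range.mp hi)

lemma totalDegree_mul_eq {p q : MvPolynomial (Fin 2) F} (hp : p ≠ 0) (hq : q ≠ 0) :
    (p * q).totalDegree = p.totalDegree + q.totalDegree := by
  refine le_antisymm (totalDegree_mul p q) ?_
  set dp := p.totalDegree with hdp
  set dq := q.totalDegree with hdq
  set hpp := homogeneousComponent dp p with hhpp
  set hqq := homogeneousComponent dq q with hhqq
  have hne : hpp * hqq ≠ 0 := mul_ne_zero (topComp_ne_zero hp) (topComp_ne_zero hq)
  have key : homogeneousComponent (dp + dq) (p * q) = hpp * hqq := by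
    have hsplit : p * q = (p - hpp) * q + hpp * (q - hqq) + hpp * hqq := by ring
    have h1 : homogeneousComponent (dp + dq) ((p - hpp) * q) = 0 := by
      rcases lowParts p with h | h
      · rw [← hhpp] at h; rw [h, zero_mul, map_zero]
      · rw [← hhpp, ← hdp] at h
        refine homogeneousComponent_eq_zero _ _ (lt_of_le_of_lt (totalDegree_mul _ _) ?_)
        omega
    have h2 : homogeneousComponent (dp + dq) (hpp * (q - hqq)) = 0 := by
      rcases lowParts q with h | h
      · rw [← hhqq] at h; rw [h, mul_zero, map_zero]
      · rw [← hhqq, ← hdq] at h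
        refine homogeneousComponent_eq_zero _ _ (lt_of_le_of_lt (totalDegree_mul _ _) ?_)
        have := (homogeneousComponent_isHomogeneous dp p).totalDegree_le
        rw [← hhpp] at this
        omega
    have h3 : homogeneousComponent (dp + dq) (hpp * hqq) = hpp * hqq := by
      have hm : hpp * hqq ∈ homogeneousSubmodule (Fin 2) F (dp + dq) := by
        exact (homogeneousComponent_isHomogeneous dp p).mul
          (homogeneousComponent_isHomogeneous dq q)
      rw [homogeneousComponent_of_mem hm, if_pos rfl]
    rw [hsplit, map_add, map_add, h1, h2, h3, zero_add, zero_add]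
  by_contra hlt
  push_neg at hlt
  exact hne (key ▸ homogeneousComponent_eq_zero _ _ hlt)



noncomputable def Tri (m : ℕ) : Finset (ℕ × ℕ) := (range (m + 1)).biUnion Finset.HasAntidiagonal.antidiagonal

lemma mem_Tri {m : ℕ} {p : ℕ × ℕ} : p ∈ Tri m ↔ p.1 + p.2 ≤ m := by
  simp [Tri, Finset.HasAntidiagonal.mem_antidiagonal]

lemma Tri_card (m : ℕ) : 2 * (Tri m).card = (m + 1) * (m + 2) := by
  have hdisj : ∀ x ∈ range (m+1), ∀ y ∈ range (m+1), x ≠ y →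
      Disjoint (Finset.HasAntidiagonal.antidiagonal x) (Finset.HasAntidiagonal.antidiagonal y) := by
    intro x _ y _ hxy
    simp only [Finset.disjoint_left, Finset.HasAntidiagonal.mem_antidiagonal]
    intro a h1 h2; omega
  rw [Tri, Finset.card_biUnion hdisj]
  simp only [Finset.Nat.card_antidiagonal]
  have h2 : (∑ k ∈ range (m+2), k) * 2 = (m+1) * (m+2) := by
    rw [Finset.sum_range_id_mul_two]
    show (m+2) * (m+2-1) = _
    rw [show m + 2 - 1 = m + 1 from rfl]; ring
  have h1 : ∑ k ∈ range (m+2), k = ∑ k ∈ range (m+1), (k+1) := by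
    rw [Finset.sum_range_succ']; simp
  omega

noncomputable abbrev V (F : Type*) [Field F] (k : ℕ) := restrictTotalDegree (Fin 2) F k

noncomputable def triEquiv (m : ℕ) :
    {d : Fin 2 →₀ ℕ | (d.sum fun _ e => e) ≤ m} ≃ (Tri m : Finset (ℕ × ℕ)) :=
  Equiv.trans
    (Equiv.subtypeEquiv (p := fun d => (d.sum fun _ e => e) ≤ m)
      (q := fun p : ℕ × ℕ => p.1 + p.2 ≤ m)
      ((Finsupp.equivFunOnFinite).trans (finTwoArrowEquiv ℕ))
      (by
        intro d
        simp only [finTwoArrowEquiv, Equiv.trans_apply,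
          Finsupp.equivFunOnFinite_apply, Equiv.coe_fn_mk]
        rw [Finsupp.sum_fintype _ _ (fun _ => rfl), Fin.sum_univ_two]
        exact Iff.rfl))
    (Equiv.subtypeEquivRight (fun p => mem_Tri.symm))

noncomputable def basisV (m : ℕ) :
    Module.Basis (Tri m : Finset (ℕ × ℕ)) F (V F m) :=
  (basisRestrictSupport F _).reindex (triEquiv m)

lemma finrank_V (m : ℕ) : Module.finrank F (V F m) = (Tri m).card := by
  rw [Module.finrank_eq_card_basis (basisV (F := F) m), Fintype.card_coe]

section Maps
variable (F)
noncomputable def mulMap (P : MvPolynomial (Fin 2) F) {k l : ℕ} (h : P.totalDegree + k ≤ l) :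
    V F k →ₗ[F] V F l :=
  LinearMap.codRestrict _ ((LinearMap.mulLeft F P).comp (Submodule.subtype _)) (by
    rintro ⟨c, hc⟩
    rw [mem_restrictTotalDegree] at hc
    show P * c ∈ restrictTotalDegree (Fin 2) F l
    rw [mem_restrictTotalDegree]
    exact le_trans (totalDegree_mul P c) (by omega))

@[simp] lemma mulMap_apply (P : MvPolynomial (Fin 2) F) {k l : ℕ} (h : P.totalDegree + k ≤ l)
    (c : V F k) : (mulMap F P h c : MvPolynomial (Fin 2) F) = P * c := rfl


variable {F}

noncomputable def evalMap (S : Finset (Fin 2 → F)) (n : ℕ) : V F n →ₗ[F] (S → F) :=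
  LinearMap.pi fun s => ((aeval (R := F) (s : Fin 2 → F)).toLinearMap).comp (Submodule.subtype _)

lemma evalMap_apply (S : Finset (Fin 2 → F)) (n : ℕ) (p : V F n) (s : S) :
    evalMap S n p s = eval (s : Fin 2 → F) (p : MvPolynomial (Fin 2) F) := by
  show aeval (R := F) (s : Fin 2 → F) (p : MvPolynomial (Fin 2) F) = _
  rw [aeval_def, show algebraMap F F = RingHom.id F from rfl, eval₂_id]

end Maps

set_option maxHeartbeats 1000000
set_option synthInstance.maxHeartbeats 200000





-- Lagrange pieces
open scoped Classical in
noncomputable def lag (s t : Fin 2 → F) : MvPolynomial (Fin 2) F :=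
  if h : ∃ i, s i ≠ t i then C ((s h.choose - t h.choose)⁻¹) * (X h.choose - C (t h.choose)) else 1

open scoped Classical in
lemma lag_totalDegree (s t : Fin 2 → F) : (lag s t).totalDegree ≤ 1 := by
  rw [lag]
  split
  · refine le_trans (totalDegree_mul _ _) ?_
    rw [totalDegree_C, zero_add, sub_eq_add_neg]
    refine le_trans (totalDegree_add _ _) ?_
    simp [totalDegree_X]
  · simp

lemma lag_eval_self {s t : Fin 2 → F} (h : s ≠ t) : eval s (lag s t) = 1 := by
  have h' : ∃ i, s i ≠ t i := Function.ne_iff.mp h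
  classical
  rw [lag, dif_pos h']
  have hne : s h'.choose - t h'.choose ≠ 0 := sub_ne_zero.mpr h'.choose_spec
  simp [inv_mul_cancel₀ hne]

lemma lag_eval_other {s t : Fin 2 → F} (h : s ≠ t) : eval t (lag s t) = 0 := by
  have h' : ∃ i, s i ≠ t i := Function.ne_iff.mp h
  classical
  rw [lag, dif_pos h']
  simp

open scoped Classical in
lemma exists_interp (S : Finset (Fin 2 → F)) (s : Fin 2 → F) (hs : s ∈ S) :
    ∃ Q : MvPolynomial (Fin 2) F, Q.totalDegree ≤ S.card ∧ eval s Q = 1 ∧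
      ∀ t ∈ S, t ≠ s → eval t Q = 0 := by
  refine ⟨∏ t ∈ S.erase s, lag s t, ?_, ?_, ?_⟩
  · refine le_trans (totalDegree_finset_prod _ _) ?_
    calc ∑ t ∈ S.erase s, (lag s t).totalDegree ≤ ∑ _t ∈ S.erase s, 1 :=
          Finset.sum_le_sum fun t _ => lag_totalDegree s t
      _ ≤ S.card := by rw [Finset.sum_const, smul_eq_mul, mul_one]
                       exact le_trans (Finset.card_erase_le) le_rfl
  · rw [map_prod]
    exact Finset.prod_eq_one fun t ht => lag_eval_self (Finset.ne_of_mem_erase ht).symm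
  · intro t ht hts
    rw [map_prod]
    exact Finset.prod_eq_zero (Finset.mem_erase.mpr ⟨hts, ht⟩) (lag_eval_other hts.symm)



lemma key (P₁ P₂ : MvPolynomial (Fin 2) F) (hP₁ : P₁ ≠ 0) (hP₂ : P₂ ≠ 0)
    (hrel : IsRelPrime P₁ P₂)
    (S : Finset (Fin 2 → F)) (hS : ∀ s ∈ S, eval s P₁ = 0 ∧ eval s P₂ = 0) :
    S.card ≤ P₁.totalDegree * P₂.totalDegree := by
  classical
  obtain ⟨d₁, hd₁⟩ : ∃ d, P₁.totalDegree = d := ⟨_, rfl⟩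
  obtain ⟨d₂, hd₂⟩ : ∃ d, P₂.totalDegree = d := ⟨_, rfl⟩
  rw [hd₁, hd₂]
  obtain ⟨m, hm⟩ : ∃ m, S.card = m := ⟨_, rfl⟩
  rw [hm]
  have h1 : P₁.totalDegree + (d₂ + m) ≤ d₁ + d₂ + m := by omega
  have h2 : P₂.totalDegree + (d₁ + m) ≤ d₁ + d₂ + m := by omega
  have h3 : P₂.totalDegree + m ≤ d₂ + m := by omega
  have h4 : P₁.totalDegree + m ≤ d₁ + m := by omega
  set n := d₁ + d₂ + m with hn
  let φ : (V F (d₂ + m) × V F (d₁ + m)) →ₗ[F] V F n :=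
    ((mulMap F P₁ h1).comp (LinearMap.fst F _ _)) + ((mulMap F P₂ h2).comp (LinearMap.snd F _ _))
  have φ_apply : ∀ AB : V F (d₂ + m) × V F (d₁ + m),
      (φ AB : MvPolynomial (Fin 2) F) = P₁ * (AB.1 : MvPolynomial (Fin 2) F)
        + P₂ * (AB.2 : MvPolynomial (Fin 2) F) := fun _ => rfl
  let ψ : V F m →ₗ[F] V F (d₂ + m) × V F (d₁ + m) :=
    LinearMap.prod (mulMap F P₂ h3) (-(mulMap F P₁ h4))
  have ψ_apply1 : ∀ C : V F m, ((ψ C).1 : MvPolynomial (Fin 2) F) = P₂ * C := fun _ => rfl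
  have ψ_apply2 : ∀ C : V F m, ((ψ C).2 : MvPolynomial (Fin 2) F) = -(P₁ * C) := fun _ => rfl
  have hψker : ∀ C : V F m, ψ C ∈ LinearMap.ker φ := by
    intro C
    rw [LinearMap.mem_ker]
    apply Subtype.ext
    rw [φ_apply, ψ_apply1, ψ_apply2]
    show _ = (0 : MvPolynomial (Fin 2) F)
    ring
  have hψinj : Function.Injective ψ := by
    intro C₁ C₂ hC
    have : P₂ * (C₁ : MvPolynomial (Fin 2) F) = P₂ * (C₂ : MvPolynomial (Fin 2) F) := by
      rw [← ψ_apply1, ← ψ_apply1, hC]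
    exact Subtype.ext (mul_left_cancel₀ hP₂ this)
  have hψsurj : ∀ AB : V F (d₂ + m) × V F (d₁ + m), AB ∈ LinearMap.ker φ →
      ∃ C : V F m, ψ C = AB := by
    rintro ⟨⟨A, hA⟩, ⟨B, hB⟩⟩ hzero
    rw [LinearMap.mem_ker] at hzero
    have hz : P₁ * A + P₂ * B = 0 := by
      have := congrArg (Subtype.val) hzero
      rw [φ_apply] at this
      exact this
    have hdvd : P₂ ∣ A := by
      have hd : P₂ ∣ P₁ * A := ⟨-B, by linear_combination hz⟩
      exact (hrel.symm).dvd_of_dvd_mul_left hd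
    obtain ⟨C, rfl⟩ := hdvd
    have hCdeg : C.totalDegree ≤ m := by
      rcases eq_or_ne C 0 with rfl | hC0
      · simp
      · have hprod := totalDegree_mul_eq hP₂ hC0
        have hA' := (mem_restrictTotalDegree (Fin 2) _ _).mp hA
        omega
    have hBeq : B = -(P₁ * C) := by
      have hzz : P₂ * (B + P₁ * C) = 0 := by ring_nf; linear_combination hz
      rcases mul_eq_zero.mp hzz with h | h
      · exact absurd h hP₂
      · linear_combination h
    refine ⟨⟨C, (mem_restrictTotalDegree (Fin 2) _ _).mpr hCdeg⟩, ?_⟩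
    refine Prod.ext (Subtype.ext ?_) (Subtype.ext ?_)
    · rw [ψ_apply1]
    · rw [ψ_apply2]; exact hBeq.symm
  -- rank of ker φ
  have hkerφ : Module.finrank F (LinearMap.ker φ) = (Tri m).card := by
    let ψ' := ψ.codRestrict (LinearMap.ker φ) hψker
    have hinj' : Function.Injective ψ' := by
      intro a b hab
      exact hψinj (congrArg Subtype.val hab)
    have hsurj' : Function.Surjective ψ' := by
      rintro ⟨AB, hAB⟩
      obtain ⟨C, hC⟩ := hψsurj AB hAB
      exact ⟨C, Subtype.ext hC⟩
    rw [← (LinearEquiv.ofBijective ψ' ⟨hinj', hsurj'⟩).finrank_eq, finrank_V]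
  have rank1 : Module.finrank F (LinearMap.range φ) + (Tri m).card
      = (Tri (d₂ + m)).card + (Tri (d₁ + m)).card := by
    have hrn := LinearMap.finrank_range_add_finrank_ker φ
    rw [hkerφ, Module.finrank_prod, finrank_V, finrank_V] at hrn
    exact hrn
  -- evaluation map
  let ev : V F n →ₗ[F] (S → F) := evalMap S n
  have hmem_range : ∀ g : S → F, g ∈ LinearMap.range ev := by
    intro g
    have hg : g = ∑ s : S, g s • (fun t => if s = t then (1:F) else 0) := pi_eq_sum_univ g
    rw [hg]
    apply Submodule.sum_mem
    intro s _
    apply Submodule.smul_mem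
    obtain ⟨Q, hQdeg, hQ1, hQ0⟩ := exists_interp S s s.2
    refine ⟨⟨Q, (mem_restrictTotalDegree (Fin 2) _ _).mpr (le_trans hQdeg (by omega))⟩, ?_⟩
    funext t
    rw [evalMap_apply]
    by_cases hts : s = t
    · subst hts
      simpa using hQ1
    · rw [if_neg hts]
      exact hQ0 t t.2 (fun h => hts (Subtype.ext h.symm))
  have hsurj_ev : Function.Surjective ev := fun g => hmem_range g
  have hrange_ker : LinearMap.range φ ≤ LinearMap.ker ev := by
    rintro x ⟨AB, rfl⟩
    rw [LinearMap.mem_ker]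
    funext t
    rw [evalMap_apply, φ_apply, map_add, map_mul, map_mul,
      (hS t t.2).1, (hS t t.2).2, zero_mul, zero_mul, add_zero]
    rfl
  have rank2 : m + Module.finrank F (LinearMap.ker ev) = (Tri n).card := by
    have hrn := LinearMap.finrank_range_add_finrank_ker ev
    rw [LinearMap.range_eq_top.mpr hsurj_ev, finrank_top, Module.finrank_fintype_fun_eq_card,
      Fintype.card_coe, hm, finrank_V] at hrn
    exact hrn
  have hle : Module.finrank F (LinearMap.range φ) ≤ Module.finrank F (LinearMap.ker ev) :=
    Submodule.finrank_mono hrange_ker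
  -- arithmetic
  have T1 := Tri_card n
  have T2 := Tri_card m
  have T3 := Tri_card (d₂ + m)
  have T4 := Tri_card (d₁ + m)
  have hid : (n + 1) * (n + 2) + (m + 1) * (m + 2)
      = (d₂ + m + 1) * (d₂ + m + 2) + (d₁ + m + 1) * (d₁ + m + 2) + 2 * (d₁ * d₂) := by
    rw [hn]; ring
  linarith [T1, T2, T3, T4, rank1, rank2, hle, hid]


lemma eq_C_of_totalDegree_eq_zero {p : MvPolynomial (Fin 2) F} (h : p.totalDegree = 0) :
    p = C (coeff 0 p) := by
  ext d
  rcases eq_or_ne d 0 with rfl | hd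
  · simp
  · rw [coeff_C, if_neg (Ne.symm hd)]
    by_contra hc
    have hmem : d ∈ p.support := mem_support_iff.mpr hc
    have hz := (totalDegree_eq_zero_iff (Fin 2) p).mp h d hmem
    exact hd (Finsupp.ext fun i => hz i)

end BezoutProof

open MvPolynomial BezoutProof in
/-- **Bezout's theorem** (Theorem 4.1). -/
theorem bezout (F : Type*) [Field F] (d₁ d₂ : ℕ)
    (P₁ P₂ : MvPolynomial (Fin 2) F)
    (h₁ : P₁.totalDegree = d₁) (h₂ : P₂.totalDegree = d₂)
    (hcoprime : ¬∃ Q : MvPolynomial (Fin 2) F, 0 < Q.totalDegree ∧ Q ∣ P₁ ∧ Q ∣ P₂) :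
    {x : Fin 2 → F | MvPolynomial.eval x P₁ = 0 ∧ MvPolynomial.eval x P₂ = 0}.Finite ∧
      {x : Fin 2 → F | MvPolynomial.eval x P₁ = 0 ∧
        MvPolynomial.eval x P₂ = 0}.ncard ≤ d₁ * d₂ := by
  classical
  -- helper for the degenerate cases
  have hdeg0 : ∀ P : MvPolynomial (Fin 2) F, P ≠ 0 → P.totalDegree = 0 →
      ∀ x : Fin 2 → F, eval x P ≠ 0 := by
    intro P hP h0 x
    rw [eq_C_of_totalDegree_eq_zero h0, eval_C]
    intro hc
    exact hP (by rw [eq_C_of_totalDegree_eq_zero h0, hc, map_zero])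
  by_cases hP₁ : P₁ = 0
  · subst hP₁
    have h0 : P₂ ≠ 0 := by
      rintro rfl
      exact hcoprime ⟨X 0, by rw [totalDegree_X]; omega, dvd_zero _, dvd_zero _⟩
    have hdeg : P₂.totalDegree = 0 := by
      by_contra h
      exact hcoprime ⟨P₂, Nat.pos_of_ne_zero h, dvd_zero _, dvd_rfl⟩
    have hempty : {x : Fin 2 → F | eval x (0 : MvPolynomial (Fin 2) F) = 0 ∧ eval x P₂ = 0}
        = ∅ := by
      ext x
      simp only [Set.mem_setOf_eq, Set.mem_empty_iff_false, iff_false, not_and]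
      exact fun _ => hdeg0 P₂ h0 hdeg x
    rw [hempty]
    simp
  by_cases hP₂ : P₂ = 0
  · subst hP₂
    have hdeg : P₁.totalDegree = 0 := by
      by_contra h
      exact hcoprime ⟨P₁, Nat.pos_of_ne_zero h, dvd_rfl, dvd_zero _⟩
    have hempty : {x : Fin 2 → F | eval x P₁ = 0 ∧ eval x (0 : MvPolynomial (Fin 2) F) = 0}
        = ∅ := by
      ext x
      simp only [Set.mem_setOf_eq, Set.mem_empty_iff_false, iff_false, not_and]
      intro hx
      exact absurd hx (hdeg0 P₁ hP₁ hdeg x)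
    rw [hempty]
    simp
  -- main case
  have hrel : IsRelPrime P₁ P₂ := by
    intro Q hQ1 hQ2
    by_contra hu
    apply hcoprime
    refine ⟨Q, ?_, hQ1, hQ2⟩
    rcases Nat.eq_zero_or_pos Q.totalDegree with h0 | h
    · exfalso
      apply hu
      have hQ0 : Q ≠ 0 := by
        rintro rfl
        exact hP₁ (zero_dvd_iff.mp hQ1)
      have hc : coeff 0 Q ≠ 0 := by
        intro hc
        exact hQ0 (by rw [eq_C_of_totalDegree_eq_zero h0, hc, map_zero])
      rw [eq_C_of_totalDegree_eq_zero h0]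
      exact IsUnit.map (C : F →+* MvPolynomial (Fin 2) F) (isUnit_iff_ne_zero.mpr hc)
    · exact h
  set Z := {x : Fin 2 → F | eval x P₁ = 0 ∧ eval x P₂ = 0} with hZ
  have hbound : ∀ T : Finset (Fin 2 → F), ↑T ⊆ Z → T.card ≤ d₁ * d₂ := by
    intro T hT
    rw [← h₁, ← h₂]
    exact key P₁ P₂ hP₁ hP₂ hrel T (fun s hs => hT hs)
  have hfin : Z.Finite := by
    by_contra hinf
    obtain ⟨T, hT, hcard⟩ := Set.Infinite.exists_subset_card_eq hinf (d₁ * d₂ + 1)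
    have := hbound T hT
    omega
  refine ⟨hfin, ?_⟩
  rw [Set.ncard_eq_toFinset_card _ hfin]
  exact hbound _ (by simp)
end

section
/- Let F be a field, let d₁,…,dₙ ≥ 0 be integers, and let P ∈ F[x₁,…,xₙ] be a polynomial of total degree at most d₁ + ⋯ + dₙ whose coefficient of the monomial x₁^{d₁}⋯xₙ^{dₙ} is non-zero. Then for any sets E₁,…,Eₙ ⊆ F with |Eᵢ| > dᵢ for each i = 1,…,n, there exists a point (x₁,…,xₙ) ∈ E₁ × ⋯ × Eₙ with P(x₁,…,xₙ) ≠ 0. -/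
open MvPolynomial Finsupp

private lemma sum_support_eq {n : ℕ} (m : Fin n →₀ ℕ) :
    (∑ j ∈ m.support, m j) = m.sum fun _ e => e := rfl

private noncomputable def subF {F : Type*} [Field F] {n : ℕ} (i : Fin n) (e : F) :
    Fin n → MvPolynomial (Fin n) F :=
  fun j => if j = i then C e else X j

private lemma dvd_sub_aeval {F : Type*} [Field F] {n : ℕ} (i : Fin n) (e : F)
    (p : MvPolynomial (Fin n) F) :
    (X i - C e) ∣ (p - aeval (subF i e) p) := by
  induction p using MvPolynomial.induction_on with
  | C a => simp [aeval_C]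
  | add p q hp hq =>
    have h : p + q - aeval (subF i e) (p + q)
        = (p - aeval (subF i e) p) + (q - aeval (subF i e) q) := by
      rw [map_add]; ring
    rw [h]; exact dvd_add hp hq
  | mul_X p j hp =>
    have h : p * X j - aeval (subF i e) (p * X j)
        = (p - aeval (subF i e) p) * X j
          + aeval (subF i e) p * (X j - subF i e j) := by
      rw [map_mul, aeval_X]; ring
    rw [h]
    refine dvd_add (hp.mul_right _) ?_
    by_cases hji : j = i
    · subst hji; simp only [subF, if_pos rfl]; exact dvd_rfl.mul_left _
    · simp [subF, hji]

private lemma degreeOf_aeval_subF {F : Type*} [Field F] {n : ℕ} (i : Fin n) (e : F)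
    (p : MvPolynomial (Fin n) F) :
    degreeOf i (aeval (subF i e) p) = 0 := by
  rw [← Nat.le_zero]
  induction p using MvPolynomial.induction_on with
  | C a => simp [aeval_C, degreeOf_C]
  | add p q hp hq =>
    rw [map_add]
    exact (degreeOf_add_le _ _ _).trans (max_le hp hq)
  | mul_X p j hp =>
    rw [map_mul, aeval_X]
    refine (degreeOf_mul_le _ _ _).trans ?_
    have hj : degreeOf i (subF i e j) = 0 := by
      by_cases hji : j = i
      · subst hji; simp [subF, degreeOf_C]
      · simp [subF, hji, degreeOf_X, Ne.symm hji]
    omega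

private lemma totalDegree_aeval_subF {F : Type*} [Field F] {n : ℕ} (i : Fin n) (e : F)
    (p : MvPolynomial (Fin n) F) :
    totalDegree (aeval (subF i e) p) ≤ totalDegree p := by
  conv_lhs => rw [p.as_sum]
  rw [map_sum]
  refine (totalDegree_finset_sum _ _).trans (Finset.sup_le fun m hm => ?_)
  rw [aeval_monomial]
  refine (totalDegree_mul _ _).trans ?_
  have h1 : totalDegree (algebraMap F (MvPolynomial (Fin n) F) (coeff m p)) = 0 := by
    rw [MvPolynomial.algebraMap_eq]; exact totalDegree_C _
  rw [h1, zero_add]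
  refine le_trans ?_ (le_totalDegree hm)
  rw [Finsupp.prod]
  refine (totalDegree_finset_prod _ _).trans ?_
  rw [Finsupp.sum]
  refine Finset.sum_le_sum fun j _ => ?_
  refine (totalDegree_pow _ _).trans ?_
  have hj : totalDegree (subF i e j) ≤ 1 := by
    by_cases hji : j = i
    · subst hji; simp [subF, totalDegree_C]
    · simp [subF, hji, totalDegree_X]
  calc m j * totalDegree (subF i e j) ≤ m j * 1 := Nat.mul_le_mul_left _ hj
    _ = m j := mul_one _

private lemma sum_symm_equivFun {n : ℕ} (d : Fin n → ℕ) :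
    (Finsupp.equivFunOnFinite.symm d).sum (fun _ e => e) = ∑ j, d j := by
  rw [Finsupp.sum_fintype _ _ (fun _ => rfl)]
  rfl

private lemma totalDegree_of_mul_X_sub_C {F : Type*} [Field F] {n : ℕ} {i : Fin n} {e : F}
    {Q : MvPolynomial (Fin n) F} {k : ℕ}
    (hS : totalDegree ((X i - C e) * Q) ≤ k + 1) : totalDegree Q ≤ k := by
  have step : ∀ m : Fin n →₀ ℕ, k < m.sum (fun _ e => e) →
      coeff m Q = e * coeff (m + Finsupp.single i 1) Q := by
    intro m hm
    have hsum : k + 1 < (m + Finsupp.single i 1).sum (fun _ e => e) := by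
      rw [Finsupp.sum_add_index' (fun _ => rfl) (fun _ _ _ => rfl),
        Finsupp.sum_single_index rfl]
      omega
    have h0 : coeff (m + Finsupp.single i 1) ((X i - C e) * Q) = 0 := by
      refine coeff_eq_zero_of_totalDegree_lt ?_
      rw [sum_support_eq]
      exact lt_of_le_of_lt hS hsum
    have h2 : coeff (m + Finsupp.single i 1) (X i * Q) = coeff m Q := by
      rw [add_comm m]; exact coeff_X_mul m i Q
    rw [sub_mul, coeff_sub, coeff_C_mul, h2, sub_eq_zero] at h0
    exact h0
  have iter : ∀ (t : ℕ) (m : Fin n →₀ ℕ), k < m.sum (fun _ e => e) →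
      coeff m Q = e ^ t * coeff (m + Finsupp.single i t) Q := by
    intro t
    induction t with
    | zero => intro m _; simp
    | succ t ih =>
      intro m hm
      have h1 := ih m hm
      have hm' : k < (m + Finsupp.single i t).sum (fun _ e => e) := by
        rw [Finsupp.sum_add_index' (fun _ => rfl) (fun _ _ _ => rfl)]
        omega
      rw [step _ hm'] at h1
      rw [h1, add_assoc, ← Finsupp.single_add, pow_succ]
      ring_nf
  have hz : ∀ m : Fin n →₀ ℕ, k < m.sum (fun _ e => e) → coeff m Q = 0 := by
    intro m hm
    rw [iter (Q.totalDegree + 1) m hm]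
    have : coeff (m + Finsupp.single i (Q.totalDegree + 1)) Q = 0 := by
      refine coeff_eq_zero_of_totalDegree_lt ?_
      rw [sum_support_eq, Finsupp.sum_add_index' (fun _ => rfl) (fun _ _ _ => rfl),
        Finsupp.sum_single_index rfl]
      omega
    rw [this, mul_zero]
  refine Finset.sup_le fun m hm => ?_
  by_contra hk
  exact (MvPolynomial.mem_support_iff.mp hm) (hz m (by omega))

private lemma eval_aeval_subF {F : Type*} [Field F] {n : ℕ} (i : Fin n) (e : F)
    (x : Fin n → F) (p : MvPolynomial (Fin n) F) :
    eval x (aeval (subF i e) p) = eval (Function.update x i e) p := by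
  have hx : ∀ (y : Fin n → F) (q : MvPolynomial (Fin n) F), aeval y q = eval y q := by
    intro y q
    rw [← coe_aeval_eq_eval]; rfl
  have hf : (fun j => aeval x (subF i e j)) = Function.update x i e := by
    funext j
    rw [Function.update_apply]
    by_cases hji : j = i
    · subst hji; simp [subF, hx]
    · simp [subF, hji, hx]
  rw [← hx x, comp_aeval_apply, hf, hx]

private lemma cn_key {F : Type*} [Field F] {n : ℕ} :
    ∀ (N : ℕ) (d : Fin n → ℕ) (P : MvPolynomial (Fin n) F) (E : Fin n → Finset F),
    (∑ i, d i) = N → P.totalDegree ≤ N → (∀ i, d i < (E i).card) →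
    (∀ x : Fin n → F, (∀ i, x i ∈ E i) → MvPolynomial.eval x P = 0) →
    P.coeff (Finsupp.equivFunOnFinite.symm d) = 0 := by
  intro N
  induction N with
  | zero =>
    intro d P E hsum hdeg hE hvan
    classical
    have hd0 : ∀ i, d i = 0 := by
      intro i
      have := Finset.sum_eq_zero_iff.mp hsum i (Finset.mem_univ i)
      exact this
    have hd : Finsupp.equivFunOnFinite.symm d = 0 := by
      ext j; simp [hd0 j]
    have htd : P.totalDegree = 0 := Nat.le_zero.mp hdeg
    have hP : P = C (P.coeff 0) := by
      ext m
      by_cases hm : m = 0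
      · subst hm; simp [coeff_C]
      · rw [coeff_C, if_neg (Ne.symm hm)]
        by_contra hc
        have hmem : m ∈ P.support := MvPolynomial.mem_support_iff.mpr hc
        have := (totalDegree_eq_zero_iff _ P).mp htd m hmem
        exact hm (Finsupp.ext this)
    have hxE : ∀ i, ∃ a, a ∈ E i := by
      intro i
      have : 0 < (E i).card := lt_of_le_of_lt (Nat.zero_le _) (hE i)
      exact Finset.card_pos.mp this
    choose x hxmem using hxE
    have := hvan x hxmem
    rw [hP] at this ⊢
    rw [eval_C] at this
    rw [hd]
    simpa [coeff_C] using this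
  | succ N ih =>
    intro d P E hsum hdeg hE hvan
    classical
    -- find a variable with positive degree
    have hex : ∃ i, d i ≠ 0 := by
      by_contra hc
      push_neg at hc
      simp only [hc, Finset.sum_const_zero] at hsum
      omega
    obtain ⟨i, hdi⟩ := hex
    have hdi1 : 1 ≤ d i := Nat.one_le_iff_ne_zero.mpr hdi
    have hEcard : 0 < (E i).card := lt_of_le_of_lt (Nat.zero_le _) (hE i)
    obtain ⟨e, he⟩ := Finset.card_pos.mp hEcard
    set R := aeval (subF i e) P with hR
    obtain ⟨Q, hQ⟩ := dvd_sub_aeval i e P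
    have hPRQ : P = R + (X i - C e) * Q := by
      rw [← hQ]; ring
    -- degree bounds
    have hRdeg : R.totalDegree ≤ N + 1 := (totalDegree_aeval_subF i e P).trans hdeg
    have hSdeg : totalDegree ((X i - C e) * Q) ≤ N + 1 := by
      rw [← hQ]
      exact (totalDegree_sub P R).trans (max_le hdeg hRdeg)
    have hQdeg : Q.totalDegree ≤ N := totalDegree_of_mul_X_sub_C hSdeg
    -- new data
    set d' : Fin n → ℕ := Function.update d i (d i - 1) with hd'
    set E' : Fin n → Finset F := Function.update E i ((E i).erase e) with hE'
    have hsum' : ∑ j, d' j = N := by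
      have h1 : ∑ j, d' j = (d i - 1) + ∑ x ∈ Finset.univ.erase i, d x := by
        rw [hd', Finset.sum_update_of_mem (Finset.mem_univ i), ← Finset.erase_eq]
      have h2 : ∑ j, d j = d i + ∑ x ∈ Finset.univ.erase i, d x :=
        (Finset.add_sum_erase _ _ (Finset.mem_univ i)).symm
      omega
    have hE'card : ∀ j, d' j < (E' j).card := by
      intro j
      by_cases hji : j = i
      · subst hji
        rw [hd', hE', Function.update_self, Function.update_self,
          Finset.card_erase_of_mem he]
        have := hE j
        omega
      · rw [hd', hE', Function.update_of_ne hji, Function.update_of_ne hji]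
        exact hE j
    -- the index finsupps
    set D : Fin n →₀ ℕ := Finsupp.equivFunOnFinite.symm d with hD
    set D' : Fin n →₀ ℕ := Finsupp.equivFunOnFinite.symm d' with hD'
    have hDD' : D = D' + Finsupp.single i 1 := by
      ext j
      by_cases hji : j = i
      · subst hji
        simp only [hD, hD', Finsupp.add_apply, Finsupp.single_eq_same,
          Finsupp.coe_equivFunOnFinite_symm, hd', Function.update_self]
        omega
      · simp [hD, hD', hd', Finsupp.single_eq_of_ne' (fun h => hji h.symm),
          Function.update_of_ne hji]
    -- coefficient relation
    have hDsum : D.sum (fun _ e => e) = N + 1 := by rw [hD, sum_symm_equivFun, hsum]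
    have hcoeffR : coeff D R = 0 := by
      have hdeg0 : degreeOf i R < 1 := by
        rw [degreeOf_aeval_subF i e P]; omega
      by_contra hc
      have hmem : D ∈ R.support := MvPolynomial.mem_support_iff.mpr hc
      have := (degreeOf_lt_iff Nat.one_pos).mp hdeg0 D hmem
      have hDi : D i = d i := rfl
      omega
    have hcoeffQD : coeff D Q = 0 := by
      refine coeff_eq_zero_of_totalDegree_lt ?_
      rw [sum_support_eq, hDsum]; omega
    have hcoeffP : coeff D P = coeff D' Q := by
      rw [hPRQ, coeff_add, hcoeffR, zero_add, sub_mul, coeff_sub, coeff_C_mul,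
        hcoeffQD, mul_zero, sub_zero, hDD', add_comm D', coeff_X_mul]
    -- vanishing of Q on the new grid
    have hvan' : ∀ x : Fin n → F, (∀ j, x j ∈ E' j) → MvPolynomial.eval x Q = 0 := by
      intro x hx
      have hxi : x i ∈ (E i).erase e := by
        have := hx i; rwa [hE', Function.update_self] at this
      have hxine : x i ≠ e := Finset.ne_of_mem_erase hxi
      have hxiE : x i ∈ E i := Finset.mem_of_mem_erase hxi
      have hxE : ∀ j, x j ∈ E j := by
        intro j
        by_cases hji : j = i
        · subst hji; exact hxiE
        · have := hx j; rwa [hE', Function.update_of_ne hji] at this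
      have hP0 : MvPolynomial.eval x P = 0 := hvan x hxE
      have hR0 : MvPolynomial.eval x R = 0 := by
        rw [hR, eval_aeval_subF]
        refine hvan _ fun j => ?_
        rw [Function.update_apply]
        by_cases hji : j = i
        · simp [hji, he]
        · simp [hji, hxE j]
      have hfactor : (x i - e) * MvPolynomial.eval x Q = 0 := by
        have : MvPolynomial.eval x ((X i - C e) * Q) = 0 := by
          rw [← hQ, map_sub, hP0, hR0, sub_zero]
        simpa using this
      rcases mul_eq_zero.mp hfactor with h | h
      · exact absurd (sub_eq_zero.mp h) hxine
      · exact h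
    have := ih d' Q E' hsum' hQdeg hE'card hvan'
    rw [hcoeffP]
    exact this

/-- **Combinatorial nullstellensatz** (Theorem 5.2, Alon). -/
theorem combinatorial_nullstellensatz (F : Type*) [Field F] (n : ℕ)
    (d : Fin n → ℕ) (P : MvPolynomial (Fin n) F)
    (hdeg : P.totalDegree ≤ ∑ i, d i)
    (hcoeff : P.coeff (Finsupp.equivFunOnFinite.symm d) ≠ 0)
    (E : Fin n → Finset F) (hE : ∀ i, d i < (E i).card) :
    ∃ x : Fin n → F, (∀ i, x i ∈ E i) ∧ MvPolynomial.eval x P ≠ 0 := by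
  by_contra hc
  push_neg at hc
  exact hcoeff (cn_key (∑ i, d i) d P E rfl hdeg hE fun x hx => hc x hx)
end

section
/- Let p be a prime, let F = ℤ/pℤ, and let A, B ⊆ F be non-empty finite sets with |A| ≠ |B|. Then the restricted sumset {a + b : a ∈ A, b ∈ B, a ≠ b} has cardinality at least min(|A| + |B| − 2, p). -/
section LagPart
open Polynomial Lagrange Finset

lemma lag_sum {F : Type*} [Field F] [DecidableEq F] (A : Finset F) {i : ℕ} (hi : i < A.card) :
    ∑ a ∈ A, (∏ b ∈ A.erase a, (a - b)⁻¹) * a ^ i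
      = if i = A.card - 1 then 1 else 0 := by
  have hinj : Set.InjOn (id : F → F) A := fun x _ y _ h => h
  have hdeg : (X ^ i : F[X]).degree < A.card := by
    rw [degree_X_pow]; exact_mod_cast hi
  have hint : interpolate A id (fun a => (a:F) ^ i) = X ^ i := by
    have := eq_interpolate (f := (X ^ i : F[X])) hinj hdeg
    conv_rhs => rw [this]
    apply interpolate_eq_of_values_eq_on
    intro a _; simp
  have := congrArg (fun q : F[X] => q.coeff (A.card - 1)) hint
  simp only [interpolate_apply] at this
  rw [finset_sum_coeff] at this
  have hcoeff : ∀ a ∈ A, (C ((a:F) ^ i) * Lagrange.basis A id a).coeff (A.card - 1)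
      = (∏ b ∈ A.erase a, (a - b)⁻¹) * a ^ i := by
    intro a ha
    rw [coeff_C_mul]
    have hb : (Lagrange.basis A id a).coeff (A.card - 1) = ∏ b ∈ A.erase a, (a - b)⁻¹ := by
      have hnd := natDegree_basis hinj ha
      have : (Lagrange.basis A id a).coeff (A.card - 1) = (Lagrange.basis A id a).leadingCoeff := by
        rw [Polynomial.leadingCoeff, hnd]
      rw [this]
      unfold Lagrange.basis
      rw [leadingCoeff_prod]
      refine Finset.prod_congr rfl fun b hb => ?_
      unfold basisDivisor
      rw [leadingCoeff_mul, leadingCoeff_C, leadingCoeff_X_sub_C, mul_one]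
      rfl
    rw [hb, mul_comm]
  rw [Finset.sum_congr rfl hcoeff] at this
  rw [this, coeff_X_pow]
  congr 1
  simp only [eq_iff_iff]
  omega

end LagPart

section NatPart
open Nat

lemma choose_sub_ne_zero {p k l : ℕ} (hp : p.Prime) (hk : 2 ≤ k) (hl : 2 ≤ l)
    (hkp : k ≤ p) (hlp : l ≤ p) (hne : k ≠ l) (hle : k + l - 2 ≤ p) :
    ((Nat.choose (k+l-3) (k-2) : ZMod p) - (Nat.choose (k+l-3) (k-1) : ZMod p)) ≠ 0 := by
  set n := k + l - 3 with hn
  intro h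
  rw [sub_eq_zero] at h
  have e1 := Nat.choose_mul_factorial_mul_factorial (show k-2 ≤ n by omega)
  rw [show n - (k-2) = l - 1 by omega] at e1
  have e3 := Nat.choose_mul_factorial_mul_factorial (show k-1 ≤ n by omega)
  rw [show n - (k-1) = l - 2 by omega] at e3
  have N1 : (k-1)! * (l-1)! * Nat.choose n (k-2) = (k-1) * n ! := by
    have e2 : (k-1)! = (k-1) * (k-2)! := by
      rw [show k-1 = (k-2)+1 by omega, Nat.factorial_succ]
    calc (k-1)! * (l-1)! * Nat.choose n (k-2)
        = (k-1) * (Nat.choose n (k-2) * (k-2)! * (l-1)!) := by rw [e2]; ring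
      _ = (k-1) * n ! := by rw [e1]
  have N2 : (k-1)! * (l-1)! * Nat.choose n (k-1) = (l-1) * n ! := by
    have e4 : (l-1)! = (l-1) * (l-2)! := by
      rw [show l-1 = (l-2)+1 by omega, Nat.factorial_succ]
    calc (k-1)! * (l-1)! * Nat.choose n (k-1)
        = (l-1) * (Nat.choose n (k-1) * (k-1)! * (l-2)!) := by rw [e4]; ring
      _ = (l-1) * n ! := by rw [e3]
  have hcast : (((k-1) * n ! : ℕ) : ZMod p) = (((l-1) * n ! : ℕ) : ZMod p) := by
    rw [← N1, ← N2]
    push_cast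
    rw [h]
  have hmod : (k-1) * n ! ≡ (l-1) * n ! [MOD p] := (ZMod.natCast_eq_natCast_iff _ _ _).mp hcast
  have hcop : Nat.Coprime (n !) p := by
    rw [Nat.coprime_comm]
    rw [Nat.Prime.coprime_iff_not_dvd hp]
    rw [Nat.Prime.dvd_factorial hp]
    omega
  have hmod2 : (k-1) ≡ (l-1) [MOD p] := hmod.cancel_right_of_coprime (by rw [Nat.coprime_comm] at hcop; simpa [Nat.Coprime] using hcop)
  have : (k-1) % p = (l-1) % p := hmod2
  rw [Nat.mod_eq_of_lt (by omega), Nat.mod_eq_of_lt (by omega)] at this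
  omega

end NatPart

section MvPart
open MvPolynomial Finset

-- coefficient target
noncomputable def dstar (k l : ℕ) : Fin 2 →₀ ℕ := Finsupp.single 0 (k-1) + Finsupp.single 1 (l-1)

lemma single_add_single_eq {a b c d : ℕ} :
    (Finsupp.single (0 : Fin 2) a + Finsupp.single 1 b = Finsupp.single 0 c + Finsupp.single 1 d)
      ↔ a = c ∧ b = d := by
  constructor
  · intro h
    have h0 := DFunLike.congr_fun h 0
    have h1 := DFunLike.congr_fun h 1
    simp [Finsupp.single_apply, show (1:Fin 2) ≠ 0 by decide] at h0 h1
    exact ⟨h0, h1⟩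
  · rintro ⟨rfl, rfl⟩; rfl

lemma coeff_X0_pow_X1_pow {F : Type*} [CommRing F] (a b c d : ℕ) :
    MvPolynomial.coeff (Finsupp.single 0 c + Finsupp.single 1 d)
      ((X 0 : MvPolynomial (Fin 2) F) ^ a * X 1 ^ b) = if a = c ∧ b = d then 1 else 0 := by
  rw [X_pow_eq_monomial, X_pow_eq_monomial, monomial_mul, mul_one, coeff_monomial]
  congr 1
  simp only [eq_iff_iff]
  exact single_add_single_eq

lemma coeff_g {F : Type*} [CommRing F] (k l : ℕ) (hk : 2 ≤ k) (hl : 2 ≤ l) :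
    MvPolynomial.coeff (dstar k l)
      (((X 0 : MvPolynomial (Fin 2) F) - X 1) * (X 0 + X 1) ^ (k + l - 3))
      = (Nat.choose (k+l-3) (k-2) : F) - (Nat.choose (k+l-3) (k-1) : F) := by
  set n := k + l - 3 with hn
  rw [add_pow, Finset.mul_sum]
  rw [MvPolynomial.coeff_sum]
  have hterm : ∀ m ∈ Finset.range (n+1),
      MvPolynomial.coeff (dstar k l)
        (((X 0 : MvPolynomial (Fin 2) F) - X 1) * (X 0 ^ m * X 1 ^ (n - m) * (n.choose m : MvPolynomial (Fin 2) F)))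
      = (n.choose m : F) * ((if m = k-2 then 1 else 0) - (if m = k-1 then 1 else 0)) := by
    intro m hm
    rw [Finset.mem_range] at hm
    have hc : ((n.choose m : ℕ) : MvPolynomial (Fin 2) F) = C ((n.choose m : ℕ) : F) := by
      simp
    have hrw : ((X 0 : MvPolynomial (Fin 2) F) - X 1) * (X 0 ^ m * X 1 ^ (n - m) * (n.choose m : MvPolynomial (Fin 2) F))
        = C ((n.choose m : ℕ) : F) * (X 0 ^ (m+1) * X 1 ^ (n - m)) - C ((n.choose m : ℕ) : F) * (X 0 ^ m * X 1 ^ (n - m + 1)) := by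
      rw [hc]; ring
    rw [hrw, MvPolynomial.coeff_sub, MvPolynomial.coeff_C_mul, MvPolynomial.coeff_C_mul]
    unfold dstar
    rw [coeff_X0_pow_X1_pow, coeff_X0_pow_X1_pow]
    simp only [show (m+1 = k-1 ∧ n-m = l-1) ↔ (m = k-2) by omega,
        show (m = k-1 ∧ n-m+1 = l-1) ↔ (m = k-1) by omega]
    ring
  rw [Finset.sum_congr rfl hterm]
  simp only [mul_sub]
  rw [Finset.sum_sub_distrib]
  simp only [mul_ite, mul_one, mul_zero]
  rw [Finset.sum_ite_eq' (Finset.range (n+1)), Finset.sum_ite_eq' (Finset.range (n+1))]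
  rw [if_pos, if_pos] <;> rw [Finset.mem_range] <;> omega

lemma prod_sub_pow_totalDegree {F : Type*} [CommRing F] [Nontrivial F] (s : Finset F) :
    MvPolynomial.totalDegree
      ((∏ c ∈ s, ((X 0 : MvPolynomial (Fin 2) F) + X 1 - C c)) - (X 0 + X 1) ^ s.card)
      ≤ s.card - 1 := by
  classical
  induction s using Finset.induction with
  | empty => simp
  | insert c s hc ih =>
    rw [Finset.prod_insert hc, Finset.card_insert_of_notMem hc]
    have hrw : (X 0 + X 1 - C c) * (∏ c ∈ s, ((X 0 : MvPolynomial (Fin 2) F) + X 1 - C c))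
        - (X 0 + X 1) ^ (s.card + 1)
        = (X 0 + X 1) * ((∏ c ∈ s, ((X 0 : MvPolynomial (Fin 2) F) + X 1 - C c)) - (X 0 + X 1) ^ s.card)
          - C c * (∏ c ∈ s, ((X 0 : MvPolynomial (Fin 2) F) + X 1 - C c)) := by
      ring
    rw [hrw]
    apply le_trans (totalDegree_sub _ _)
    apply max_le
    · by_cases hz : (∏ c ∈ s, ((X 0 : MvPolynomial (Fin 2) F) + X 1 - C c)) - (X 0 + X 1) ^ s.card = 0
      · rw [hz, mul_zero]; simp
      · have h1 : ((X 0 : MvPolynomial (Fin 2) F) + X 1).totalDegree ≤ 1 := by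
          apply le_trans (totalDegree_add _ _); simp
        rcases Nat.eq_zero_or_pos s.card with h0 | h0
        · exfalso
          apply hz
          have hse : s = ∅ := Finset.card_eq_zero.mp h0
          subst hse
          simp
        · apply le_trans (totalDegree_mul _ _)
          have h2 := ih
          omega
    · apply le_trans (totalDegree_mul _ _)
      have : (∏ c ∈ s, ((X 0 : MvPolynomial (Fin 2) F) + X 1 - C c)).totalDegree ≤ s.card := by
        apply le_trans (totalDegree_finset_prod _ _)
        apply le_trans (Finset.sum_le_card_nsmul _ _ 1 ?_)
        · simp
        · intro c _
          apply le_trans (totalDegree_sub _ _)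
          apply max_le
          · apply le_trans (totalDegree_add _ _); simp
          · simp
      simp only [totalDegree_C, zero_add]
      omega


lemma prod_totalDegree {F : Type*} [CommRing F] [Nontrivial F] (s : Finset F) :
    MvPolynomial.totalDegree (∏ c ∈ s, ((X 0 : MvPolynomial (Fin 2) F) + X 1 - C c)) ≤ s.card := by
  apply le_trans (totalDegree_finset_prod _ _)
  apply le_trans (Finset.sum_le_card_nsmul _ _ 1 ?_)
  · simp
  · intro c _
    apply le_trans (totalDegree_sub _ _)
    apply max_le
    · apply le_trans (totalDegree_add _ _)
      apply max_le <;> exact le_of_eq (totalDegree_X _)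
    · simp

lemma fin2_support_sum (d : Fin 2 →₀ ℕ) : ∑ i ∈ d.support, d i = d 0 + d 1 := by
  rw [Finset.sum_subset (Finset.subset_univ d.support)]
  · exact Fin.sum_univ_two d
  · intro i _ hi
    simpa using hi

lemma dstar_apply0 (k l : ℕ) : dstar k l 0 = k - 1 := by
  simp [dstar, Finsupp.single_apply]

lemma dstar_apply1 (k l : ℕ) : dstar k l 1 = l - 1 := by
  simp [dstar, Finsupp.single_apply]

lemma X01_td {F : Type*} [CommRing F] [Nontrivial F] :
    ((MvPolynomial.X 0 : MvPolynomial (Fin 2) F) - MvPolynomial.X 1).totalDegree ≤ 1 := by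
  apply le_trans (totalDegree_sub _ _)
  apply max_le <;> exact le_of_eq (totalDegree_X _)

lemma key {p : ℕ} (hp : p.Prime) (A B D : Finset (ZMod p))
    (hA : 1 ≤ A.card) (hB : 1 ≤ B.card) (hne : A.card ≠ B.card)
    (hle : A.card + B.card - 2 ≤ p)
    (hD : ∀ a ∈ A, ∀ b ∈ B, a ≠ b → a + b ∈ D) :
    A.card + B.card - 2 ≤ D.card := by
  haveI : Fact p.Prime := ⟨hp⟩
  by_cases hk1 : A.card = 1
  · obtain ⟨a, rfl⟩ := Finset.card_eq_one.mp hk1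
    have hsub : (B.erase a).image (a + ·) ⊆ D := by
      intro x hx
      obtain ⟨b, hb, rfl⟩ := Finset.mem_image.mp hx
      exact hD a (Finset.mem_singleton_self a) b (Finset.mem_of_mem_erase hb)
        (Ne.symm (Finset.ne_of_mem_erase hb))
    have h1 := Finset.card_le_card hsub
    rw [Finset.card_image_of_injective _ (add_right_injective a)] at h1
    have h2 := Finset.pred_card_le_card_erase (s := B) (a := a)
    simp only [Finset.card_singleton]
    omega
  by_cases hl1 : B.card = 1
  · obtain ⟨b, rfl⟩ := Finset.card_eq_one.mp hl1
    have hsub : (A.erase b).image (· + b) ⊆ D := by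
      intro x hx
      obtain ⟨a, ha, rfl⟩ := Finset.mem_image.mp hx
      exact hD a (Finset.mem_of_mem_erase ha) b (Finset.mem_singleton_self b)
        (Finset.ne_of_mem_erase ha)
    have h1 := Finset.card_le_card hsub
    rw [Finset.card_image_of_injective _ (add_left_injective b)] at h1
    have h2 := Finset.pred_card_le_card_erase (s := A) (a := b)
    simp only [Finset.card_singleton]
    omega
  -- main case
  set k := A.card with hk
  set l := B.card with hl
  have hk2 : 2 ≤ k := by omega
  have hl2 : 2 ≤ l := by omega
  have hkp : k ≤ p := by
    have := Finset.card_le_univ A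
    rwa [ZMod.card] at this
  have hlp : l ≤ p := by
    have := Finset.card_le_univ B
    rwa [ZMod.card] at this
  by_contra hlt
  push_neg at hlt
  set n := k + l - 3 with hn
  have hDn : D.card ≤ n := by omega
  obtain ⟨D', hDD', hD'card⟩ := Finset.exists_superset_card_eq hDn
    (by rw [ZMod.card]; omega)
  set f := ((MvPolynomial.X 0 : MvPolynomial (Fin 2) (ZMod p)) - MvPolynomial.X 1)
      * ∏ c ∈ D', (MvPolynomial.X 0 + MvPolynomial.X 1 - MvPolynomial.C c) with hf
  have heval : ∀ a b : ZMod p,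
      MvPolynomial.eval ![a, b] f = (a - b) * ∏ c ∈ D', (a + b - c) := by
    intro a b
    simp [hf]
  have hvanish : ∀ a ∈ A, ∀ b ∈ B, MvPolynomial.eval ![a, b] f = 0 := by
    intro a ha b hb
    rw [heval]
    by_cases hab : a = b
    · rw [hab, sub_self, zero_mul]
    · have : a + b ∈ D' := hDD' (hD a ha b hb hab)
      rw [Finset.prod_eq_zero this (by rw [sub_self])]
      rw [mul_zero]
  set wA : ZMod p → ZMod p := fun a => ∏ x ∈ A.erase a, (a - x)⁻¹ with hwA
  set wB : ZMod p → ZMod p := fun b => ∏ x ∈ B.erase b, (b - x)⁻¹ with hwB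
  have hzero : ∑ a ∈ A, ∑ b ∈ B, wA a * wB b * MvPolynomial.eval ![a, b] f = 0 :=
    Finset.sum_eq_zero fun a ha => Finset.sum_eq_zero fun b hb => by
      rw [hvanish a ha b hb, mul_zero]
  have htd : f.totalDegree ≤ n + 1 := by
    apply le_trans (totalDegree_mul _ _)
    have h1 := X01_td (F := ZMod p)
    have h2 := prod_totalDegree (F := ZMod p) D'
    omega
  have hswap : ∑ a ∈ A, ∑ b ∈ B, wA a * wB b * MvPolynomial.eval ![a, b] f
      = ∑ d ∈ f.support, MvPolynomial.coeff d f *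
          ((∑ a ∈ A, wA a * a ^ (d 0)) * (∑ b ∈ B, wB b * b ^ (d 1))) := by
    have hev : ∀ a b : ZMod p, MvPolynomial.eval ![a, b] f
        = ∑ d ∈ f.support, MvPolynomial.coeff d f * (a ^ (d 0) * b ^ (d 1)) := by
      intro a b
      rw [MvPolynomial.eval_eq']
      refine Finset.sum_congr rfl fun d _ => ?_
      congr 1
      rw [Fin.prod_univ_two]
      norm_num
    calc ∑ a ∈ A, ∑ b ∈ B, wA a * wB b * MvPolynomial.eval ![a, b] f
        = ∑ a ∈ A, ∑ b ∈ B, ∑ d ∈ f.support,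
            wA a * wB b * (MvPolynomial.coeff d f * (a ^ (d 0) * b ^ (d 1))) := by
          refine Finset.sum_congr rfl fun a _ => Finset.sum_congr rfl fun b _ => ?_
          rw [hev, Finset.mul_sum]
      _ = ∑ a ∈ A, ∑ d ∈ f.support, ∑ b ∈ B,
            wA a * wB b * (MvPolynomial.coeff d f * (a ^ (d 0) * b ^ (d 1))) :=
          Finset.sum_congr rfl fun a _ => Finset.sum_comm
      _ = ∑ d ∈ f.support, ∑ a ∈ A, ∑ b ∈ B,
            wA a * wB b * (MvPolynomial.coeff d f * (a ^ (d 0) * b ^ (d 1))) :=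
          Finset.sum_comm
      _ = ∑ d ∈ f.support, MvPolynomial.coeff d f *
            ((∑ a ∈ A, wA a * a ^ (d 0)) * (∑ b ∈ B, wB b * b ^ (d 1))) := by
          refine Finset.sum_congr rfl fun d _ => ?_
          rw [Finset.sum_mul_sum, Finset.mul_sum]
          refine Finset.sum_congr rfl fun a _ => ?_
          rw [Finset.mul_sum]
          refine Finset.sum_congr rfl fun b _ => ?_
          ring
  have hlagA : ∀ i : ℕ, i < k → ∑ a ∈ A, wA a * a ^ i = if i = k - 1 then 1 else 0 :=
    fun i hi => lag_sum A hi
  have hlagB : ∀ i : ℕ, i < l → ∑ b ∈ B, wB b * b ^ i = if i = l - 1 then 1 else 0 :=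
    fun i hi => lag_sum B hi
  have hsingle : ∑ d ∈ f.support, MvPolynomial.coeff d f *
      ((∑ a ∈ A, wA a * a ^ (d 0)) * (∑ b ∈ B, wB b * b ^ (d 1)))
      = MvPolynomial.coeff (dstar k l) f *
        ((∑ a ∈ A, wA a * a ^ ((dstar k l) 0)) * (∑ b ∈ B, wB b * b ^ ((dstar k l) 1))) := by
    apply Finset.sum_eq_single
    · intro d hd hne'
      have hdsum : d 0 + d 1 ≤ n + 1 := by
        have h2 : d 0 + d 1 ≤ f.totalDegree := by
          rw [← fin2_support_sum d]
          exact MvPolynomial.le_totalDegree hd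
        omega
      rcases Nat.lt_trichotomy (d 0) (k - 1) with h | h | h
      · rw [hlagA (d 0) (by omega), if_neg (by omega)]
        simp
      · have hd1 : d 1 ≠ l - 1 := by
          intro h1
          apply hne'
          apply Finsupp.ext
          intro i
          fin_cases i
          · show d 0 = dstar k l 0
            rw [dstar_apply0]; exact h
          · show d 1 = dstar k l 1
            rw [dstar_apply1]; exact h1
        rw [hlagB (d 1) (by omega), if_neg hd1]
        simp
      · rw [hlagB (d 1) (by omega), if_neg (by omega)]
        simp
    · intro h
      rw [MvPolynomial.notMem_support_iff.mp h]
      simp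
  have hcoeff0 : MvPolynomial.coeff (dstar k l) f = 0 := by
    have := hzero
    rw [hswap, hsingle] at this
    rw [dstar_apply0, dstar_apply1] at this
    rw [hlagA (k-1) (by omega), hlagB (l-1) (by omega), if_pos rfl, if_pos rfl] at this
    simpa using this
  have hcoeffg : MvPolynomial.coeff (dstar k l) f
      = MvPolynomial.coeff (dstar k l)
        (((MvPolynomial.X 0 : MvPolynomial (Fin 2) (ZMod p)) - MvPolynomial.X 1)
          * (MvPolynomial.X 0 + MvPolynomial.X 1) ^ n) := by
    rw [← sub_eq_zero, ← MvPolynomial.coeff_sub]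
    apply MvPolynomial.coeff_eq_zero_of_totalDegree_lt
    have hfg : f - ((MvPolynomial.X 0 : MvPolynomial (Fin 2) (ZMod p)) - MvPolynomial.X 1)
          * (MvPolynomial.X 0 + MvPolynomial.X 1) ^ n
        = ((MvPolynomial.X 0 : MvPolynomial (Fin 2) (ZMod p)) - MvPolynomial.X 1)
          * ((∏ c ∈ D', (MvPolynomial.X 0 + MvPolynomial.X 1 - MvPolynomial.C c))
             - (MvPolynomial.X 0 + MvPolynomial.X 1) ^ n) := by
      rw [hf]; ring
    rw [hfg]
    rw [fin2_support_sum, dstar_apply0, dstar_apply1]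
    have h1 := X01_td (F := ZMod p)
    have h2 := prod_sub_pow_totalDegree (F := ZMod p) D'
    rw [hD'card] at h2
    have h3 := totalDegree_mul ((MvPolynomial.X 0 : MvPolynomial (Fin 2) (ZMod p)) - MvPolynomial.X 1)
      ((∏ c ∈ D', (MvPolynomial.X 0 + MvPolynomial.X 1 - MvPolynomial.C c))
        - (MvPolynomial.X 0 + MvPolynomial.X 1) ^ n)
    omega
  rw [hcoeffg, coeff_g k l hk2 hl2] at hcoeff0
  exact choose_sub_ne_zero hp hk2 hl2 hkp hlp hne hle hcoeff0

end MvPart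

/-- **Erdős–Heilbronn conjecture** (Proposition 5.5). -/
theorem erdos_heilbronn (p : ℕ) (hp : p.Prime) (A B : Finset (ZMod p))
    (hA : A.Nonempty) (hB : B.Nonempty) (hAB : A.card ≠ B.card) :
    min (A.card + B.card - 2) p ≤
      {x : ZMod p | ∃ a ∈ A, ∃ b ∈ B, a ≠ b ∧ a + b = x}.ncard := by
  haveI : Fact p.Prime := ⟨hp⟩
  classical
  set Cfin := ((A ×ˢ B).filter (fun ab => ab.1 ≠ ab.2)).image (fun ab => ab.1 + ab.2) with hCfin
  have hset : {x : ZMod p | ∃ a ∈ A, ∃ b ∈ B, a ≠ b ∧ a + b = x} = ↑Cfin := by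
    ext x
    simp only [Set.mem_setOf_eq, hCfin, Finset.coe_image, Set.mem_image, Finset.mem_coe,
      Finset.mem_filter, Finset.mem_product]
    constructor
    · rintro ⟨a, ha, b, hb, hab, rfl⟩
      exact ⟨(a, b), ⟨⟨ha, hb⟩, hab⟩, rfl⟩
    · rintro ⟨⟨a, b⟩, ⟨⟨ha, hb⟩, hab⟩, rfl⟩
      exact ⟨a, ha, b, hb, hab, rfl⟩
  rw [hset, Set.ncard_coe_finset]
  have hmem : ∀ a ∈ A, ∀ b ∈ B, a ≠ b → a + b ∈ Cfin := by
    intro a ha b hb hab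
    rw [hCfin]
    exact Finset.mem_image.mpr ⟨(a, b),
      Finset.mem_filter.mpr ⟨Finset.mem_product.mpr ⟨ha, hb⟩, hab⟩, rfl⟩
  have hk1 : 1 ≤ A.card := Finset.card_pos.mpr hA
  have hl1 : 1 ≤ B.card := Finset.card_pos.mpr hB
  have hkp : A.card ≤ p := by
    have := Finset.card_le_univ A
    rwa [ZMod.card] at this
  have hlp : B.card ≤ p := by
    have := Finset.card_le_univ B
    rwa [ZMod.card] at this
  rcases le_or_gt (A.card + B.card - 2) p with hle | hgt
  · rw [min_eq_left hle]
    exact key hp A B Cfin hk1 hl1 hAB hle hmem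
  · rw [min_eq_right (le_of_lt hgt)]
    by_cases hc : 2 * A.card = p + 2
    · obtain ⟨A', hA'sub, hA'card⟩ := Finset.exists_subset_card_eq (s := A) (n := A.card - 1) (by omega)
      obtain ⟨B', hB'sub, hB'card⟩ := Finset.exists_subset_card_eq (s := B) (n := p + 3 - A.card) (by omega)
      have hp2 := hp.two_le
      have := key hp A' B' Cfin (by omega) (by omega) (by omega) (by omega)
        (fun a ha b hb hab => hmem a (hA'sub ha) b (hB'sub hb) hab)
      omega
    · obtain ⟨B', hB'sub, hB'card⟩ := Finset.exists_subset_card_eq (s := B) (n := p + 2 - A.card) (by omega)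
      have := key hp A B' Cfin hk1 (by omega) (by omega) (by omega)
        (fun a ha b hb hab => hmem a ha b (hB'sub hb) hab)
      omega
end

section
/- There exists an absolute constant C > 0 such that for every finite set P of points in ℝ² and every finite set L of affine lines in ℝ², the number of incidences |{(p, ℓ) ∈ P × L : p ∈ ℓ}| is at most C·(|P|^(2/3)·|L|^(2/3) + |P| + |L|). -/
open Finset

namespace ST

noncomputable section
attribute [local instance] Classical.propDecidable

abbrev Pt := ℝ × ℝ

def ph (t : ℝ) (p : Pt) : ℝ := p.1 + t * p.2

lemma ph_add_smul (t : ℝ) (a b : Pt) (s : ℝ) :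
    ph t (a + s • (b - a)) = ph t a + s * (ph t b - ph t a) := by
  simp [ph, Prod.fst_add, Prod.snd_add]; ring

lemma pt_ext {t : ℝ} {p q : Pt} (h1 : ph t p = ph t q) (h2 : p.2 = q.2) : p = q := by
  have : p.1 = q.1 := by simp [ph, h2] at h1; linarith
  exact Prod.ext this h2

def pnt (t : ℝ) (e : Pt × Pt) (c : ℝ) : Pt :=
  e.1 + ((c - ph t e.1) / (ph t e.2 - ph t e.1)) • (e.2 - e.1)

def Yv (t : ℝ) (e : Pt × Pt) (c : ℝ) : ℝ := (pnt t e c).2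

def alv (t : ℝ) (e : Pt × Pt) (c : ℝ) : Prop := ph t e.1 < c ∧ c < ph t e.2

def cross (e f : Pt × Pt) : Prop :=
  (openSegment ℝ e.1 e.2 ∩ openSegment ℝ f.1 f.2).Nonempty

def X2 (E : Finset (Pt × Pt)) : ℕ :=
  ((E ×ˢ E).filter (fun p => p.1 ≠ p.2 ∧ cross p.1 p.2)).card

lemma ph_pnt {t : ℝ} {e : Pt × Pt} (h : ph t e.1 ≠ ph t e.2) (c : ℝ) :
    ph t (pnt t e c) = c := by
  have hd : ph t e.2 - ph t e.1 ≠ 0 := sub_ne_zero.2 (Ne.symm h)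
  rw [pnt, ph_add_smul]
  field_simp
  ring

lemma Yv_eq (t : ℝ) (e : Pt × Pt) (c : ℝ) :
    Yv t e c = e.1.2 + ((c - ph t e.1) / (ph t e.2 - ph t e.1)) * (e.2.2 - e.1.2) := by
  simp [Yv, pnt, Prod.snd_add]

lemma Yv_affine (t : ℝ) (e : Pt × Pt) :
    ∃ α β : ℝ, ∀ c, Yv t e c = α + c * β := by
  refine ⟨e.1.2 - ph t e.1 * ((e.2.2 - e.1.2) / (ph t e.2 - ph t e.1)),
    (e.2.2 - e.1.2) / (ph t e.2 - ph t e.1), fun c => ?_⟩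
  rw [Yv_eq]; ring

lemma Yv_left (t : ℝ) (e : Pt × Pt) : Yv t e (ph t e.1) = e.1.2 := by
  simp [Yv_eq]

lemma Yv_right (t : ℝ) (e : Pt × Pt) (h : ph t e.1 ≠ ph t e.2) :
    Yv t e (ph t e.2) = e.2.2 := by
  have hd : ph t e.2 - ph t e.1 ≠ 0 := sub_ne_zero.2 (Ne.symm h)
  rw [Yv_eq]; field_simp; ring

lemma pnt_mem_openSegment {t : ℝ} {e : Pt × Pt} {c : ℝ} (hor : ph t e.1 < ph t e.2)
    (ha : alv t e c) : pnt t e c ∈ openSegment ℝ e.1 e.2 := by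
  rw [openSegment_eq_image']
  refine ⟨(c - ph t e.1) / (ph t e.2 - ph t e.1), ⟨?_, ?_⟩, rfl⟩
  · exact div_pos (by linarith [ha.1]) (by linarith)
  · rw [div_lt_one (by linarith)]; linarith [ha.2]

lemma openSegment_nonempty {x y : Pt} (h : x ≠ y) : (openSegment ℝ x y).Nonempty := by
  refine ⟨x + (1/2 : ℝ) • (y - x), ?_⟩
  rw [openSegment_eq_image']
  exact ⟨1/2, by norm_num, rfl⟩

lemma affine_sign {α β c₁ c₂ : ℝ} (h12 : c₁ ≤ c₂)
    (hnz : ∀ c, c₁ ≤ c → c ≤ c₂ → α + c * β ≠ 0)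
    (h1 : 0 < α + c₁ * β) : 0 < α + c₂ * β := by
  by_contra h2
  push_neg at h2
  have h2' : α + c₂ * β < 0 := lt_of_le_of_ne h2 (hnz c₂ h12 le_rfl)
  have hβ : β ≠ 0 := by
    intro h; rw [h] at h1 h2'; simp at h1 h2'; linarith
  have key : α + (-α / β) * β = 0 := by field_simp; ring
  rcases lt_or_gt_of_ne hβ with hb | hb
  · have hc1 : c₁ ≤ -α / β := by
      by_contra hc; push_neg at hc; nlinarith
    have hc2 : -α / β ≤ c₂ := by
      by_contra hc; push_neg at hc; nlinarith
    exact hnz _ hc1 hc2 key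
  · have hc1 : c₁ ≤ -α / β := by
      by_contra hc; push_neg at hc; nlinarith
    have hc2 : -α / β ≤ c₂ := by
      by_contra hc; push_neg at hc; nlinarith
    exact hnz _ hc1 hc2 key

/-- configuration for the sweep argument -/
structure Cfg where
  t : ℝ
  V : Finset Pt
  E : Finset (Pt × Pt)
  hV : ∀ e ∈ E, e.1 ∈ V ∧ e.2 ∈ V
  hor : ∀ e ∈ E, ph t e.1 < ph t e.2
  hinj : Set.InjOn (ph t) ↑V
  hcr : ∀ e ∈ E, ∀ f ∈ E, e ≠ f → ¬ cross e f
  hpt : ∀ e ∈ E, ∀ p ∈ V, p ∉ openSegment ℝ e.1 e.2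
  hne : E.Nonempty

namespace Cfg

variable (C : Cfg)

def S : Finset (ℝ × ℝ) :=
  ((C.V.image (ph C.t)) ×ˢ (C.V.image (ph C.t))).filter (fun p => p.1 < p.2)

lemma Sne : C.S.Nonempty := by
  obtain ⟨e, he⟩ := C.hne
  exact ⟨(ph C.t e.1, ph C.t e.2), mem_filter.2 ⟨mem_product.2
    ⟨mem_image_of_mem _ (C.hV e he).1, mem_image_of_mem _ (C.hV e he).2⟩, C.hor e he⟩⟩

def D : ℝ := (C.S.inf' C.Sne (fun p => p.2 - p.1)) / 2

lemma Dpos : 0 < C.D := by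
  have : ∀ p ∈ C.S, 0 < p.2 - p.1 := by
    intro p hp
    have := (mem_filter.1 hp).2
    linarith
  have h := Finset.lt_inf'_iff (C.Sne) (f := fun p => p.2 - p.1) (a := (0:ℝ))
  unfold D
  linarith [h.2 this]

lemma gap {a b : Pt} (ha : a ∈ C.V) (hb : b ∈ C.V) (hab : ph C.t a < ph C.t b) :
    ph C.t a + 2 * C.D ≤ ph C.t b := by
  have hm : (a_1 : (ℝ×ℝ)) → a_1 ∈ C.S → C.S.inf' C.Sne (fun p => p.2 - p.1) ≤ a_1.2 - a_1.1 :=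
    fun x hx => Finset.inf'_le _ hx
  have hmem : (ph C.t a, ph C.t b) ∈ C.S :=
    mem_filter.2 ⟨mem_product.2 ⟨mem_image_of_mem _ ha, mem_image_of_mem _ hb⟩, hab⟩
  have := hm _ hmem
  unfold D
  simp only at this ⊢
  linarith

def mm (p : Pt) : ℝ := ph C.t p - C.D
def mp (p : Pt) : ℝ := ph C.t p + C.D

/-- distinct alive edges have distinct heights -/
lemma Ne_Yv {e f : Pt × Pt} {c : ℝ} (he : e ∈ C.E) (hf : f ∈ C.E) (hef : e ≠ f)
    (hae : alv C.t e c) (haf : alv C.t f c) : Yv C.t e c ≠ Yv C.t f c := by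
  intro h
  have hoe := C.hor e he
  have hof := C.hor f hf
  have hpe : pnt C.t e c = pnt C.t f c :=
    pt_ext (by rw [ph_pnt hoe.ne, ph_pnt hof.ne]) h
  exact C.hcr e he f hf hef ⟨pnt C.t e c,
    pnt_mem_openSegment hoe hae, hpe ▸ pnt_mem_openSegment hof haf⟩

/-- order of two edges alive at two abscissas is preserved -/
lemma ord_trans {e f : Pt × Pt} {c₁ c₂ : ℝ} (he : e ∈ C.E) (hf : f ∈ C.E) (hef : e ≠ f)
    (h12 : c₁ ≤ c₂) (hae1 : alv C.t e c₁) (haf1 : alv C.t f c₁)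
    (hae2 : alv C.t e c₂) (haf2 : alv C.t f c₂)
    (h : Yv C.t e c₁ < Yv C.t f c₁) : Yv C.t e c₂ < Yv C.t f c₂ := by
  obtain ⟨αe, βe, hYe⟩ := Yv_affine C.t e
  obtain ⟨αf, βf, hYf⟩ := Yv_affine C.t f
  have key : 0 < (αf - αe) + c₂ * (βf - βe) := by
    apply affine_sign h12
    · intro c hc1 hc2 hz
      have hac : alv C.t e c := ⟨lt_of_lt_of_le hae1.1 hc1, lt_of_le_of_lt hc2 hae2.2⟩
      have hacf : alv C.t f c := ⟨lt_of_lt_of_le haf1.1 hc1, lt_of_le_of_lt hc2 haf2.2⟩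
      apply C.Ne_Yv he hf hef hac hacf
      rw [hYe, hYf]; linarith
    · rw [hYe c₁, hYf c₁] at h; linarith
  rw [hYe c₂, hYf c₂]; linarith

lemma ord_trans' {e f : Pt × Pt} {c₁ c₂ : ℝ} (he : e ∈ C.E) (hf : f ∈ C.E) (hef : e ≠ f)
    (h12 : c₁ ≤ c₂) (hae1 : alv C.t e c₁) (haf1 : alv C.t f c₁)
    (hae2 : alv C.t e c₂) (haf2 : alv C.t f c₂)
    (h : Yv C.t e c₂ < Yv C.t f c₂) : Yv C.t e c₁ < Yv C.t f c₁ := by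
  rcases lt_trichotomy (Yv C.t e c₁) (Yv C.t f c₁) with h' | h' | h'
  · exact h'
  · exact absurd h' (C.Ne_Yv he hf hef hae1 haf1)
  · exact absurd (C.ord_trans hf he (Ne.symm hef) h12 haf1 hae1 haf2 hae2 h') (by linarith)

/-- vertex strictly inside the x-span of an edge cannot be on it -/
lemma not_on {e : Pt × Pt} {p : Pt} (he : e ∈ C.E) (hp : p ∈ C.V)
    (h1 : ph C.t e.1 < ph C.t p) (h2 : ph C.t p < ph C.t e.2) :
    Yv C.t e (ph C.t p) ≠ p.2 := by
  intro h
  have hoe := C.hor e he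
  have : p = pnt C.t e (ph C.t p) := pt_ext (by rw [ph_pnt hoe.ne]) h.symm
  exact C.hpt e he p hp (this ▸ pnt_mem_openSegment hoe ⟨h1, h2⟩)

/-- adjacency (f directly above e) at abscissa c -/
def adj (c : ℝ) (e f : Pt × Pt) : Prop :=
  alv C.t e c ∧ alv C.t f c ∧ Yv C.t e c < Yv C.t f c ∧
    ∀ g ∈ C.E, alv C.t g c → ¬(Yv C.t e c < Yv C.t g c ∧ Yv C.t g c < Yv C.t f c)

lemma alive_at_mm {e : Pt × Pt} {p : Pt} (he : e ∈ C.E) (h2 : e.2 = p) :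
    alv C.t e (C.mm p) := by
  have hoe := C.hor e he
  have h1 : e.1 ∈ C.V := (C.hV e he).1
  have hle : ph C.t e.1 + 2 * C.D ≤ ph C.t p := C.gap h1 (h2 ▸ (C.hV e he).2) (h2 ▸ hoe)
  constructor
  · unfold mm; linarith [C.Dpos]
  · unfold mm; rw [← h2]; linarith [C.Dpos]

lemma alive_at_mp {e : Pt × Pt} {q : Pt} (he : e ∈ C.E) (h1 : e.1 = q) :
    alv C.t e (C.mp q) := by
  have hoe := C.hor e he
  have hle : ph C.t q + 2 * C.D ≤ ph C.t e.2 := C.gap (h1 ▸ (C.hV e he).1) (C.hV e he).2 (h1 ▸ hoe)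
  constructor
  · unfold mp; rw [← h1]; linarith [C.Dpos]
  · unfold mp; linarith [C.Dpos]

/-- an edge alive at mp q not starting at q is alive at mm q -/
lemma alive_back {e : Pt × Pt} {q : Pt} (he : e ∈ C.E) (hq : q ∈ C.V)
    (h1 : e.1 ≠ q) (ha : alv C.t e (C.mp q)) : alv C.t e (C.mm q) := by
  have h1V : e.1 ∈ C.V := (C.hV e he).1
  have hne : ph C.t e.1 ≠ ph C.t q := fun h => h1 (C.hinj h1V hq h)
  have hlt : ph C.t e.1 < ph C.t q := by
    rcases lt_or_gt_of_ne hne with h | h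
    · exact h
    · exfalso
      have := C.gap hq h1V h
      have := ha.1; unfold mp at this; linarith
  have := C.gap h1V hq hlt
  have h2 := ha.2
  unfold mp at h2
  exact ⟨by unfold mm; linarith, by unfold mm mp at *; linarith [C.Dpos]⟩

/-- an edge alive at mm q must die at q or be alive at mp q -/
lemma dies_at {w : Pt × Pt} {q : Pt} (hw : w ∈ C.E) (hq : q ∈ C.V)
    (ha : alv C.t w (C.mm q)) (hna : ¬ alv C.t w (C.mp q)) : w.2 = q := by
  have h2V : w.2 ∈ C.V := (C.hV w hw).2
  have h1 : ph C.t w.1 < C.mp q := by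
    have := ha.1; unfold mm at this; unfold mp; linarith [C.Dpos]
  have h2 : ph C.t w.2 ≤ C.mp q := by
    by_contra h; push_neg at h
    exact hna ⟨h1, h⟩
  have h3 : C.mm q < ph C.t w.2 := ha.2
  have : ph C.t w.2 = ph C.t q := by
    by_contra h
    rcases lt_or_gt_of_ne h with h' | h'
    · have := C.gap h2V hq h'; unfold mm at h3; linarith
    · have := C.gap hq h2V h'; unfold mp at h2; linarith
  exact C.hinj h2V hq this

lemma affine_sign' {α β c₁ c₂ : ℝ} (h12 : c₁ ≤ c₂)
    (hnz : ∀ c, c₁ ≤ c → c ≤ c₂ → α + c * β ≠ 0)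
    (h2 : 0 < α + c₂ * β) : 0 < α + c₁ * β := by
  have := affine_sign (α := α) (β := -β) (c₁ := -c₂) (c₂ := -c₁) (by linarith)
    (fun c hc1 hc2 => by
      have := hnz (-c) (by linarith) (by linarith)
      intro h; apply this; linarith [h])
    (by ring_nf; ring_nf at h2; linarith)
  ring_nf at this ⊢; linarith

/-- sign propagation to the right endpoint where only non-equality is known -/
lemma sign_up {e g : Pt × Pt} {c₁ c₂ : ℝ} (he : e ∈ C.E) (hg : g ∈ C.E) (hne : e ≠ g)
    (h12 : c₁ ≤ c₂)
    (hae : ∀ c, c₁ ≤ c → c < c₂ → alv C.t e c) (hag : ∀ c, c₁ ≤ c → c < c₂ → alv C.t g c)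
    (hend : Yv C.t e c₂ ≠ Yv C.t g c₂)
    (h : Yv C.t e c₁ < Yv C.t g c₁) : Yv C.t e c₂ < Yv C.t g c₂ := by
  obtain ⟨αe, βe, hE⟩ := Yv_affine C.t e
  obtain ⟨αg, βg, hG⟩ := Yv_affine C.t g
  have key : 0 < (αg - αe) + c₂ * (βg - βe) := by
    apply affine_sign h12
    · intro c hc1 hc2 hz
      rcases eq_or_lt_of_le hc2 with rfl | hlt
      · exact hend (by rw [hE, hG]; linarith)
      · exact C.Ne_Yv he hg hne (hae c hc1 hlt) (hag c hc1 hlt) (by rw [hE, hG]; linarith)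
    · rw [hE c₁, hG c₁] at h; linarith
  rw [hE c₂, hG c₂]; linarith

/-- sign propagation to the left endpoint where only non-equality is known -/
lemma sign_down {e g : Pt × Pt} {c₁ c₂ : ℝ} (he : e ∈ C.E) (hg : g ∈ C.E) (hne : e ≠ g)
    (h12 : c₁ ≤ c₂)
    (hae : ∀ c, c₁ < c → c ≤ c₂ → alv C.t e c) (hag : ∀ c, c₁ < c → c ≤ c₂ → alv C.t g c)
    (hend : Yv C.t e c₁ ≠ Yv C.t g c₁)
    (h : Yv C.t e c₂ < Yv C.t g c₂) : Yv C.t e c₁ < Yv C.t g c₁ := by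
  obtain ⟨αe, βe, hE⟩ := Yv_affine C.t e
  obtain ⟨αg, βg, hG⟩ := Yv_affine C.t g
  have key : 0 < (αg - αe) + c₁ * (βg - βe) := by
    apply affine_sign' h12
    · intro c hc1 hc2 hz
      rcases eq_or_lt_of_le hc1 with rfl | hlt
      · exact hend (by rw [hE, hG]; linarith)
      · exact C.Ne_Yv he hg hne (hae c hlt hc2) (hag c hlt hc2) (by rw [hE, hG]; linarith)
    · rw [hE c₂, hG c₂] at h; linarith
  rw [hE c₁, hG c₁]; linarith

/-- convexity of the in-block -/
lemma in_convex {p : Pt} {e f g : Pt × Pt} (hp : p ∈ C.V)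
    (he : e ∈ C.E) (hf : f ∈ C.E) (hg : g ∈ C.E)
    (he2 : e.2 = p) (hf2 : f.2 = p) (hag : alv C.t g (C.mm p))
    (h1 : Yv C.t e (C.mm p) < Yv C.t g (C.mm p))
    (h2 : Yv C.t g (C.mm p) < Yv C.t f (C.mm p)) : g.2 = p := by
  by_contra hg2
  have hgV : g.2 ∈ C.V := (C.hV g hg).2
  have hgne : ph C.t g.2 ≠ ph C.t p := fun h => hg2 (C.hinj hgV hp h)
  have hgp : ph C.t p < ph C.t g.2 := by
    rcases lt_or_gt_of_ne hgne with h | h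
    · exfalso; have := C.gap hgV hp h
      have := hag.2; unfold mm at this; linarith [C.Dpos]
    · exact h
  have hae : alv C.t e (C.mm p) := C.alive_at_mm he he2
  have haf : alv C.t f (C.mm p) := C.alive_at_mm hf hf2
  have hge : e ≠ g := fun h => absurd rfl (h ▸ h1).ne
  have hgf : g ≠ f := fun h => absurd rfl (h ▸ h2).ne
  have hYe : Yv C.t e (ph C.t p) = p.2 := by
    have := Yv_right C.t e (C.hor e he).ne
    rw [he2] at this; exact this
  have hYf : Yv C.t f (ph C.t p) = p.2 := by
    have := Yv_right C.t f (C.hor f hf).ne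
    rw [hf2] at this; exact this
  have hg1 : ph C.t g.1 < ph C.t p := lt_trans hag.1 (by unfold mm; linarith [C.Dpos])
  have hYg : Yv C.t g (ph C.t p) ≠ p.2 := C.not_on hg hp hg1 hgp
  have hmmp : C.mm p ≤ ph C.t p := by unfold mm; linarith [C.Dpos]
  have up1 : Yv C.t e (ph C.t p) < Yv C.t g (ph C.t p) := by
    apply C.sign_up he hg hge hmmp
    · intro c hc1 hc2
      exact ⟨lt_of_lt_of_le hae.1 hc1, by rw [he2]; exact hc2⟩
    · intro c hc1 hc2
      exact ⟨lt_of_lt_of_le hag.1 hc1, lt_trans hc2 hgp⟩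
    · rw [hYe]; exact fun h => hYg h.symm
    · exact h1
  have up2 : Yv C.t g (ph C.t p) < Yv C.t f (ph C.t p) := by
    apply C.sign_up hg hf hgf hmmp
    · intro c hc1 hc2
      exact ⟨lt_of_lt_of_le hag.1 hc1, lt_trans hc2 hgp⟩
    · intro c hc1 hc2
      exact ⟨lt_of_lt_of_le haf.1 hc1, by rw [hf2]; exact hc2⟩
    · rw [hYf]; exact hYg
    · exact h2
  rw [hYe] at up1; rw [hYf] at up2; linarith

/-- convexity of the out-block -/
lemma out_convex {q : Pt} {e f g : Pt × Pt} (hq : q ∈ C.V)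
    (he : e ∈ C.E) (hf : f ∈ C.E) (hg : g ∈ C.E)
    (he1 : e.1 = q) (hf1 : f.1 = q) (hag : alv C.t g (C.mp q))
    (h1 : Yv C.t e (C.mp q) < Yv C.t g (C.mp q))
    (h2 : Yv C.t g (C.mp q) < Yv C.t f (C.mp q)) : g.1 = q := by
  by_contra hg1
  have hgV : g.1 ∈ C.V := (C.hV g hg).1
  have hgne : ph C.t g.1 ≠ ph C.t q := fun h => hg1 (C.hinj hgV hq h)
  have hgq : ph C.t g.1 < ph C.t q := by
    rcases lt_or_gt_of_ne hgne with h | h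
    · exact h
    · exfalso; have := C.gap hq hgV h
      have := hag.1; unfold mp at this; linarith [C.Dpos]
  have hae : alv C.t e (C.mp q) := C.alive_at_mp he he1
  have haf : alv C.t f (C.mp q) := C.alive_at_mp hf hf1
  have hge : e ≠ g := fun h => absurd rfl (h ▸ h1).ne
  have hgf : g ≠ f := fun h => absurd rfl (h ▸ h2).ne
  have hYe : Yv C.t e (ph C.t q) = q.2 := by
    have := Yv_left C.t e
    rw [he1] at this; exact this
  have hYf : Yv C.t f (ph C.t q) = q.2 := by
    have := Yv_left C.t f
    rw [hf1] at this; exact this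
  have hg2 : ph C.t q < ph C.t g.2 := lt_trans (by unfold mp; linarith [C.Dpos]) hag.2
  have hYg : Yv C.t g (ph C.t q) ≠ q.2 := C.not_on hg hq hgq hg2
  have hmpq : ph C.t q ≤ C.mp q := by unfold mp; linarith [C.Dpos]
  have dn1 : Yv C.t e (ph C.t q) < Yv C.t g (ph C.t q) := by
    apply C.sign_down he hg hge hmpq
    · intro c hc1 hc2
      exact ⟨by rw [he1]; exact hc1, lt_of_le_of_lt hc2 hae.2⟩
    · intro c hc1 hc2
      exact ⟨lt_trans hgq hc1, lt_of_le_of_lt hc2 hag.2⟩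
    · rw [hYe]; exact fun h => hYg h.symm
    · exact h1
  have dn2 : Yv C.t g (ph C.t q) < Yv C.t f (ph C.t q) := by
    apply C.sign_down hg hf hgf hmpq
    · intro c hc1 hc2
      exact ⟨lt_trans hgq hc1, lt_of_le_of_lt hc2 hag.2⟩
    · intro c hc1 hc2
      exact ⟨by rw [hf1]; exact hc1, lt_of_le_of_lt hc2 haf.2⟩
    · rw [hYf]; exact hYg
    · exact h2
  rw [hYe] at dn1; rw [hYf] at dn2; linarith

lemma adj_ne {c : ℝ} {e f : Pt × Pt} (h : C.adj c e f) : e ≠ f :=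
  fun hef => absurd (hef ▸ h.2.2.1) (lt_irrefl _)

/-- transferring adjacency down through a vertex-free interval -/
lemma adj_down {e f : Pt × Pt} {c₁ c₂ : ℝ} (he : e ∈ C.E) (hf : f ∈ C.E)
    (h12 : c₁ ≤ c₂) (hfree : ∀ r ∈ C.V, ¬(c₁ ≤ ph C.t r ∧ ph C.t r ≤ c₂))
    (h : C.adj c₂ e f) : C.adj c₁ e f := by
  have hef : e ≠ f := C.adj_ne h
  have hal : ∀ g ∈ C.E, alv C.t g c₂ → alv C.t g c₁ := by
    intro g hg hag
    constructor
    · by_contra hc; push_neg at hc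
      exact hfree g.1 (C.hV g hg).1 ⟨hc, le_of_lt hag.1⟩
    · exact lt_of_le_of_lt h12 hag.2
  have hal' : ∀ g ∈ C.E, alv C.t g c₁ → c₁ < ph C.t g.2 → alv C.t g c₂ := by
    intro g hg hag _
    constructor
    · exact lt_of_lt_of_le hag.1 h12
    · by_contra hc; push_neg at hc
      exact hfree g.2 (C.hV g hg).2 ⟨le_of_lt hag.2, hc⟩
  have hae1 := hal e he h.1
  have haf1 := hal f hf h.2.1
  refine ⟨hae1, haf1, C.ord_trans' he hf hef h12 hae1 haf1 h.1 h.2.1 h.2.2.1, ?_⟩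
  intro g hg hag ⟨hb1, hb2⟩
  have hge : e ≠ g := fun hh => absurd (hh ▸ hb1) (lt_irrefl _)
  have hgf : g ≠ f := fun hh => absurd (hh ▸ hb2) (lt_irrefl _)
  have hag2 : alv C.t g c₂ := hal' g hg hag hag.2
  exact h.2.2.2 g hg hag2 ⟨C.ord_trans he hg hge h12 hae1 hag h.1 hag2 hb1,
    C.ord_trans hg hf hgf h12 hag haf1 hag2 h.2.1 hb2⟩

lemma adj_below_unique {c : ℝ} {e e' f : Pt × Pt} (he : e ∈ C.E) (he' : e' ∈ C.E)
    (h : C.adj c e f) (h' : C.adj c e' f) : e = e' := by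
  by_contra hee
  rcases lt_trichotomy (Yv C.t e c) (Yv C.t e' c) with hlt | heq | hlt
  · exact h.2.2.2 e' he' h'.1 ⟨hlt, h'.2.2.1⟩
  · exact C.Ne_Yv he he' hee h.1 h'.1 heq
  · exact h'.2.2.2 e he h.1 ⟨hlt, h.2.2.1⟩

lemma adj_above_unique {c : ℝ} {e f f' : Pt × Pt} (hf : f ∈ C.E) (hf' : f' ∈ C.E)
    (h : C.adj c e f) (h' : C.adj c e f') : f = f' := by
  by_contra hff
  rcases lt_trichotomy (Yv C.t f c) (Yv C.t f' c) with hlt | heq | hlt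
  · exact h'.2.2.2 f hf h.2.1 ⟨h.2.2.1, hlt⟩
  · exact C.Ne_Yv hf hf' hff h.2.1 h'.2.1 heq
  · exact h.2.2.2 f' hf' h'.2.1 ⟨h'.2.2.1, hlt⟩

/-- specification of a created adjacency at vertex q with class k -/
def Spec (e f : Pt × Pt) (q : Pt) (k : Fin 3) : Prop :=
  e ∈ C.E ∧ f ∈ C.E ∧ C.adj (C.mp q) e f ∧
  (k = 0 → f.1 = q ∧ e.1 ≠ q) ∧
  (k = 1 → e.1 = q ∧ f.1 ≠ q) ∧
  (k = 2 → e.1 ≠ q ∧ f.1 ≠ q ∧ ¬ C.adj (C.mm q) e f)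

lemma uniq0 {q : Pt} {e f e' f' : Pt × Pt} (hq : q ∈ C.V)
    (h : C.Spec e f q 0) (h' : C.Spec e' f' q 0) : e = e' := by
  obtain ⟨he, hf, hadj, hk, -, -⟩ := h
  obtain ⟨he', hf', hadj', hk', -, -⟩ := h'
  obtain ⟨hf1, he1⟩ := hk rfl
  obtain ⟨hf1', he1'⟩ := hk' rfl
  have hff : f = f' := by
    by_contra hff
    have hcase : ∀ (a b a' b' : Pt × Pt), a ∈ C.E → b ∈ C.E → a' ∈ C.E → b' ∈ C.E →
        b.1 = q → b'.1 = q → a.1 ≠ q → a'.1 ≠ q →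
        C.adj (C.mp q) a b → C.adj (C.mp q) a' b' →
        Yv C.t b (C.mp q) < Yv C.t b' (C.mp q) → False := by
      intro a b a' b' ha hb ha' hb' hb1 hb1' ha1 ha1' hadja hadja' hbb
      have hbne : b ≠ a' := fun hh => ha1' (hh ▸ hb1)
      rcases lt_trichotomy (Yv C.t b (C.mp q)) (Yv C.t a' (C.mp q)) with h1 | h1 | h1
      · exact ha1' (C.out_convex hq hb hb' ha' hb1 hb1' hadja'.1 h1 hadja'.2.2.1)
      · exact C.Ne_Yv hb ha' hbne hadja.2.1 hadja'.1 h1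
      · exact hadja'.2.2.2 b hb hadja.2.1 ⟨h1, hbb⟩
    rcases lt_trichotomy (Yv C.t f (C.mp q)) (Yv C.t f' (C.mp q)) with h1 | h1 | h1
    · exact hcase e f e' f' he hf he' hf' hf1 hf1' he1 he1' hadj hadj' h1
    · exact C.Ne_Yv hf hf' hff hadj.2.1 hadj'.2.1 h1
    · exact hcase e' f' e f he' hf' he hf hf1' hf1 he1' he1 hadj' hadj h1
  exact C.adj_below_unique he he' hadj (hff ▸ hadj')

lemma uniq1 {q : Pt} {e f e' f' : Pt × Pt} (hq : q ∈ C.V)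
    (h : C.Spec e f q 1) (h' : C.Spec e' f' q 1) : e = e' := by
  obtain ⟨he, hf, hadj, -, hk, -⟩ := h
  obtain ⟨he', hf', hadj', -, hk', -⟩ := h'
  obtain ⟨he1, hf1⟩ := hk rfl
  obtain ⟨he1', hf1'⟩ := hk' rfl
  by_contra hee
  have hcase : ∀ (a b a' b' : Pt × Pt), a ∈ C.E → b ∈ C.E → a' ∈ C.E → b' ∈ C.E →
      a.1 = q → a'.1 = q → b.1 ≠ q → b'.1 ≠ q →
      C.adj (C.mp q) a b → C.adj (C.mp q) a' b' →
      Yv C.t a (C.mp q) < Yv C.t a' (C.mp q) → False := by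
    intro a b a' b' ha hb ha' hb' ha1 ha1' hb1 hb1' hadja hadja' haa
    have hne : a' ≠ b := fun hh => hb1 (hh ▸ ha1')
    rcases lt_trichotomy (Yv C.t a' (C.mp q)) (Yv C.t b (C.mp q)) with h1 | h1 | h1
    · exact hadja.2.2.2 a' ha' hadja'.1 ⟨haa, h1⟩
    · exact C.Ne_Yv ha' hb hne hadja'.1 hadja.2.1 h1
    · exact hb1 (C.out_convex hq ha ha' hb ha1 ha1' hadja.2.1 hadja.2.2.1 h1)
  rcases lt_trichotomy (Yv C.t e (C.mp q)) (Yv C.t e' (C.mp q)) with h1 | h1 | h1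
  · exact hcase e f e' f' he hf he' hf' he1 he1' hf1 hf1' hadj hadj' h1
  · exact C.Ne_Yv he he' hee hadj.1 hadj'.1 h1
  · exact hcase e' f' e f he' hf' he hf he1' he1 hf1' hf1 hadj' hadj h1

lemma uniq2 {q : Pt} {e f e' f' : Pt × Pt} (hq : q ∈ C.V)
    (h : C.Spec e f q 2) (h' : C.Spec e' f' q 2) : e = e' := by
  obtain ⟨he, hf, hadj, -, -, hk⟩ := h
  obtain ⟨he', hf', hadj', -, -, hk'⟩ := h'
  obtain ⟨he1, hf1, hnadj⟩ := hk rfl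
  obtain ⟨he1', hf1', hnadj'⟩ := hk' rfl
  have hmm12 : C.mm q ≤ C.mp q := by unfold mm mp; linarith [C.Dpos]
  -- both pairs alive at mm q, with a dying witness in between
  have witness : ∀ (a b : Pt × Pt), a ∈ C.E → b ∈ C.E → a.1 ≠ q → b.1 ≠ q →
      C.adj (C.mp q) a b → ¬ C.adj (C.mm q) a b →
      alv C.t a (C.mm q) ∧ alv C.t b (C.mm q) ∧
      Yv C.t a (C.mm q) < Yv C.t b (C.mm q) ∧
      ∃ w ∈ C.E, w.2 = q ∧ alv C.t w (C.mm q) ∧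
        Yv C.t a (C.mm q) < Yv C.t w (C.mm q) ∧ Yv C.t w (C.mm q) < Yv C.t b (C.mm q) := by
    intro a b ha hb ha1 hb1 hadja hnadja
    have hab : a ≠ b := C.adj_ne hadja
    have haa : alv C.t a (C.mm q) := C.alive_back ha hq ha1 hadja.1
    have hab' : alv C.t b (C.mm q) := C.alive_back hb hq hb1 hadja.2.1
    have hord : Yv C.t a (C.mm q) < Yv C.t b (C.mm q) :=
      C.ord_trans' ha hb hab hmm12 haa hab' hadja.1 hadja.2.1 hadja.2.2.1
    refine ⟨haa, hab', hord, ?_⟩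
    unfold adj at hnadja
    push_neg at hnadja
    obtain ⟨w, hw, hwa, hw1, hw2⟩ := hnadja haa hab' hord
    have hwnea : a ≠ w := fun hh => absurd (hh ▸ hw1) (lt_irrefl _)
    have hwneb : w ≠ b := fun hh => absurd (hh ▸ hw2) (lt_irrefl _)
    have hwdead : ¬ alv C.t w (C.mp q) := by
      intro hwal
      exact hadja.2.2.2 w hw hwal
        ⟨C.ord_trans ha hw hwnea hmm12 haa hwa hadja.1 hwal hw1,
         C.ord_trans hw hb hwneb hmm12 hwa hab' hwal hadja.2.1 hw2⟩
    exact ⟨w, hw, C.dies_at hw hq hwa hwdead, hwa, hw1, hw2⟩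
  obtain ⟨hae, haf, hord, w, hw, hw2, hwa, hwe, hwf⟩ := witness e f he hf he1 hf1 hadj hnadj
  obtain ⟨hae', haf', hord', w', hw', hw2', hwa', hwe', hwf'⟩ :=
    witness e' f' he' hf' he1' hf1' hadj' hnadj'
  by_contra hee
  have hcase : ∀ (a b wa a' b' wb : Pt × Pt), a ∈ C.E → b ∈ C.E → wa ∈ C.E →
      a' ∈ C.E → b' ∈ C.E → wb ∈ C.E →
      C.adj (C.mp q) a b → C.adj (C.mp q) a' b' →
      alv C.t a (C.mm q) → alv C.t b (C.mm q) → alv C.t a' (C.mm q) → alv C.t b' (C.mm q) →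
      wa.2 = q → wb.2 = q → alv C.t wa (C.mm q) → alv C.t wb (C.mm q) →
      Yv C.t a (C.mm q) < Yv C.t wa (C.mm q) → Yv C.t wa (C.mm q) < Yv C.t b (C.mm q) →
      Yv C.t a' (C.mm q) < Yv C.t wb (C.mm q) → Yv C.t wb (C.mm q) < Yv C.t b' (C.mm q) →
      Yv C.t a (C.mm q) < Yv C.t a' (C.mm q) → False := by
    intro a b wa a' b' wb ha hb hwaE ha' hb' hwbE hadja hadja' haa hab haa' hab'
      hwa2 hwb2 hwaal hwbal h1 h2 h1' h2' hlt
    -- b cannot die at q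
    have hbnotq : ph C.t b.2 ≠ ph C.t q := by
      have := hadja.2.1.2
      unfold mp at this
      intro hh; rw [hh] at this; linarith [C.Dpos]
    have hbin : Yv C.t a' (C.mm q) < Yv C.t b (C.mm q) := by
      rcases lt_trichotomy (Yv C.t a' (C.mm q)) (Yv C.t b (C.mm q)) with h3 | h3 | h3
      · exact h3
      · exfalso
        -- a' = b impossible since Y equal implies same edge... use Ne_Yv unless a' = b
        by_cases hab2 : a' = b
        · -- then b is between wa and wb: wa < b = a' < wb
          subst hab2
          exact hbnotq (congrArg (ph C.t) (C.in_convex hq hwaE hwbE hb hwa2 hwb2 hab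
            h2 (h3 ▸ h1')))
        · exact C.Ne_Yv ha' hb hab2 haa' hab h3
      · -- b between wa and wb : wa < b < a' < wb
        exfalso
        exact hbnotq (congrArg (ph C.t) (C.in_convex hq hwaE hwbE hb hwa2 hwb2 hab
          h2 (lt_trans h3 h1')))
    -- now a < a' < b at mm q ; transfer to mp q and contradict adjacency
    have hnea : a ≠ a' := fun hh => absurd (hh ▸ hlt) (lt_irrefl _)
    have hneb : a' ≠ b := fun hh => absurd (hh ▸ hbin) (lt_irrefl _)
    exact hadja.2.2.2 a' ha' hadja'.1
      ⟨C.ord_trans ha ha' hnea hmm12 haa haa' hadja.1 hadja'.1 hlt,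
       C.ord_trans ha' hb hneb hmm12 haa' hab hadja'.1 hadja.2.1 hbin⟩
  rcases lt_trichotomy (Yv C.t e (C.mm q)) (Yv C.t e' (C.mm q)) with h1 | h1 | h1
  · exact hcase e f w e' f' w' he hf hw he' hf' hw' hadj hadj' hae haf hae' haf'
      hw2 hw2' hwa hwa' hwe hwf hwe' hwf' h1
  · exact C.Ne_Yv he he' hee hae hae' h1
  · exact hcase e' f' w' e f w he' hf' hw' he hf hw hadj' hadj hae' haf' hae haf
      hw2' hw2 hwa' hwa hwe' hwf' hwe hwf h1

lemma spec_unique {q : Pt} {k : Fin 3} {e f e' f' : Pt × Pt} (hq : q ∈ C.V)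
    (h : C.Spec e f q k) (h' : C.Spec e' f' q k) : e = e' := by
  fin_cases k
  · exact C.uniq0 hq h h'
  · exact C.uniq1 hq h h'
  · exact C.uniq2 hq h h'

/-- the set of non-top edges -/
def A : Finset (Pt × Pt) :=
  C.E.filter (fun e => ∃ f ∈ C.E, f ≠ e ∧ f.2 = e.2 ∧
    Yv C.t e (C.mm e.2) < Yv C.t f (C.mm e.2))

/-- every non-top edge determines a creation vertex and class -/
lemma key {e : Pt × Pt} (he : e ∈ C.A) :
    ∃ q ∈ C.V, ∃ k : Fin 3, ∃ f, C.Spec e f q k := by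
  obtain ⟨heE, hex⟩ := mem_filter.1 he
  obtain ⟨f₀, hf₀E, hf₀ne, hf₀2, hf₀Y⟩ := hex
  set p := e.2 with hp
  have hpV : p ∈ C.V := (C.hV e heE).2
  -- the successor f of e in the in-block of p
  have hFs : (C.E.filter (fun f => f.2 = p ∧
      Yv C.t e (C.mm p) < Yv C.t f (C.mm p))).Nonempty :=
    ⟨f₀, mem_filter.2 ⟨hf₀E, hf₀2, hf₀Y⟩⟩
  obtain ⟨f, hfFs, hfmin⟩ := Finset.exists_min_image _ (fun f => Yv C.t f (C.mm p)) hFs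
  obtain ⟨hfE, hf2, hfY⟩ := mem_filter.1 hfFs
  have hef : e ≠ f := fun hh => absurd (hh ▸ hfY) (lt_irrefl _)
  -- adjacency at mm p
  have hadjp : C.adj (C.mm p) e f := by
    refine ⟨C.alive_at_mm heE rfl, C.alive_at_mm hfE hf2, hfY, ?_⟩
    intro g hg hag ⟨hb1, hb2⟩
    have hg2 : g.2 = p := C.in_convex hpV heE hfE hg rfl hf2 hag hb1 hb2
    have : g ∈ C.E.filter (fun f => f.2 = p ∧ Yv C.t e (C.mm p) < Yv C.t f (C.mm p)) :=
      mem_filter.2 ⟨hg, hg2, hb1⟩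
    exact absurd (hfmin g this) (not_le.2 hb2)
  -- the set of vertices before p where the pair is not adjacent
  have hQne : (C.V.filter (fun r => ph C.t r < ph C.t p ∧ ¬ C.adj (C.mm r) e f)).Nonempty := by
    by_cases hc : ph C.t e.1 < ph C.t f.1
    · refine ⟨f.1, mem_filter.2 ⟨(C.hV f hfE).1, ?_, ?_⟩⟩
      · calc ph C.t f.1 < ph C.t f.2 := C.hor f hfE
          _ = ph C.t p := by rw [hf2]
      · intro hadj
        have := hadj.2.1.1
        unfold mm at this
        linarith [C.Dpos]
    · refine ⟨e.1, mem_filter.2 ⟨(C.hV e heE).1, C.hor e heE, ?_⟩⟩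
      intro hadj
      have := hadj.1.1
      unfold mm at this
      linarith [C.Dpos]
  obtain ⟨q, hqQ, hqmax⟩ := Finset.exists_max_image _ (fun r => ph C.t r) hQne
  obtain ⟨hqV, hqp, hqnadj⟩ := mem_filter.1 hqQ
  -- the next vertex after q
  have hRne : (C.V.filter (fun r => ph C.t q < ph C.t r)).Nonempty :=
    ⟨p, mem_filter.2 ⟨hpV, hqp⟩⟩
  obtain ⟨r₁, hr₁R, hr₁min⟩ := Finset.exists_min_image _ (fun r => ph C.t r) hRne
  obtain ⟨hr₁V, hqr₁⟩ := mem_filter.1 hr₁R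
  have hr₁p : ph C.t r₁ ≤ ph C.t p := hr₁min p (mem_filter.2 ⟨hpV, hqp⟩)
  have hadjr₁ : C.adj (C.mm r₁) e f := by
    rcases eq_or_lt_of_le hr₁p with heq | hlt
    · rwa [show r₁ = p from C.hinj hr₁V hpV heq]
    · by_contra hc
      have : r₁ ∈ C.V.filter (fun r => ph C.t r < ph C.t p ∧ ¬ C.adj (C.mm r) e f) :=
        mem_filter.2 ⟨hr₁V, hlt, hc⟩
      exact absurd (hqmax r₁ this) (not_le.2 hqr₁)
  -- transfer down to mp q
  have hadjq : C.adj (C.mp q) e f := by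
    apply C.adj_down heE hfE _ _ hadjr₁
    · have := C.gap hqV hr₁V hqr₁
      unfold mp mm
      linarith
    · intro r hrV ⟨h1, h2⟩
      have h3 : ph C.t q < ph C.t r := by
        unfold mp at h1; linarith [C.Dpos]
      have := hr₁min r (mem_filter.2 ⟨hrV, h3⟩)
      unfold mm at h2
      linarith [C.Dpos]
  -- not both endpoints start at q
  have hnboth : ¬(e.1 = q ∧ f.1 = q) := by
    rintro ⟨h1, h2⟩
    exact hef (Prod.ext (h1.trans h2.symm) (hf2.symm ▸ rfl))
  refine ⟨q, hqV, ?_⟩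
  by_cases hf1 : f.1 = q
  · have he1 : e.1 ≠ q := fun hh => hnboth ⟨hh, hf1⟩
    exact ⟨0, f, heE, hfE, hadjq, fun _ => ⟨hf1, he1⟩,
      fun hh => absurd hh (by decide), fun hh => absurd hh (by decide)⟩
  · by_cases he1 : e.1 = q
    · exact ⟨1, f, heE, hfE, hadjq, fun hh => absurd hh (by decide),
        fun _ => ⟨he1, hf1⟩, fun hh => absurd hh (by decide)⟩
    · exact ⟨2, f, heE, hfE, hadjq, fun hh => absurd hh (by decide),
        fun hh => absurd hh (by decide), fun _ => ⟨he1, hf1, hqnadj⟩⟩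

/-- packaged version of `key` -/
lemma key' {e : Pt × Pt} (he : e ∈ C.A) :
    ∃ qk : Pt × Fin 3, qk.1 ∈ C.V ∧ ∃ f, C.Spec e f qk.1 qk.2 := by
  obtain ⟨q, hq, k, f, hs⟩ := C.key he
  exact ⟨(q, k), hq, f, hs⟩

/-- the core sweep bound -/
theorem core (C : Cfg) : C.E.card ≤ 4 * C.V.card := by
  have hsplit := Finset.card_filter_add_card_filter_not
    (s := C.E) (p := fun e => ∃ f ∈ C.E, f ≠ e ∧ f.2 = e.2 ∧
      Yv C.t e (C.mm e.2) < Yv C.t f (C.mm e.2))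
  -- tops are at most |V|
  have htop : (C.E.filter (fun e => ¬ ∃ f ∈ C.E, f ≠ e ∧ f.2 = e.2 ∧
      Yv C.t e (C.mm e.2) < Yv C.t f (C.mm e.2))).card ≤ C.V.card := by
    apply Finset.card_le_card_of_injOn (fun e => e.2)
    · intro e heB
      exact (C.hV e (mem_filter.1 heB).1).2
    · intro a ha b hb hab
      simp only [mem_coe, mem_filter] at ha hb
      obtain ⟨haE, hatop⟩ := ha
      obtain ⟨hbE, hbtop⟩ := hb
      by_contra hne
      push_neg at hatop hbtop
      have haal : alv C.t a (C.mm a.2) := C.alive_at_mm haE rfl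
      have hbal : alv C.t b (C.mm a.2) := C.alive_at_mm hbE hab.symm
      have hab' : a.2 = b.2 := hab
      rcases lt_trichotomy (Yv C.t a (C.mm a.2)) (Yv C.t b (C.mm a.2)) with h1 | h1 | h1
      · exact absurd (hatop b hbE (fun hh => hne hh.symm) hab'.symm) (not_le.2 h1)
      · exact C.Ne_Yv haE hbE hne haal hbal h1
      · have h2 := hbtop a haE hne hab'
        rw [← hab'] at h2
        exact absurd h2 (not_le.2 h1)
  -- non-tops are at most 3|V|
  have hA : C.A.card ≤ 3 * C.V.card := by
    by_contra hc
    push_neg at hc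
    have hmap : ∀ e ∈ C.A, (if h : ∃ qk : Pt × Fin 3, qk.1 ∈ C.V ∧ ∃ f, C.Spec e f qk.1 qk.2
        then h.choose else ((0:Pt), (0 : Fin 3))) ∈ C.V ×ˢ (univ : Finset (Fin 3)) := by
      intro e he
      have h := C.key' he
      rw [dif_pos h]
      exact mem_product.2 ⟨h.choose_spec.1, mem_univ _⟩
    have hcard : (C.V ×ˢ (univ : Finset (Fin 3))).card < C.A.card := by
      rw [card_product, card_univ, Fintype.card_fin]
      omega
    obtain ⟨a, ha, b, hb, hab, heq⟩ :=
      Finset.exists_ne_map_eq_of_card_lt_of_maps_to hcard hmap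
    have hha := C.key' ha
    have hhb := C.key' hb
    rw [dif_pos hha, dif_pos hhb] at heq
    obtain ⟨fa, hfa⟩ := hha.choose_spec.2
    obtain ⟨fb, hfb⟩ := hhb.choose_spec.2
    rw [heq] at hfa
    exact hab (C.spec_unique hhb.choose_spec.1 hfa hfb)
  have : C.A.card + (C.E.filter (fun e => ¬ ∃ f ∈ C.E, f ≠ e ∧ f.2 = e.2 ∧
      Yv C.t e (C.mm e.2) < Yv C.t f (C.mm e.2))).card = C.E.card := hsplit
  omega

/-- crossing-free geometric graphs have at most 4|V| edges -/
theorem planar_bound (V : Finset Pt) (E : Finset (Pt × Pt))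
    (hV : ∀ e ∈ E, e.1 ∈ V ∧ e.2 ∈ V) (hne : ∀ e ∈ E, e.1 ≠ e.2)
    (hcr : ∀ e ∈ E, ∀ f ∈ E, e ≠ f → ¬ cross e f)
    (hpt : ∀ e ∈ E, ∀ p ∈ V, p ∉ openSegment ℝ e.1 e.2) :
    E.card ≤ 4 * V.card := by
  rcases eq_or_ne E ∅ with rfl | hEne
  · simp
  -- choose a generic direction t
  obtain ⟨t, ht⟩ := Infinite.exists_notMem_finset
    (((V ×ˢ V).filter (fun ab => ab.1 ≠ ab.2)).image
      (fun ab => -((ab.1.1 - ab.2.1) / (ab.1.2 - ab.2.2))))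
  have hinj : Set.InjOn (ph t) ↑V := by
    intro a ha b hb hab
    by_contra hne'
    rcases eq_or_ne a.2 b.2 with h2 | h2
    · exact hne' (Prod.ext (by simpa [ph, h2] using hab) h2)
    · apply ht
      apply mem_image.2
      refine ⟨(a, b), mem_filter.2 ⟨mem_product.2 ⟨ha, hb⟩, hne'⟩, ?_⟩
      have h22 : a.2 - b.2 ≠ 0 := sub_ne_zero.2 h2
      simp only [ph] at hab
      field_simp
      linarith
  -- orient the edges
  set g : Pt × Pt → Pt × Pt := fun e => if ph t e.1 < ph t e.2 then e else (e.2, e.1) with hg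
  have hseg : ∀ e, openSegment ℝ (g e).1 (g e).2 = openSegment ℝ e.1 e.2 := by
    intro e
    by_cases hcase : ph t e.1 < ph t e.2
    · simp only [hg, if_pos hcase]
    · simp only [hg, if_neg hcase]
      exact openSegment_symm ℝ e.2 e.1
  have hginj : Set.InjOn g ↑E := by
    intro a ha b hb hab
    by_contra hne'
    apply hcr a ha b hb hne'
    have : openSegment ℝ a.1 a.2 = openSegment ℝ b.1 b.2 := by
      rw [← hseg a, ← hseg b, hab]
    rw [cross, this, Set.inter_self]
    exact openSegment_nonempty (hne b hb)
  set E' : Finset (Pt × Pt) := E.image g with hE'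
  have hcard : E'.card = E.card := Finset.card_image_of_injOn hginj
  have hmem : ∀ e' ∈ E', ∃ e ∈ E, g e = e' := fun e' he' => mem_image.1 he'
  have horE : ∀ e ∈ E, ph t (g e).1 < ph t (g e).2 := by
    intro e he
    by_cases hcase : ph t e.1 < ph t e.2
    · simpa only [hg, if_pos hcase] using hcase
    · simp only [hg, if_neg hcase]
      push_neg at hcase
      rcases eq_or_lt_of_le hcase with heq | hlt
      · exact absurd (hinj (hV e he).2 (hV e he).1 heq) (Ne.symm (hne e he))
      · exact hlt
  set C : Cfg := {
    t := t, V := V, E := E'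
    hV := by
      intro e' he'
      obtain ⟨e, he, rfl⟩ := hmem e' he'
      by_cases hcase : ph t e.1 < ph t e.2
      · simp only [hg, if_pos hcase]
        exact hV e he
      · simp only [hg, if_neg hcase]
        exact ⟨(hV e he).2, (hV e he).1⟩
    hor := by
      intro e' he'
      obtain ⟨e, he, rfl⟩ := hmem e' he'
      exact horE e he
    hinj := hinj
    hcr := by
      intro a' ha' b' hb' hne' hcross
      obtain ⟨a, ha, rfl⟩ := hmem a' ha'
      obtain ⟨b, hb, rfl⟩ := hmem b' hb'
      have hab : a ≠ b := fun hh => hne' (hh ▸ rfl)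
      apply hcr a ha b hb hab
      rwa [cross, ← hseg a, ← hseg b]
    hpt := by
      intro e' he' p hp
      obtain ⟨e, he, rfl⟩ := hmem e' he'
      rw [hseg e]
      exact hpt e he p hp
    hne := by
      obtain ⟨e, he⟩ := Finset.nonempty_iff_ne_empty.2 hEne
      exact ⟨g e, mem_image_of_mem g he⟩ } with hC
  have := C.core
  rw [hC] at this
  simp only at this
  omega

/-- with crossings: E.card ≤ 4 V.card + X2 E -/
theorem planar_defect : ∀ (n : ℕ) (V : Finset Pt) (E : Finset (Pt × Pt)), E.card = n →
    (∀ e ∈ E, e.1 ∈ V ∧ e.2 ∈ V) → (∀ e ∈ E, e.1 ≠ e.2) →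
    (∀ e ∈ E, ∀ p ∈ V, p ∉ openSegment ℝ e.1 e.2) →
    E.card ≤ 4 * V.card + X2 E := by
  intro n
  induction n using Nat.strong_induction_on with
  | _ n ih =>
    intro V E hn hV hne hpt
    by_cases hcr : ∀ e ∈ E, ∀ f ∈ E, e ≠ f → ¬ cross e f
    · exact le_add_right (planar_bound V E hV hne hcr hpt)
    · push_neg at hcr
      obtain ⟨e₀, he₀, f₀, hf₀, hne₀, hcross₀⟩ := hcr
      set E' := E.erase e₀ with hE'
      have hcard : E'.card = E.card - 1 := Finset.card_erase_of_mem he₀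
      have hlt : E'.card < n := by
        rw [hcard, ← hn]
        exact Nat.sub_lt (Finset.card_pos.2 ⟨e₀, he₀⟩) one_pos
      have hsub : E' ⊆ E := Finset.erase_subset _ _
      have ihE := ih E'.card hlt V E' rfl (fun e he => hV e (hsub he))
        (fun e he => hne e (hsub he)) (fun e he => hpt e (hsub he))
      have hX : X2 E' + 1 ≤ X2 E := by
        have h1 : (e₀, f₀) ∉ (E' ×ˢ E').filter (fun pr => pr.1 ≠ pr.2 ∧ cross pr.1 pr.2) := by
          intro hmem
          have := (mem_product.1 (mem_filter.1 hmem).1).1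
          exact Finset.notMem_erase e₀ E this
        have h2 : insert (e₀, f₀) ((E' ×ˢ E').filter (fun pr => pr.1 ≠ pr.2 ∧ cross pr.1 pr.2))
            ⊆ (E ×ˢ E).filter (fun pr => pr.1 ≠ pr.2 ∧ cross pr.1 pr.2) := by
          intro pr hpr
          rcases Finset.mem_insert.1 hpr with rfl | hpr
          · exact mem_filter.2 ⟨mem_product.2 ⟨he₀, hf₀⟩, hne₀, hcross₀⟩
          · obtain ⟨hp, hc⟩ := mem_filter.1 hpr
            obtain ⟨hp1, hp2⟩ := mem_product.1 hp
            exact mem_filter.2 ⟨mem_product.2 ⟨hsub hp1, hsub hp2⟩, hc⟩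
        calc X2 E' + 1
            = (insert (e₀, f₀) ((E' ×ˢ E').filter
                (fun pr => pr.1 ≠ pr.2 ∧ cross pr.1 pr.2))).card := by
              rw [Finset.card_insert_of_notMem h1]; rfl
          _ ≤ X2 E := Finset.card_le_card h2
      have hEcard : E.card = E'.card + 1 := by
        rw [hcard]
        have : 0 < E.card := Finset.card_pos.2 ⟨e₀, he₀⟩
        omega
      omega

/-- binomial identity -/
lemma binom_sum (U : Finset Pt) (p q : ℝ) :
    ∑ T ∈ U.powerset, p ^ T.card * q ^ (U.card - T.card) = (p + q) ^ U.card := by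
  induction U using Finset.induction_on with
  | empty => simp
  | @insert a U ha ih =>
    rw [Finset.sum_powerset_insert ha, Finset.card_insert_of_notMem ha]
    have h1 : ∑ T ∈ U.powerset, p ^ T.card * q ^ (U.card + 1 - T.card)
        = q * ((p + q) ^ U.card) := by
      rw [← ih, Finset.mul_sum]
      apply Finset.sum_congr rfl
      intro T hT
      have hTle : T.card ≤ U.card := Finset.card_le_card (Finset.mem_powerset.1 hT)
      have heq : U.card + 1 - T.card = (U.card - T.card) + 1 := by omega
      rw [heq, pow_succ]
      ring
    have h2 : ∑ T ∈ U.powerset, p ^ (insert a T).card * q ^ (U.card + 1 - (insert a T).card)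
        = p * ((p + q) ^ U.card) := by
      rw [← ih, Finset.mul_sum]
      apply Finset.sum_congr rfl
      intro T hT
      have hTle : T.card ≤ U.card := Finset.card_le_card (Finset.mem_powerset.1 hT)
      have haT : a ∉ T := fun h => ha (Finset.mem_powerset.1 hT h)
      rw [Finset.card_insert_of_notMem haT]
      have heq : U.card + 1 - (T.card + 1) = U.card - T.card := by omega
      rw [heq, pow_succ]
      ring
    rw [h1, h2, pow_succ]
    ring

/-- probability that a fixed subset survives -/
lemma subset_sum (V A : Finset Pt) (hA : A ⊆ V) (p : ℝ) :
    ∑ S ∈ V.powerset, (if A ⊆ S then p ^ S.card * (1 - p) ^ (V.card - S.card) else 0)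
      = p ^ A.card := by
  rw [Finset.sum_ite, Finset.sum_const_zero, add_zero]
  have hbij : ∑ S ∈ V.powerset.filter (fun S => A ⊆ S),
      p ^ S.card * (1 - p) ^ (V.card - S.card)
      = ∑ T ∈ (V \ A).powerset, p ^ (A ∪ T).card * (1 - p) ^ (V.card - (A ∪ T).card) := by
    apply Finset.sum_nbij' (fun S => S \ A) (fun T => A ∪ T)
    · intro S hS
      obtain ⟨hS1, hS2⟩ := Finset.mem_filter.1 hS
      exact Finset.mem_powerset.2 (Finset.sdiff_subset_sdiff (Finset.mem_powerset.1 hS1)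
        Finset.Subset.rfl)
    · intro T hT
      have hT' := Finset.mem_powerset.1 hT
      refine Finset.mem_filter.2 ⟨Finset.mem_powerset.2 ?_, Finset.subset_union_left⟩
      exact Finset.union_subset hA (hT'.trans (Finset.sdiff_subset))
    · intro S hS
      obtain ⟨hS1, hS2⟩ := Finset.mem_filter.1 hS
      exact Finset.union_sdiff_of_subset hS2
    · intro T hT
      have hT' := Finset.mem_powerset.1 hT
      apply Finset.union_sdiff_cancel_left
      exact Finset.disjoint_of_subset_right hT' (Finset.disjoint_sdiff)
    · intro S hS
      obtain ⟨hS1, hS2⟩ := Finset.mem_filter.1 hS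
      rw [Finset.union_sdiff_of_subset hS2]
  rw [hbij]
  have hstep : ∀ T ∈ (V \ A).powerset,
      p ^ (A ∪ T).card * (1 - p) ^ (V.card - (A ∪ T).card)
      = p ^ A.card * (p ^ T.card * (1 - p) ^ ((V \ A).card - T.card)) := by
    intro T hT
    have hT' := Finset.mem_powerset.1 hT
    have hdisj : Disjoint A T :=
      Finset.disjoint_of_subset_right hT' (Finset.disjoint_sdiff)
    rw [Finset.card_union_of_disjoint hdisj]
    have h1 : (V \ A).card = V.card - A.card := Finset.card_sdiff_of_subset hA
    have h2 : T.card ≤ (V \ A).card := Finset.card_le_card hT'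
    have h3 : A.card ≤ V.card := Finset.card_le_card hA
    have h4 : V.card - (A.card + T.card) = (V \ A).card - T.card := by omega
    rw [h4, pow_add]
    ring
  rw [Finset.sum_congr rfl hstep, ← Finset.mul_sum, binom_sum]
  simp

/-- expectation of a count of surviving k-subsets -/
lemma exp_count {ι : Type} (V : Finset Pt) (p : ℝ) (I : Finset ι) (A : ι → Finset Pt)
    (hA : ∀ i ∈ I, A i ⊆ V) (k : ℕ) (hk : ∀ i ∈ I, (A i).card = k) :
    ∑ S ∈ V.powerset, (p ^ S.card * (1 - p) ^ (V.card - S.card)) *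
      ((I.filter (fun i => A i ⊆ S)).card : ℝ) = p ^ k * I.card := by
  have hswap : ∀ S : Finset Pt,
      ((I.filter (fun i => A i ⊆ S)).card : ℝ) = ∑ i ∈ I, (if A i ⊆ S then (1:ℝ) else 0) := by
    intro S
    rw [Finset.sum_ite, Finset.sum_const_zero, add_zero, Finset.sum_const]
    simp
  calc ∑ S ∈ V.powerset, (p ^ S.card * (1 - p) ^ (V.card - S.card)) *
        ((I.filter (fun i => A i ⊆ S)).card : ℝ)
      = ∑ S ∈ V.powerset, ∑ i ∈ I,
          (if A i ⊆ S then p ^ S.card * (1 - p) ^ (V.card - S.card) else 0) := by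
        apply Finset.sum_congr rfl
        intro S hS
        rw [hswap S, Finset.mul_sum]
        apply Finset.sum_congr rfl
        intro i hi
        by_cases h : A i ⊆ S <;> simp [h]
    _ = ∑ i ∈ I, ∑ S ∈ V.powerset,
          (if A i ⊆ S then p ^ S.card * (1 - p) ^ (V.card - S.card) else 0) :=
        Finset.sum_comm
    _ = ∑ i ∈ I, p ^ (A i).card := by
        apply Finset.sum_congr rfl
        intro i hi
        exact subset_sum V (A i) (hA i hi) p
    _ = p ^ k * I.card := by
        rw [Finset.sum_congr rfl (fun i hi => by rw [hk i hi])]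
        rw [Finset.sum_const]
        simp [mul_comm]

/-- the crossing number inequality -/
theorem cube_bound (V : Finset Pt) (E : Finset (Pt × Pt))
    (hV : ∀ e ∈ E, e.1 ∈ V ∧ e.2 ∈ V) (hne : ∀ e ∈ E, e.1 ≠ e.2)
    (hpt : ∀ e ∈ E, ∀ p ∈ V, p ∉ openSegment ℝ e.1 e.2)
    (hshare : ∀ e ∈ E, ∀ f ∈ E, e ≠ f →
      (e.1 = f.1 ∨ e.1 = f.2 ∨ e.2 = f.1 ∨ e.2 = f.2) → ¬ cross e f) :
    ((E.card : ℝ))^3 ≤ 125 * (V.card:ℝ)^2 * (X2 E : ℝ) + (5*(V.card:ℝ))^3 := by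
  set v : ℝ := (V.card : ℝ) with hvdef
  set ecard : ℝ := (E.card : ℝ) with hedef
  have hv0 : 0 ≤ v := Nat.cast_nonneg _
  have hX0 : (0:ℝ) ≤ (X2 E : ℝ) := Nat.cast_nonneg _
  by_cases hle : ecard ≤ 5 * v
  · have h1 : ecard ^ 3 ≤ (5*v)^3 := by
      apply pow_le_pow_left₀ (Nat.cast_nonneg _) hle
    nlinarith [sq_nonneg v, mul_nonneg (mul_nonneg (by norm_num : (0:ℝ) ≤ 125)
      (sq_nonneg v)) hX0]
  · push_neg at hle
    have hE1 : 1 ≤ E.card := by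
      by_contra h
      push_neg at h
      have h0 : E.card = 0 := by omega
      have : ecard = 0 := by rw [hedef, h0]; norm_num
      linarith
    have hEne : E.Nonempty := Finset.card_pos.1 hE1
    have hv1 : 1 ≤ v := by
      obtain ⟨e₀, he₀⟩ := hEne
      have h1 : e₀.1 ∈ V := (hV e₀ he₀).1
      have h2 : 1 ≤ V.card := Finset.card_pos.2 ⟨e₀.1, h1⟩
      rw [hvdef]
      exact_mod_cast h2
    have he0 : (0:ℝ) < ecard := by linarith
    set p : ℝ := 5 * v / ecard with hpdef
    have hp0 : 0 < p := div_pos (by linarith) he0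
    have hp1 : p ≤ 1 := by
      rw [hpdef, div_le_one he0]; linarith
    have hpe : p * ecard = 5 * v := by
      rw [hpdef]; field_simp
    -- pointwise inequality
    have hpoint : ∀ S ∈ V.powerset,
        ((E.filter (fun e => e.1 ∈ S ∧ e.2 ∈ S)).card : ℝ) - 4 * (S.card:ℝ)
          ≤ (X2 (E.filter (fun e => e.1 ∈ S ∧ e.2 ∈ S)) : ℝ) := by
      intro S hS
      have hSV := Finset.mem_powerset.1 hS
      set ES := E.filter (fun e => e.1 ∈ S ∧ e.2 ∈ S) with hES
      have := planar_defect ES.card S ES rfl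
        (fun e he => (Finset.mem_filter.1 he).2)
        (fun e he => hne e (Finset.mem_filter.1 he).1)
        (fun e he q hq => hpt e (Finset.mem_filter.1 he).1 q (hSV hq))
      have hcast : (ES.card : ℝ) ≤ 4 * (S.card:ℝ) + (X2 ES : ℝ) := by exact_mod_cast this
      linarith
    -- weights
    set w : Finset Pt → ℝ := fun S => p ^ S.card * (1 - p) ^ (V.card - S.card) with hw
    have hw0 : ∀ S, 0 ≤ w S :=
      fun S => mul_nonneg (pow_nonneg hp0.le _) (pow_nonneg (by linarith) _)
    -- expectations
    have I1 : ∑ S ∈ V.powerset, w S * ((S.card : ℕ) : ℝ) = p * v := by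
      have hec := exp_count V p V (fun x => ({x} : Finset Pt))
        (fun x hx => Finset.singleton_subset_iff.2 hx) 1 (fun x hx => Finset.card_singleton x)
      simp only [Finset.singleton_subset_iff, pow_one] at hec
      calc ∑ S ∈ V.powerset, w S * ((S.card : ℕ) : ℝ)
          = ∑ S ∈ V.powerset, (p ^ S.card * (1 - p) ^ (V.card - S.card)) *
              (((V.filter (fun i => i ∈ S)).card : ℕ) : ℝ) := by
            apply Finset.sum_congr rfl
            intro S hS
            have hSV := Finset.mem_powerset.1 hS
            have h1 : V.filter (fun i => i ∈ S) = S := by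
              ext x
              simp only [Finset.mem_filter]
              exact ⟨fun h => h.2, fun h => ⟨hSV h, h⟩⟩
            rw [h1, hw]
        _ = p * v := by rw [hec, hvdef]
    have I2 : ∑ S ∈ V.powerset, w S * (((E.filter (fun e => e.1 ∈ S ∧ e.2 ∈ S)).card : ℕ) : ℝ)
        = p^2 * ecard := by
      have hec := exp_count V p E (fun e => ({e.1, e.2} : Finset Pt))
        (fun e he => Finset.insert_subset ((hV e he).1)
          (Finset.singleton_subset_iff.2 (hV e he).2))
        2 (fun e he => Finset.card_pair (hne e he))
      simp only [Finset.insert_subset_iff, Finset.singleton_subset_iff] at hec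
      calc ∑ S ∈ V.powerset, w S * (((E.filter (fun e => e.1 ∈ S ∧ e.2 ∈ S)).card : ℕ) : ℝ)
          = ∑ S ∈ V.powerset, (p ^ S.card * (1 - p) ^ (V.card - S.card)) *
              (((E.filter (fun i => i.1 ∈ S ∧ i.2 ∈ S)).card : ℕ) : ℝ) := by
            apply Finset.sum_congr rfl
            intro S hS
            rw [hw]
        _ = p^2 * ecard := by rw [hec, hedef]
    have I3 : ∑ S ∈ V.powerset, w S * ((X2 (E.filter (fun e => e.1 ∈ S ∧ e.2 ∈ S)) : ℕ) : ℝ)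
        = p^4 * (X2 E : ℝ) := by
      set I : Finset ((Pt × Pt) × (Pt × Pt)) :=
        (E ×ˢ E).filter (fun pr => pr.1 ≠ pr.2 ∧ cross pr.1 pr.2) with hI
      have hA4 : ∀ pr ∈ I, ({pr.1.1, pr.1.2, pr.2.1, pr.2.2} : Finset Pt).card = 4 := by
        intro pr hpr
        obtain ⟨hp2, hne', hcross'⟩ := Finset.mem_filter.1 hpr
        obtain ⟨h1, h2⟩ := Finset.mem_product.1 hp2
        have d1 : pr.1.1 ≠ pr.1.2 := hne _ h1
        have d2 : pr.2.1 ≠ pr.2.2 := hne _ h2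
        have hno := hshare pr.1 h1 pr.2 h2 hne'
        have d3 : pr.1.1 ≠ pr.2.1 := fun h => hno (Or.inl h) hcross'
        have d4 : pr.1.1 ≠ pr.2.2 := fun h => hno (Or.inr (Or.inl h)) hcross'
        have d5 : pr.1.2 ≠ pr.2.1 := fun h => hno (Or.inr (Or.inr (Or.inl h))) hcross'
        have d6 : pr.1.2 ≠ pr.2.2 := fun h => hno (Or.inr (Or.inr (Or.inr h))) hcross'
        rw [Finset.card_insert_of_notMem (by simp [d1, d3, d4]),
          Finset.card_insert_of_notMem (by simp [d5, d6]),
          Finset.card_insert_of_notMem (by simp [d2]),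
          Finset.card_singleton]
      have hAV : ∀ pr ∈ I, ({pr.1.1, pr.1.2, pr.2.1, pr.2.2} : Finset Pt) ⊆ V := by
        intro pr hpr
        obtain ⟨hp2, -, -⟩ := Finset.mem_filter.1 hpr
        obtain ⟨h1, h2⟩ := Finset.mem_product.1 hp2
        intro x hx
        simp only [Finset.mem_insert, Finset.mem_singleton] at hx
        rcases hx with rfl | rfl | rfl | rfl
        exacts [(hV _ h1).1, (hV _ h1).2, (hV _ h2).1, (hV _ h2).2]
      have hec := exp_count V p I (fun pr => ({pr.1.1, pr.1.2, pr.2.1, pr.2.2} : Finset Pt))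
        hAV 4 hA4
      simp only [Finset.insert_subset_iff, Finset.singleton_subset_iff] at hec
      have hset : ∀ S : Finset Pt, I.filter
            (fun pr => pr.1.1 ∈ S ∧ pr.1.2 ∈ S ∧ pr.2.1 ∈ S ∧ pr.2.2 ∈ S)
          = ((E.filter (fun e => e.1 ∈ S ∧ e.2 ∈ S)) ×ˢ
              (E.filter (fun e => e.1 ∈ S ∧ e.2 ∈ S))).filter
            (fun pr => pr.1 ≠ pr.2 ∧ cross pr.1 pr.2) := by
        intro S
        ext pr
        simp only [hI, Finset.mem_filter, Finset.mem_product]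
        tauto
      calc ∑ S ∈ V.powerset, w S * ((X2 (E.filter (fun e => e.1 ∈ S ∧ e.2 ∈ S)) : ℕ) : ℝ)
          = ∑ S ∈ V.powerset, (p ^ S.card * (1 - p) ^ (V.card - S.card)) *
              (((I.filter (fun i => i.1.1 ∈ S ∧ i.1.2 ∈ S ∧ i.2.1 ∈ S ∧ i.2.2 ∈ S)).card : ℕ) : ℝ) := by
            apply Finset.sum_congr rfl
            intro S hS
            rw [hw]
            congr 2
            rw [hset S]
            rfl
        _ = p^4 * (X2 E : ℝ) := by
            rw [hec]
            rfl
    -- summing the pointwise inequality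
    have hsum : p^2 * ecard - 4 * (p * v) ≤ p^4 * (X2 E : ℝ) := by
      rw [← I1, ← I2, ← I3]
      have : ∀ S ∈ V.powerset,
          w S * ((E.filter (fun e => e.1 ∈ S ∧ e.2 ∈ S)).card : ℝ) - 4 * (w S * (S.card:ℝ))
            ≤ w S * ((X2 (E.filter (fun e => e.1 ∈ S ∧ e.2 ∈ S))) : ℝ) := by
        intro S hS
        have h := hpoint S hS
        have := mul_le_mul_of_nonneg_left h (hw0 S)
        rw [mul_sub] at this
        linarith
      calc (∑ S ∈ V.powerset, w S * ((E.filter (fun e => e.1 ∈ S ∧ e.2 ∈ S)).card : ℝ))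
            - 4 * ∑ S ∈ V.powerset, w S * (S.card:ℝ)
          = ∑ S ∈ V.powerset, (w S * ((E.filter (fun e => e.1 ∈ S ∧ e.2 ∈ S)).card : ℝ)
              - 4 * (w S * (S.card:ℝ))) := by
            rw [Finset.sum_sub_distrib, Finset.mul_sum]
        _ ≤ ∑ S ∈ V.powerset, w S * ((X2 (E.filter (fun e => e.1 ∈ S ∧ e.2 ∈ S))) : ℝ) :=
            Finset.sum_le_sum this
    -- final algebra
    have h1 : p * v ≤ p^4 * (X2 E : ℝ) := by
      have : p^2 * ecard = p * (p * ecard) := by ring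
      rw [this, hpe] at hsum
      linarith
    have h2 : v ≤ p^3 * (X2 E : ℝ) := by
      have := (mul_le_mul_iff_right₀ hp0).1 (by linarith [h1] : p * v ≤ p * (p^3 * (X2 E : ℝ)))
      linarith [this]
    have hp3 : p^3 * ecard^3 = 125 * v^3 := by
      have : (p * ecard)^3 = (5*v)^3 := by rw [hpe]
      nlinarith [this]
    have h3 : v * ecard^3 ≤ 125 * v^3 * (X2 E : ℝ) := by
      have := mul_le_mul_of_nonneg_right h2 (le_of_lt (pow_pos he0 3))
      calc v * ecard^3 ≤ p^3 * (X2 E : ℝ) * ecard^3 := this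
        _ = (p^3 * ecard^3) * (X2 E : ℝ) := by ring
        _ = 125 * v^3 * (X2 E : ℝ) := by rw [hp3]
    have hv0' : 0 < v := by linarith
    nlinarith [h3, mul_pos hv0' hv0', sq_nonneg v, pow_pos hv0' 3,
      mul_nonneg (mul_nonneg (by norm_num : (0:ℝ) ≤ 125) (sq_nonneg v)) hX0]

/-! ### Lines -/

def lineSet (x v : Pt) : Set Pt := {y | ∃ s : ℝ, y = x + s • v}

def dotp (a b : Pt) : ℝ := a.1 * b.1 + a.2 * b.2

def tau (x v p : Pt) : ℝ := dotp (p - x) v / dotp v v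

lemma dotp_vv_pos {v : Pt} (hv : v ≠ 0) : 0 < dotp v v := by
  rcases eq_or_ne v.1 0 with h1 | h1
  · rcases eq_or_ne v.2 0 with h2 | h2
    · exact absurd (Prod.ext h1 h2) hv
    · have h3 := mul_self_pos.2 h2
      unfold dotp; nlinarith [mul_self_nonneg v.1]
  · have h3 := mul_self_pos.2 h1
    unfold dotp; nlinarith [mul_self_nonneg v.2]

lemma tau_spec {x v p : Pt} (hv : v ≠ 0) {s : ℝ} (h : p = x + s • v) : tau x v p = s := by
  have hd := dotp_vv_pos hv
  have hd' : dotp v v ≠ 0 := ne_of_gt hd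
  have h1 : p - x = s • v := by rw [h]; abel
  unfold tau
  rw [h1]
  have h2 : dotp (s • v) v = s * dotp v v := by
    unfold dotp
    simp only [Prod.smul_fst, Prod.smul_snd, smul_eq_mul]
    ring
  rw [h2]
  field_simp

lemma mem_line_param {x v p : Pt} (hv : v ≠ 0) (h : p ∈ lineSet x v) :
    p = x + (tau x v p) • v := by
  obtain ⟨s, rfl⟩ := h
  rw [tau_spec hv rfl]

lemma param_inj {x v p q : Pt} (hv : v ≠ 0) (hp : p ∈ lineSet x v) (hq : q ∈ lineSet x v)
    (h : tau x v p = tau x v q) : p = q := by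
  rw [mem_line_param hv hp, mem_line_param hv hq, h]

lemma comb_mem_line (x v : Pt) (α β θ : ℝ) :
    (x + α • v) + θ • ((x + β • v) - (x + α • v)) = x + (α + θ * (β - α)) • v := by
  have : (x + β • v) - (x + α • v) = (β - α) • v := by
    rw [sub_smul]; abel
  rw [this, smul_smul, add_smul]
  abel

lemma openSegment_param {x v a b z : Pt} (hv : v ≠ 0) (ha : a ∈ lineSet x v)
    (hb : b ∈ lineSet x v) (hab : a ≠ b) :
    z ∈ openSegment ℝ a b ↔ z ∈ lineSet x v ∧
      ((tau x v a < tau x v z ∧ tau x v z < tau x v b) ∨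
       (tau x v b < tau x v z ∧ tau x v z < tau x v a)) := by
  set α := tau x v a with hα
  set β := tau x v b with hβ
  have hpa : a = x + α • v := mem_line_param hv ha
  have hpb : b = x + β • v := mem_line_param hv hb
  have hαβ : α ≠ β := fun h => hab (by rw [hpa, hpb, h])
  constructor
  · intro hz
    rw [openSegment_eq_image'] at hz
    obtain ⟨θ, ⟨hθ0, hθ1⟩, hzeq⟩ := hz
    have hzeq' : z = a + θ • (b - a) := hzeq.symm
    have hzval : z = x + (α + θ * (β - α)) • v := by
      rw [hzeq', hpa, hpb]; exact comb_mem_line x v α β θ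
    rw [hzval]
    refine ⟨⟨_, rfl⟩, ?_⟩
    rw [tau_spec hv rfl]
    rcases lt_or_gt_of_ne hαβ with h | h
    · left; constructor <;> nlinarith
    · right; constructor <;> nlinarith
  · rintro ⟨hzl, hord⟩
    set ρ := tau x v z with hρ
    have hpz : z = x + ρ • v := mem_line_param hv hzl
    rw [openSegment_eq_image']
    refine ⟨(ρ - α) / (β - α), ⟨?_, ?_⟩, ?_⟩
    · rcases hord with ⟨h1, h2⟩ | ⟨h1, h2⟩
      · apply div_pos <;> linarith
      · rw [div_pos_iff]; right; constructor <;> linarith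
    · rcases hord with ⟨h1, h2⟩ | ⟨h1, h2⟩
      · rw [div_lt_one (by linarith)]; linarith
      · rw [div_lt_one_of_neg (by linarith)]; linarith
    · have hba : β - α ≠ 0 := sub_ne_zero.2 (Ne.symm hαβ)
      have : a + ((ρ - α) / (β - α)) • (b - a) = x + (α + (ρ - α) / (β - α) * (β - α)) • v := by
        rw [hpa, hpb]; exact comb_mem_line x v α β _
      show a + ((ρ - α) / (β - α)) • (b - a) = z
      rw [this, hpz]
      congr 2
      field_simp
      ring

lemma openSegment_subset_line {x v a b : Pt} (hv : v ≠ 0) (ha : a ∈ lineSet x v)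
    (hb : b ∈ lineSet x v) : openSegment ℝ a b ⊆ lineSet x v := by
  intro z hz
  rw [openSegment_eq_image'] at hz
  obtain ⟨θ, hθ, hzeq⟩ := hz
  have hzeq' : z = a + θ • (b - a) := hzeq.symm
  rw [hzeq', mem_line_param hv ha, mem_line_param hv hb, comb_mem_line]
  exact ⟨_, rfl⟩

/-- two distinct lines meet in at most one point -/
lemma line_inter {x v x' v' : Pt} (hv : v ≠ 0) (hv' : v' ≠ 0)
    (hne : lineSet x v ≠ lineSet x' v') {z w : Pt}
    (hz : z ∈ lineSet x v ∩ lineSet x' v') (hw : w ∈ lineSet x v ∩ lineSet x' v') :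
    z = w := by
  by_contra hzw
  apply hne
  have key : ∀ (y u : Pt), u ≠ 0 → z ∈ lineSet y u → w ∈ lineSet y u →
      lineSet y u = lineSet z (w - z) := by
    intro y u hu hz' hw'
    obtain ⟨a, ha⟩ := hz'
    obtain ⟨b, hb⟩ := hw'
    have hab : a ≠ b := by
      intro h; exact hzw (by rw [ha, hb, h])
    have hwz : w - z = (b - a) • u := by
      rw [ha, hb, sub_smul]; abel
    ext q
    constructor
    · rintro ⟨s, rfl⟩
      refine ⟨(s - a) / (b - a), ?_⟩
      have hba : b - a ≠ 0 := sub_ne_zero.2 (Ne.symm hab)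
      have h3 : (s - a) / (b - a) * (b - a) = s - a := by field_simp
      rw [hwz, smul_smul, h3, ha, sub_smul]
      abel
    · rintro ⟨r, rfl⟩
      refine ⟨a + r * (b - a), ?_⟩
      rw [hwz, smul_smul, ha, add_smul]
      abel
  rw [key x v hv (Set.mem_of_mem_inter_left hz) (Set.mem_of_mem_inter_left hw),
    key x' v' hv' (Set.mem_of_mem_inter_right hz) (Set.mem_of_mem_inter_right hw)]

/-! ### edges along a line -/

def lexlt (a b : Pt) : Prop := a.1 < b.1 ∨ (a.1 = b.1 ∧ a.2 < b.2)

lemma lexlt_ne {a b : Pt} (h : lexlt a b) : a ≠ b := by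
  rintro rfl
  rcases h with h | ⟨-, h⟩ <;> exact absurd h (lt_irrefl _)

lemma lexlt_total {a b : Pt} (h : a ≠ b) : lexlt a b ∨ lexlt b a := by
  rcases lt_trichotomy a.1 b.1 with h1 | h1 | h1
  · exact Or.inl (Or.inl h1)
  · rcases lt_trichotomy a.2 b.2 with h2 | h2 | h2
    · exact Or.inl (Or.inr ⟨h1, h2⟩)
    · exact absurd (Prod.ext h1 h2) h
    · exact Or.inr (Or.inr ⟨h1.symm, h2⟩)
  · exact Or.inr (Or.inl h1)

lemma lexlt_asymm {a b : Pt} (h : lexlt a b) (h' : lexlt b a) : False := by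
  rcases h with h1 | ⟨h1, h2⟩ <;> rcases h' with h1' | ⟨h1', h2'⟩ <;> linarith

def Edg (P : Finset Pt) (ℓ : Set Pt) : Finset (Pt × Pt) :=
  ((P.filter (fun p => p ∈ ℓ)) ×ˢ (P.filter (fun p => p ∈ ℓ))).filter
    (fun ab => lexlt ab.1 ab.2 ∧ ∀ r ∈ P.filter (fun p => p ∈ ℓ), r ∉ openSegment ℝ ab.1 ab.2)

lemma edg_mem {P : Finset Pt} {ℓ : Set Pt} {e : Pt × Pt} (he : e ∈ Edg P ℓ) :
    e.1 ∈ P ∧ e.2 ∈ P ∧ e.1 ∈ ℓ ∧ e.2 ∈ ℓ ∧ lexlt e.1 e.2 ∧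
      ∀ r ∈ P, r ∈ ℓ → r ∉ openSegment ℝ e.1 e.2 := by
  obtain ⟨hp, h1, h2⟩ := Finset.mem_filter.1 he
  obtain ⟨ha, hb⟩ := Finset.mem_product.1 hp
  obtain ⟨ha1, ha2⟩ := Finset.mem_filter.1 ha
  obtain ⟨hb1, hb2⟩ := Finset.mem_filter.1 hb
  exact ⟨ha1, hb1, ha2, hb2, h1, fun r hr hrl => h2 r (Finset.mem_filter.2 ⟨hr, hrl⟩)⟩

/-- `between` for reals, symmetric in the endpoints -/
def btw (a b t : ℝ) : Prop := (a < t ∧ t < b) ∨ (b < t ∧ t < a)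

lemma interval_lemma {a1 b1 a2 b2 z : ℝ} (h1 : btw a1 b1 z) (h2 : btw a2 b2 z)
    (n1 : ¬ btw a1 b1 a2) (n2 : ¬ btw a1 b1 b2) (n3 : ¬ btw a2 b2 a1)
    (n4 : ¬ btw a2 b2 b1) : (a1 = a2 ∧ b1 = b2) ∨ (a1 = b2 ∧ b1 = a2) := by
  unfold btw at *
  push_neg at n1 n2 n3 n4
  rcases h1 with ⟨p1, p2⟩ | ⟨p1, p2⟩ <;> rcases h2 with ⟨q1, q2⟩ | ⟨q1, q2⟩
  · left
    constructor
    · rcases lt_trichotomy a1 a2 with h | h | h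
      · exfalso; have := n1.1 h; linarith
      · exact h
      · exfalso; have := n3.1 h; linarith
    · rcases lt_trichotomy b1 b2 with h | h | h
      · exfalso; have := n4.1 (by linarith); linarith
      · exact h
      · exfalso; have := n2.1 (by linarith); linarith
  · right
    constructor
    · rcases lt_trichotomy a1 b2 with h | h | h
      · exfalso; have := n2.1 h; linarith
      · exact h
      · exfalso; have := n3.2 h; linarith
    · rcases lt_trichotomy b1 a2 with h | h | h
      · exfalso; have := n4.2 (by linarith); linarith
      · exact h
      · exfalso; have := n1.1 (by linarith); linarith
  · right
    constructor
    · rcases lt_trichotomy a1 b2 with h | h | h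
      · exfalso; have := n3.1 (by linarith); linarith
      · exact h
      · exfalso; have := n2.2 (by linarith); linarith
    · rcases lt_trichotomy b1 a2 with h | h | h
      · exfalso; have := n1.2 h; linarith
      · exact h
      · exfalso; have := n4.1 h; linarith
  · left
    constructor
    · rcases lt_trichotomy a1 a2 with h | h | h
      · exfalso; have := n3.2 (by linarith); linarith
      · exact h
      · exfalso; have := n1.2 (by linarith); linarith
    · rcases lt_trichotomy b1 b2 with h | h | h
      · exfalso; have := n2.2 h; linarith
      · exact h
      · exfalso; have := n4.2 h; linarith

lemma mem_open_iff_btw {x v a b z : Pt} (hv : v ≠ 0) (ha : a ∈ lineSet x v)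
    (hb : b ∈ lineSet x v) (hab : a ≠ b) (hz : z ∈ lineSet x v) :
    z ∈ openSegment ℝ a b ↔ btw (tau x v a) (tau x v b) (tau x v z) := by
  rw [openSegment_param hv ha hb hab]
  unfold btw
  tauto

/-- distinct edges on the same line have disjoint open segments -/
lemma edg_disjoint {P : Finset Pt} {ℓ : Set Pt} {x v : Pt} (hv : v ≠ 0)
    (hℓ : ℓ = lineSet x v) {e f : Pt × Pt} (he : e ∈ Edg P ℓ) (hf : f ∈ Edg P ℓ)
    (hef : e ≠ f) : ¬ cross e f := by
  rintro ⟨z, hz1, hz2⟩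
  obtain ⟨he1P, he2P, he1l, he2l, helex, heno⟩ := edg_mem he
  obtain ⟨hf1P, hf2P, hf1l, hf2l, hflex, hfno⟩ := edg_mem hf
  rw [hℓ] at he1l he2l hf1l hf2l
  have hene : e.1 ≠ e.2 := lexlt_ne helex
  have hfne : f.1 ≠ f.2 := lexlt_ne hflex
  have hzl : z ∈ lineSet x v := openSegment_subset_line hv he1l he2l hz1
  have h1 : btw (tau x v e.1) (tau x v e.2) (tau x v z) :=
    (mem_open_iff_btw hv he1l he2l hene hzl).1 hz1
  have h2 : btw (tau x v f.1) (tau x v f.2) (tau x v z) :=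
    (mem_open_iff_btw hv hf1l hf2l hfne hzl).1 hz2
  have n1 : ¬ btw (tau x v e.1) (tau x v e.2) (tau x v f.1) := by
    intro h
    exact heno f.1 hf1P (by rw [hℓ]; exact hf1l)
      ((mem_open_iff_btw hv he1l he2l hene hf1l).2 h)
  have n2 : ¬ btw (tau x v e.1) (tau x v e.2) (tau x v f.2) := by
    intro h
    exact heno f.2 hf2P (by rw [hℓ]; exact hf2l)
      ((mem_open_iff_btw hv he1l he2l hene hf2l).2 h)
  have n3 : ¬ btw (tau x v f.1) (tau x v f.2) (tau x v e.1) := by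
    intro h
    exact hfno e.1 he1P (by rw [hℓ]; exact he1l)
      ((mem_open_iff_btw hv hf1l hf2l hfne he1l).2 h)
  have n4 : ¬ btw (tau x v f.1) (tau x v f.2) (tau x v e.2) := by
    intro h
    exact hfno e.2 he2P (by rw [hℓ]; exact he2l)
      ((mem_open_iff_btw hv hf1l hf2l hfne he2l).2 h)
  rcases interval_lemma h1 h2 n1 n2 n3 n4 with ⟨q1, q2⟩ | ⟨q1, q2⟩
  · exact hef (Prod.ext (param_inj hv he1l hf1l q1) (param_inj hv he2l hf2l q2))
  · have hq1 : e.1 = f.2 := param_inj hv he1l hf2l q1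
    have hq2 : e.2 = f.1 := param_inj hv he2l hf1l q2
    rw [hq1, hq2] at helex
    exact lexlt_asymm helex hflex

lemma btw_symm {a b t : ℝ} (h : btw a b t) : btw b a t := by
  unfold btw at *; tauto

lemma edg_card {P : Finset Pt} {ℓ : Set Pt} {x v : Pt} (hv : v ≠ 0)
    (hℓ : ℓ = lineSet x v) :
    (P.filter (fun p => p ∈ ℓ)).card ≤ (Edg P ℓ).card + 1 := by
  set Q := P.filter (fun p => p ∈ ℓ) with hQdef
  have hQline : ∀ q ∈ Q, q ∈ lineSet x v := by
    intro q hq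
    have := (Finset.mem_filter.1 hq).2
    rwa [hℓ] at this
  rcases Q.eq_empty_or_nonempty with hQ | hQ
  · rw [hQ]; simp
  obtain ⟨mx, hmx, hmax⟩ := Finset.exists_max_image Q (fun p => tau x v p) hQ
  set T : Pt → Finset Pt := fun r => Q.filter (fun q => tau x v r < tau x v q) with hT
  have hsuc : ∀ r, (T r).Nonempty → ∃ s ∈ T r, ∀ q ∈ T r, tau x v s ≤ tau x v q :=
    fun r h => Finset.exists_min_image (T r) (fun q => tau x v q) h
  set F : Pt → Pt × Pt := fun r => if h : (T r).Nonempty then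
      (if lexlt r (hsuc r h).choose then (r, (hsuc r h).choose)
        else ((hsuc r h).choose, r)) else (r, r) with hF
  have hkey : ∀ r ∈ Q.erase mx, ∃ s, (F r = (r, s) ∨ F r = (s, r)) ∧
      tau x v r < tau x v s ∧ F r ∈ Edg P ℓ := by
    intro r hr
    obtain ⟨hrne, hrQ⟩ := Finset.mem_erase.1 hr
    have hrmx : tau x v r < tau x v mx := by
      rcases eq_or_lt_of_le (hmax r hrQ) with h | h
      · exact absurd (param_inj hv (hQline r hrQ) (hQline mx hmx) h) hrne
      · exact h
    have hne : (T r).Nonempty := ⟨mx, Finset.mem_filter.2 ⟨hmx, hrmx⟩⟩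
    set s := (hsuc r hne).choose with hs
    obtain ⟨hsT, hsmin⟩ := (hsuc r hne).choose_spec
    obtain ⟨hsQ, hrs⟩ := Finset.mem_filter.1 hsT
    have hsQ' : s ∈ Q := hsQ
    have hrs' : tau x v r < tau x v s := hrs
    have hsmin' : ∀ q ∈ T r, tau x v s ≤ tau x v q := hsmin
    have hrsne : r ≠ s := by
      intro h
      rw [← h] at hrs'
      exact absurd hrs' (lt_irrefl _)
    have hnob : ∀ z ∈ Q, z ∉ openSegment ℝ r s := by
      intro z hz hzo
      have hzb := (mem_open_iff_btw hv (hQline r hrQ) (hQline s hsQ') hrsne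
        (hQline z hz)).1 hzo
      rcases hzb with ⟨h1, h2⟩ | ⟨h1, h2⟩
      · exact absurd (hsmin' z (Finset.mem_filter.2 ⟨hz, h1⟩)) (not_le.2 h2)
      · linarith
    have hmem : ∀ (ab : Pt × Pt), ab = (r, s) ∨ ab = (s, r) → lexlt ab.1 ab.2 →
        ab ∈ Edg P ℓ := by
      intro ab hab hlex
      apply Finset.mem_filter.2
      refine ⟨Finset.mem_product.2 ?_, hlex, ?_⟩
      · rcases hab with rfl | rfl
        · exact ⟨hrQ, hsQ'⟩
        · exact ⟨hsQ', hrQ⟩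
      · intro z hz
        rcases hab with rfl | rfl
        · exact hnob z hz
        · rw [openSegment_symm]
          exact hnob z hz
    refine ⟨s, ?_⟩
    rw [hF]
    simp only [dif_pos hne]
    by_cases hlex : lexlt r s
    · rw [if_pos hlex]
      exact ⟨Or.inl rfl, hrs', hmem (r, s) (Or.inl rfl) hlex⟩
    · rw [if_neg hlex]
      rcases lexlt_total hrsne with h | h
      · exact absurd h hlex
      · exact ⟨Or.inr rfl, hrs', hmem (s, r) (Or.inr rfl) h⟩
  have hinj : Set.InjOn F ↑(Q.erase mx) := by
    intro r hr r' hr' heq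
    obtain ⟨s, hors, hts, -⟩ := hkey r hr
    obtain ⟨s', hors', hts', -⟩ := hkey r' hr'
    rcases hors with h1 | h1 <;> rcases hors' with h2 | h2 <;> rw [h1, h2] at heq
    · exact congrArg Prod.fst heq
    · have e1 : r = s' := congrArg Prod.fst heq
      have e2 : s = r' := congrArg Prod.snd heq
      rw [e1] at hts; rw [← e2] at hts'
      linarith
    · have e1 : s = r' := congrArg Prod.fst heq
      have e2 : r = s' := congrArg Prod.snd heq
      rw [e2] at hts; rw [← e1] at hts'
      linarith
    · have e1 : s = s' := congrArg Prod.fst heq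
      have e2 : r = r' := congrArg Prod.snd heq
      exact e2
  have hcard : (Q.erase mx).card ≤ (Edg P ℓ).card :=
    Finset.card_le_card_of_injOn F (fun r hr => (hkey r hr).choose_spec.2.2) hinj
  have := Finset.card_erase_of_mem hmx
  have hQpos : 1 ≤ Q.card := Finset.card_pos.2 hQ
  omega

end Cfg
end
end ST

open ST ST.Cfg Finset in
/-- **Szemerédi–Trotter theorem** (Theorem 6.8). -/
theorem szemeredi_trotter : ∃ C : ℝ, 0 < C ∧
    ∀ (P : Finset (ℝ × ℝ)) (L : Finset (Set (ℝ × ℝ))),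
      (∀ ℓ ∈ L, ∃ (x v : ℝ × ℝ), v ≠ 0 ∧ ℓ = {y | ∃ t : ℝ, y = x + t • v}) →
      ({pl : (ℝ × ℝ) × Set (ℝ × ℝ) | pl.1 ∈ P ∧ pl.2 ∈ L ∧ pl.1 ∈ pl.2}.ncard : ℝ) ≤
        C * ((P.card : ℝ) ^ ((2 : ℝ) / 3) * (L.card : ℝ) ^ ((2 : ℝ) / 3)
          + (P.card : ℝ) + (L.card : ℝ)) := by
  classical
  refine ⟨6, by norm_num, ?_⟩
  intro P L hL
  choose! xf vf hvf hlf using hL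
  have hlf' : ∀ ℓ ∈ L, ℓ = lineSet (xf ℓ) (vf ℓ) := hlf
  -- the incidence finset
  set Iset := (P ×ˢ L).filter (fun pl => pl.1 ∈ pl.2) with hIset
  have hseteq : {pl : (ℝ × ℝ) × Set (ℝ × ℝ) | pl.1 ∈ P ∧ pl.2 ∈ L ∧ pl.1 ∈ pl.2} = ↑Iset := by
    ext pl
    simp only [Set.mem_setOf_eq, hIset, coe_filter, mem_product, Set.mem_setOf_eq, mem_coe]
    tauto
  rw [hseteq, Set.ncard_coe_finset]
  -- incidences = sum over lines
  have hIcount : Iset.card = ∑ ℓ ∈ L, (P.filter (fun p => p ∈ ℓ)).card := by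
    rw [hIset]
    rw [Finset.card_eq_sum_card_fiberwise
      (f := fun pl : (ℝ × ℝ) × Set (ℝ × ℝ) => pl.2) (t := L)
      (fun pl hpl => (mem_product.1 (mem_filter.1 hpl).1).2)]
    apply Finset.sum_congr rfl
    intro ℓ hℓ
    apply Finset.card_bij (fun pl _ => pl.1)
    · intro pl hpl
      obtain ⟨h1, h2⟩ := mem_filter.1 hpl
      obtain ⟨h3, h4⟩ := mem_filter.1 h1
      exact mem_filter.2 ⟨(mem_product.1 h3).1, by rw [← h2]; exact h4⟩
    · intro pl hpl pl' hpl' heq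
      have h2 := (mem_filter.1 hpl).2
      have h2' := (mem_filter.1 hpl').2
      exact Prod.ext heq (h2.trans h2'.symm)
    · intro p hp
      obtain ⟨h1, h2⟩ := mem_filter.1 hp
      exact ⟨(p, ℓ), mem_filter.2 ⟨mem_filter.2 ⟨mem_product.2 ⟨h1, hℓ⟩, h2⟩, rfl⟩, rfl⟩
  -- the graph
  set E := L.biUnion (fun ℓ => Edg P ℓ) with hE
  have hmemE : ∀ e ∈ E, ∃ ℓ ∈ L, e ∈ Edg P ℓ := fun e he => Finset.mem_biUnion.1 he
  have huniq : ∀ ℓ ∈ L, ∀ ℓ' ∈ L, ∀ e : (ℝ × ℝ) × (ℝ × ℝ),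
      e ∈ Edg P ℓ → e ∈ Edg P ℓ' → ℓ = ℓ' := by
    intro ℓ hℓ ℓ' hℓ' e he he'
    by_contra hne
    obtain ⟨-, -, h1, h2, hlex, -⟩ := edg_mem he
    obtain ⟨-, -, h1', h2', -, -⟩ := edg_mem he'
    have hll : lineSet (xf ℓ) (vf ℓ) ≠ lineSet (xf ℓ') (vf ℓ') := by
      rw [← hlf' ℓ hℓ, ← hlf' ℓ' hℓ']; exact hne
    have heq := line_inter (hvf ℓ hℓ) (hvf ℓ' hℓ') hll
      (z := e.1) (w := e.2)
      ⟨by rw [← hlf' ℓ hℓ]; exact h1, by rw [← hlf' ℓ' hℓ']; exact h1'⟩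
      ⟨by rw [← hlf' ℓ hℓ]; exact h2, by rw [← hlf' ℓ' hℓ']; exact h2'⟩
    exact lexlt_ne hlex heq
  -- graph hypotheses
  have hVE : ∀ e ∈ E, e.1 ∈ P ∧ e.2 ∈ P := by
    intro e he
    obtain ⟨ℓ, hℓ, hel⟩ := hmemE e he
    obtain ⟨a, b, -⟩ := edg_mem hel
    exact ⟨a, b⟩
  have hneE : ∀ e ∈ E, e.1 ≠ e.2 := by
    intro e he
    obtain ⟨ℓ, hℓ, hel⟩ := hmemE e he
    exact lexlt_ne (edg_mem hel).2.2.2.2.1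
  have hptE : ∀ e ∈ E, ∀ p ∈ P, p ∉ openSegment ℝ e.1 e.2 := by
    intro e he p hp hpo
    obtain ⟨ℓ, hℓ, hel⟩ := hmemE e he
    obtain ⟨-, -, h1, h2, -, hno⟩ := edg_mem hel
    have hpl : p ∈ lineSet (xf ℓ) (vf ℓ) := by
      apply openSegment_subset_line (hvf ℓ hℓ) _ _ hpo
      · rw [← hlf' ℓ hℓ]; exact h1
      · rw [← hlf' ℓ hℓ]; exact h2
    exact hno p hp (by rw [hlf' ℓ hℓ]; exact hpl) hpo
  have hlinemem : ∀ ℓ ∈ L, ∀ e : (ℝ × ℝ) × (ℝ × ℝ), e ∈ Edg P ℓ →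
      e.1 ∈ lineSet (xf ℓ) (vf ℓ) ∧ e.2 ∈ lineSet (xf ℓ) (vf ℓ) := by
    intro ℓ hℓ e he
    obtain ⟨-, -, h1, h2, -, -⟩ := edg_mem he
    constructor
    · rw [← hlf' ℓ hℓ]; exact h1
    · rw [← hlf' ℓ hℓ]; exact h2
  have hopensub : ∀ ℓ ∈ L, ∀ e : (ℝ × ℝ) × (ℝ × ℝ), e ∈ Edg P ℓ →
      openSegment ℝ e.1 e.2 ⊆ lineSet (xf ℓ) (vf ℓ) := by
    intro ℓ hℓ e he
    exact openSegment_subset_line (hvf ℓ hℓ) (hlinemem ℓ hℓ e he).1 (hlinemem ℓ hℓ e he).2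
  have hshareE : ∀ e ∈ E, ∀ f ∈ E, e ≠ f →
      (e.1 = f.1 ∨ e.1 = f.2 ∨ e.2 = f.1 ∨ e.2 = f.2) → ¬ cross e f := by
    intro e he f hf hef hsh
    obtain ⟨ℓ, hℓ, hel⟩ := hmemE e he
    obtain ⟨ℓ', hℓ', hfl⟩ := hmemE f hf
    rcases eq_or_ne ℓ ℓ' with rfl | hll
    · exact edg_disjoint (hvf ℓ hℓ) (hlf' ℓ hℓ) hel hfl hef
    · rintro ⟨z, hz1, hz2⟩
      have hlls : lineSet (xf ℓ) (vf ℓ) ≠ lineSet (xf ℓ') (vf ℓ') := by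
        rw [← hlf' ℓ hℓ, ← hlf' ℓ' hℓ']; exact hll
      have hz1l : z ∈ lineSet (xf ℓ) (vf ℓ) := hopensub ℓ hℓ e hel hz1
      have hz2l : z ∈ lineSet (xf ℓ') (vf ℓ') := hopensub ℓ' hℓ' f hfl hz2
      have hu : ∃ u : ℝ × ℝ, (u = e.1 ∨ u = e.2) ∧
          u ∈ lineSet (xf ℓ) (vf ℓ) ∧ u ∈ lineSet (xf ℓ') (vf ℓ') := by
        rcases hsh with h | h | h | h
        · exact ⟨e.1, Or.inl rfl, (hlinemem ℓ hℓ e hel).1,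
            by rw [h]; exact (hlinemem ℓ' hℓ' f hfl).1⟩
        · exact ⟨e.1, Or.inl rfl, (hlinemem ℓ hℓ e hel).1,
            by rw [h]; exact (hlinemem ℓ' hℓ' f hfl).2⟩
        · exact ⟨e.2, Or.inr rfl, (hlinemem ℓ hℓ e hel).2,
            by rw [h]; exact (hlinemem ℓ' hℓ' f hfl).1⟩
        · exact ⟨e.2, Or.inr rfl, (hlinemem ℓ hℓ e hel).2,
            by rw [h]; exact (hlinemem ℓ' hℓ' f hfl).2⟩
      obtain ⟨u, huo, hul, hul'⟩ := hu
      have hzu : z = u := line_inter (hvf ℓ hℓ) (hvf ℓ' hℓ') hlls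
        ⟨hz1l, hz2l⟩ ⟨hul, hul'⟩
      have hene := hneE e he
      rcases huo with rfl | rfl
      · rw [hzu] at hz1
        exact hene (left_mem_openSegment_iff.1 hz1)
      · rw [hzu] at hz1
        exact hene (right_mem_openSegment_iff.1 hz1)
  -- X2 bound
  have hX2 : X2 E ≤ L.card * L.card := by
    set lineOf : (ℝ × ℝ) × (ℝ × ℝ) → Set (ℝ × ℝ) := fun e =>
      if h : ∃ ℓ ∈ L, e ∈ Edg P ℓ then h.choose else ∅ with hlo
    have hlospec : ∀ e ∈ E, lineOf e ∈ L ∧ e ∈ Edg P (lineOf e) := by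
      intro e he
      have h : ∃ ℓ ∈ L, e ∈ Edg P ℓ := hmemE e he
      rw [hlo]
      simp only [dif_pos h]
      exact ⟨h.choose_spec.1, h.choose_spec.2⟩
    have hXle : ((E ×ˢ E).filter (fun pr => pr.1 ≠ pr.2 ∧ cross pr.1 pr.2)).card
        ≤ (L ×ˢ L).card := by
      apply Finset.card_le_card_of_injOn (fun pr => (lineOf pr.1, lineOf pr.2))
      · intro pr hpr
        obtain ⟨hp, -⟩ := mem_filter.1 hpr
        obtain ⟨hp1, hp2⟩ := mem_product.1 hp
        exact mem_coe.2 (mem_product.2 ⟨(hlospec pr.1 hp1).1, (hlospec pr.2 hp2).1⟩)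
      · intro pr hpr pr' hpr' heq
        simp only [mem_coe, mem_filter] at hpr hpr'
        obtain ⟨hp, hne', hcr'⟩ := hpr
        obtain ⟨hp', hne'', hcr''⟩ := hpr'
        obtain ⟨hp1, hp2⟩ := mem_product.1 hp
        obtain ⟨hp1', hp2'⟩ := mem_product.1 hp'
        have e1 : lineOf pr.1 = lineOf pr'.1 := congrArg Prod.fst heq
        have e2 : lineOf pr.2 = lineOf pr'.2 := congrArg Prod.snd heq
        obtain ⟨hl1L, hm1⟩ := hlospec pr.1 hp1
        obtain ⟨hl2L, hm2⟩ := hlospec pr.2 hp2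
        obtain ⟨hl1L', hm1'⟩ := hlospec pr'.1 hp1'
        obtain ⟨hl2L', hm2'⟩ := hlospec pr'.2 hp2'
        rw [← e1] at hm1' hl1L'
        rw [← e2] at hm2' hl2L'
        -- the two lines are distinct
        have hlld : lineOf pr.1 ≠ lineOf pr.2 := by
          intro hsame
          rw [← hsame] at hm2
          exact edg_disjoint (hvf _ hl1L) (hlf' _ hl1L) hm1 hm2 hne' hcr'
        have hlls : lineSet (xf (lineOf pr.1)) (vf (lineOf pr.1))
            ≠ lineSet (xf (lineOf pr.2)) (vf (lineOf pr.2)) := by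
          rw [← hlf' _ hl1L, ← hlf' _ hl2L]; exact hlld
        obtain ⟨z, hza, hzb⟩ := hcr'
        obtain ⟨z', hza', hzb'⟩ := hcr''
        have hzz : z = z' := line_inter (hvf _ hl1L) (hvf _ hl2L) hlls
          ⟨hopensub _ hl1L pr.1 hm1 hza, hopensub _ hl2L pr.2 hm2 hzb⟩
          ⟨hopensub _ hl1L pr'.1 hm1' hza', hopensub _ hl2L pr'.2 hm2' hzb'⟩
        have hfst : pr.1 = pr'.1 := by
          by_contra hne3
          exact edg_disjoint (hvf _ hl1L) (hlf' _ hl1L) hm1 hm1' hne3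
            ⟨z, hza, hzz ▸ hza'⟩
        have hsnd : pr.2 = pr'.2 := by
          by_contra hne3
          exact edg_disjoint (hvf _ hl2L) (hlf' _ hl2L) hm2 hm2' hne3
            ⟨z, hzb, hzz ▸ hzb'⟩
        exact Prod.ext hfst hsnd
    calc X2 E ≤ (L ×ˢ L).card := hXle
      _ = L.card * L.card := card_product L L
  -- edge count
  have hEcount : ∑ ℓ ∈ L, (P.filter (fun p => p ∈ ℓ)).card ≤ E.card + L.card := by
    have hdisj : ∀ ℓ ∈ L, ∀ ℓ' ∈ L, ℓ ≠ ℓ' → Disjoint (Edg P ℓ) (Edg P ℓ') := by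
      intro ℓ hℓ ℓ' hℓ' hne'
      rw [Finset.disjoint_left]
      intro e he he'
      exact hne' (huniq ℓ hℓ ℓ' hℓ' e he he')
    rw [hE, Finset.card_biUnion hdisj]
    calc ∑ ℓ ∈ L, (P.filter (fun p => p ∈ ℓ)).card
        ≤ ∑ ℓ ∈ L, ((Edg P ℓ).card + 1) :=
          Finset.sum_le_sum (fun ℓ hℓ => edg_card (hvf ℓ hℓ) (hlf' ℓ hℓ))
      _ = (∑ ℓ ∈ L, (Edg P ℓ).card) + L.card := by
          rw [Finset.sum_add_distrib, Finset.sum_const, smul_eq_mul, mul_one]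
  -- apply the crossing inequality
  have hcube := cube_bound P E hVE hneE hptE hshareE
  -- final algebra
  set n : ℝ := (P.card : ℝ) with hn
  set m : ℝ := (L.card : ℝ) with hm
  set ec : ℝ := (E.card : ℝ) with hec
  have hn0 : 0 ≤ n := Nat.cast_nonneg _
  have hm0 : 0 ≤ m := Nat.cast_nonneg _
  have hec0 : 0 ≤ ec := Nat.cast_nonneg _
  have hXm : (X2 E : ℝ) ≤ m * m := by
    rw [hm]
    exact_mod_cast hX2
  have hcube' : ec ^ 3 ≤ 125 * n^2 * (m * m) + (5*n)^3 := by
    have h125 : (0:ℝ) ≤ 125 * n^2 := by positivity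
    nlinarith [hcube, mul_le_mul_of_nonneg_left hXm h125]
  set a : ℝ := 5 * (n ^ ((2:ℝ)/3) * m ^ ((2:ℝ)/3)) with ha
  set b : ℝ := 5 * n with hb
  have hr0 : 0 ≤ n ^ ((2:ℝ)/3) := Real.rpow_nonneg hn0 _
  have hr0' : 0 ≤ m ^ ((2:ℝ)/3) := Real.rpow_nonneg hm0 _
  have ha0 : 0 ≤ a := by
    rw [ha]
    exact mul_nonneg (by norm_num) (mul_nonneg hr0 hr0')
  have hb0 : 0 ≤ b := by
    rw [hb]
    exact mul_nonneg (by norm_num) hn0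
  have hcubea : (n ^ ((2:ℝ)/3))^3 = n^2 := by
    rw [← Real.rpow_natCast (n ^ ((2:ℝ)/3)) 3, ← Real.rpow_mul hn0]
    norm_num
  have hcubeb : (m ^ ((2:ℝ)/3))^3 = m^2 := by
    rw [← Real.rpow_natCast (m ^ ((2:ℝ)/3)) 3, ← Real.rpow_mul hm0]
    norm_num
  have ha3 : a^3 = 125 * n^2 * (m * m) := by
    rw [ha]
    have : (5 * (n ^ ((2:ℝ)/3) * m ^ ((2:ℝ)/3)))^3
        = 125 * ((n ^ ((2:ℝ)/3))^3 * (m ^ ((2:ℝ)/3))^3) := by ring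
    rw [this, hcubea, hcubeb]
    ring
  have hb3 : b^3 = (5*n)^3 := by rw [hb]
  have hab : ec ≤ a + b := by
    apply le_of_pow_le_pow_left₀ (n := 3) (by norm_num) (by linarith)
    have hcube3 : a^3 + b^3 ≤ (a+b)^3 := by nlinarith [mul_nonneg ha0 hb0, mul_nonneg (mul_nonneg ha0 ha0) hb0, mul_nonneg (mul_nonneg ha0 hb0) hb0]
    calc ec^3 ≤ 125 * n^2 * (m*m) + (5*n)^3 := hcube'
      _ = a^3 + b^3 := by rw [ha3, hb3]
      _ ≤ (a+b)^3 := hcube3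
  -- chain of inequalities
  have hIE : (Iset.card : ℝ) ≤ ec + m := by
    have h1 : Iset.card ≤ E.card + L.card := by
      rw [hIcount]
      exact hEcount
    rw [hec, hm]
    exact_mod_cast h1
  calc (Iset.card : ℝ) ≤ ec + m := hIE
    _ ≤ (a + b) + m := by linarith
    _ ≤ 6 * (n ^ ((2:ℝ)/3) * m ^ ((2:ℝ)/3) + n + m) := by
        rw [ha, hb]
        have : 0 ≤ n ^ ((2:ℝ)/3) * m ^ ((2:ℝ)/3) := mul_nonneg hr0 hr0'
        linarith
end
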